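/- arXiv:1207.2393 — 5 statements merged into one kernel-verified Lean document; each statement's English description precedes it below -/
import Mathlib

section
/- Let G be a finite connected simple graph containing an adjacent pair of vertices u, v such that N_G(u)∖{v} = N_G(v)∖{u} ≠ ∅. For integers t, s ≥ 1, let G_{t,s} be the graph obtained from G by attaching a path P_t at u and a path P_s at v. If t ≥ s + 2 ≥ 3, then H(G_{t,s}) < H(G_{t−1,s+1}). -/
open SimpleGraph

/-- The Harary index of a finite simple graph. -/
noncomputable def hararyIndex {V : Type*} [Fintype V] (G : SimpleGraph V) : ℝ :=
  (∑ u : V, ∑ v : V, (1 : ℝ) / (G.dist u v)) / 2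

/-- The graph obtained from `G` by attaching a pendant path with `m` new vertices at
the vertex `u` (i.e. attaching the path `P_{m+1}` at `u`, with `u` as an endpoint).
The new vertex `Sum.inr i` is at distance `i + 1` from `u` along the path. -/
def attachPath {V : Type*} (G : SimpleGraph V) (u : V) (m : ℕ) :
    SimpleGraph (V ⊕ Fin m) :=
  G.map Function.Embedding.inl ⊔
    SimpleGraph.fromRel (fun x y =>
      (∃ i : Fin m, x = Sum.inl u ∧ y = Sum.inr i ∧ (i : ℕ) = 0) ∨
      (∃ i j : Fin m, x = Sum.inr i ∧ y = Sum.inr j ∧ (i : ℕ) + 1 = (j : ℕ)))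

section Aux
open Sum


variable {V : Type*} {G : SimpleGraph V} {u : V} {m : ℕ}

lemma ap_adj_inl_inl {x y : V} :
    (attachPath G u m).Adj (Sum.inl x) (Sum.inl y) ↔ G.Adj x y := by
  simp [attachPath]

lemma ap_adj_inl_inr {x : V} {i : Fin m} :
    (attachPath G u m).Adj (Sum.inl x) (Sum.inr i) ↔ x = u ∧ (i : ℕ) = 0 := by
  simp [attachPath]

lemma ap_adj_inr_inr {i j : Fin m} :
    (attachPath G u m).Adj (Sum.inr i) (Sum.inr j) ↔
      ((i : ℕ) + 1 = (j : ℕ) ∨ (j : ℕ) + 1 = (i : ℕ)) := by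
  simp [attachPath, Fin.ext_iff]
  constructor
  · rintro ⟨hne, (⟨a, ha, b, hb, hab⟩ | ⟨a, ha, b, hb, hab⟩)⟩ <;> omega
  · intro h
    refine ⟨by omega, ?_⟩
    rcases h with h | h
    exacts [Or.inl ⟨i, rfl, j, rfl, h⟩, Or.inr ⟨j, rfl, i, rfl, h⟩]

/-- The canonical homomorphism `G →g attachPath G u m`. -/
def apHom (G : SimpleGraph V) (u : V) (m : ℕ) : G →g attachPath G u m :=
  ⟨Sum.inl, fun h => ap_adj_inl_inl.2 h⟩

@[simp] lemma apHom_apply (x : V) : apHom G u m x = Sum.inl x := rfl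

lemma ap_walk_to_inr : ∀ (k : ℕ) (h : k < m),
    ∃ w : (attachPath G u m).Walk (inl u) (inr ⟨k, h⟩), w.length = k + 1 := by
  intro k
  induction k with
  | zero =>
    intro h
    exact ⟨Walk.cons (ap_adj_inl_inr.2 ⟨rfl, rfl⟩) Walk.nil, by simp⟩
  | succ k ih =>
    intro h
    obtain ⟨w, hw⟩ := ih (Nat.lt_of_succ_lt h)
    refine ⟨w.concat (ap_adj_inr_inr.2 (Or.inl rfl)), ?_⟩
    rw [Walk.length_concat, hw]

lemma ap_walk_inr_inr : ∀ (d k : ℕ) (h : k + d < m),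
    ∃ w : (attachPath G u m).Walk (inr ⟨k, by omega⟩) (inr ⟨k + d, h⟩), w.length = d := by
  intro d
  induction d with
  | zero => intro k h; exact ⟨Walk.nil, rfl⟩
  | succ d ih =>
    intro k h
    obtain ⟨w, hw⟩ := ih k (by omega)
    refine ⟨w.concat (ap_adj_inr_inr.2 (Or.inl rfl)), ?_⟩
    rw [Walk.length_concat, hw]

lemma walk_le_cert {α : Type*} {H : SimpleGraph α} (D : α → ℕ)
    (hstep : ∀ ⦃a b⦄, H.Adj a b → D b ≤ D a + 1) :
    ∀ {a y : α} (w : H.Walk a y), D y ≤ D a + w.length := by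
  intro a y w
  induction w with
  | nil => simp
  | @cons a b y h p ih =>
    have := hstep h
    simp only [Walk.length_cons]
    omega

lemma walk_of_eq {α : Type*} {H : SimpleGraph α} {a b a' b' : α}
    (ha : a = a') (hb : b = b') (w : H.Walk a b) :
    ∃ w' : H.Walk a' b', w'.length = w.length := by
  subst ha; subst hb; exact ⟨w, rfl⟩

section Dist
variable (hc : G.Connected)

private noncomputable def Dcert (G : SimpleGraph V) (u : V) (m : ℕ) (x : V) : V ⊕ Fin m → ℕ :=
  Sum.elim (fun y => G.dist x y) (fun i => G.dist x u + i + 1)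

include hc in
lemma Dcert_step (x : V) :
    ∀ ⦃a b⦄, (attachPath G u m).Adj a b → Dcert G u m x b ≤ Dcert G u m x a + 1 := by
  rintro (a | i) (b | j) hab
  · rw [ap_adj_inl_inl] at hab
    have h1 : G.dist x b ≤ G.dist x a + G.dist a b := hc.dist_triangle
    have h2 : G.dist a b = 1 := dist_eq_one_iff_adj.2 hab
    simp [Dcert]; omega
  · obtain ⟨rfl, hj⟩ := ap_adj_inl_inr.1 hab
    simp [Dcert, hj]
  · obtain ⟨rfl, hi⟩ := ap_adj_inl_inr.1 hab.symm
    simp [Dcert]; omega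
  · rcases ap_adj_inr_inr.1 hab with h | h <;> · simp [Dcert]; omega

include hc in
lemma ap_reachable_inl_inl (x y : V) :
    (attachPath G u m).Reachable (inl x) (inl y) :=
  (hc x y).map (apHom G u m)

include hc in
lemma ap_dist_inl_inl (x y : V) :
    (attachPath G u m).dist (inl x) (inl y) = G.dist x y := by
  apply le_antisymm
  · obtain ⟨p, hp⟩ := hc.exists_walk_length_eq_dist x y
    calc (attachPath G u m).dist (inl x) (inl y) ≤ (p.map (apHom G u m)).length :=
          dist_le _
      _ = G.dist x y := by rw [Walk.length_map, hp]
  · obtain ⟨q, hq⟩ := (ap_reachable_inl_inl hc x y).exists_walk_length_eq_dist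
    have := walk_le_cert (Dcert G u m x) (Dcert_step hc x) q
    simpa [Dcert, dist_self, hq] using this

include hc in
lemma ap_dist_inl_inr (x : V) (i : Fin m) :
    (attachPath G u m).dist (inl x) (inr i) = G.dist x u + i + 1 := by
  obtain ⟨p, hp⟩ := hc.exists_walk_length_eq_dist x u
  obtain ⟨w, hw⟩ := ap_walk_to_inr (G := G) (u := u) (m := m) (i : ℕ) i.isLt
  have hfin : (inr (⟨(i : ℕ), i.isLt⟩ : Fin m) : V ⊕ Fin m) = inr i := rfl
  apply le_antisymm
  · calc (attachPath G u m).dist (inl x) (inr i)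
        ≤ ((p.map (apHom G u m)).append (hfin ▸ w)).length := dist_le _
      _ = G.dist x u + i + 1 := by
          rw [Walk.length_append, Walk.length_map, hp]
          have : (hfin ▸ w : (attachPath G u m).Walk (apHom G u m u) (inr i)).length = w.length := by
            cases hfin; rfl
          omega
  · have hr : (attachPath G u m).Reachable (inl x) (inr i) :=
      ⟨(p.map (apHom G u m)).append (hfin ▸ w)⟩
    obtain ⟨q, hq⟩ := hr.exists_walk_length_eq_dist
    have := walk_le_cert (Dcert G u m x) (Dcert_step hc x) q
    simpa [Dcert, SimpleGraph.dist_self, hq] using this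

lemma ap_dist_inr_inr (i j : Fin m) (hij : (i : ℕ) ≤ (j : ℕ)) :
    (attachPath G u m).dist (inr i) (inr j) = j - i := by
  obtain ⟨w, hw⟩ := ap_walk_inr_inr (G := G) (u := u) (m := m) ((j : ℕ) - i) i
    (by have := j.isLt; omega)
  have hfi : (inr (⟨(i : ℕ), by omega⟩ : Fin m) : V ⊕ Fin m) = inr i := rfl
  have hfj : (inr (⟨(i : ℕ) + ((j : ℕ) - i), by have := j.isLt; omega⟩ : Fin m) : V ⊕ Fin m)
      = inr j := by
    congr 1
    exact Fin.ext (by simp; omega)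
  obtain ⟨w', hw'⟩ := walk_of_eq hfi hfj w
  rw [hw] at hw'
  apply le_antisymm
  · calc (attachPath G u m).dist (inr i) (inr j) ≤ w'.length := dist_le _
      _ = (j : ℕ) - i := hw'
  · have hr : (attachPath G u m).Reachable (inr i) (inr j) := ⟨w'⟩
    obtain ⟨q, hq⟩ := hr.exists_walk_length_eq_dist
    have hstep : ∀ ⦃a b⦄, (attachPath G u m).Adj a b →
        (Sum.elim (fun _ : V => 0) (fun k : Fin m => (k : ℕ) + 1)) b ≤
        (Sum.elim (fun _ : V => 0) (fun k : Fin m => (k : ℕ) + 1)) a + 1 := by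
      rintro (a | k) (b | l) hab
      · simp
      · obtain ⟨rfl, hl⟩ := ap_adj_inl_inr.1 hab; simp [hl]
      · simp
      · rcases ap_adj_inr_inr.1 hab with h | h <;> simp <;> omega
    have := walk_le_cert _ hstep q
    simp only [Sum.elim_inr, hq] at this
    omega

include hc in
lemma ap_connected : (attachPath G u m).Connected := by
  have hne : Nonempty V := hc.nonempty
  have key : ∀ p : V ⊕ Fin m, (attachPath G u m).Reachable p (inl u) := by
    rintro (x | i)
    · exact ap_reachable_inl_inl hc x u
    · obtain ⟨w, _⟩ := ap_walk_to_inr (G := G) (u := u) (m := m) (i : ℕ) i.isLt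
      exact (Reachable.symm ⟨w⟩ : (attachPath G u m).Reachable (inr ⟨(i:ℕ), i.isLt⟩) (inl u))
  constructor
  intro p q
  exact (key p).trans (key q).symm


end Dist

section SwapSec
variable {v : V}

lemma iso_dist_eq {W : Type*} {G' : SimpleGraph W} (e : G ≃g G') (x y : V) :
    G'.dist (e x) (e y) = G.dist x y := by
  by_cases hr : G.Reachable x y
  · apply le_antisymm
    · obtain ⟨p, hp⟩ := hr.exists_walk_length_eq_dist
      calc G'.dist (e x) (e y) ≤ (p.map e.toHom).length := dist_le _
        _ = G.dist x y := by rw [Walk.length_map, hp]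
    · have hr' : G'.Reachable (e x) (e y) := hr.map e.toHom
      obtain ⟨q, hq⟩ := hr'.exists_walk_length_eq_dist
      obtain ⟨q', hq'⟩ := _root_.walk_of_eq (e.symm_apply_apply x) (e.symm_apply_apply y)
        (q.map e.symm.toHom)
      calc G.dist x y ≤ q'.length := dist_le _
        _ = G'.dist (e x) (e y) := by rw [hq', Walk.length_map, hq]
  · have hr' : ¬ G'.Reachable (e x) (e y) := by
      intro h
      obtain ⟨q⟩ := h
      obtain ⟨q', _⟩ := _root_.walk_of_eq (e.symm_apply_apply x) (e.symm_apply_apply y)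
        (q.map e.symm.toHom)
      exact hr ⟨q'⟩
    rw [dist_eq_zero_of_not_reachable hr, dist_eq_zero_of_not_reachable hr']

section Swap
variable (huv : G.Adj u v) (hN : G.neighborSet u \ {v} = G.neighborSet v \ {u})

include huv hN in
lemma swap_adj_mp [DecidableEq V] :
    ∀ x y, G.Adj x y → G.Adj (Equiv.swap u v x) (Equiv.swap u v y) := by
  have hN' : ∀ w, w ≠ u → w ≠ v → (G.Adj u w ↔ G.Adj v w) := by
    intro w hwu hwv
    have h := Set.ext_iff.1 hN w
    simpa [SimpleGraph.mem_neighborSet, hwu, hwv] using h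
  intro x y hxy
  by_cases hxu : x = u
  · subst hxu
    by_cases hyv : y = v
    · subst hyv
      rw [Equiv.swap_apply_left, Equiv.swap_apply_right]
      exact hxy.symm
    · have hyu : y ≠ x := fun h => G.irrefl (h ▸ hxy)
      rw [Equiv.swap_apply_left, Equiv.swap_apply_of_ne_of_ne hyu hyv]
      exact (hN' y hyu hyv).1 hxy
  · by_cases hxv : x = v
    · subst hxv
      by_cases hyu : y = u
      · subst hyu
        rw [Equiv.swap_apply_right, Equiv.swap_apply_left]
        exact hxy.symm
      · have hyv : y ≠ x := fun h => G.irrefl (h ▸ hxy)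
        rw [Equiv.swap_apply_right, Equiv.swap_apply_of_ne_of_ne hyu hyv]
        exact (hN' y hyu hyv).2 hxy
    · rw [Equiv.swap_apply_of_ne_of_ne hxu hxv]
      by_cases hyu : y = u
      · subst hyu
        rw [Equiv.swap_apply_left]
        exact ((hN' x hxu hxv).1 hxy.symm).symm
      · by_cases hyv : y = v
        · subst hyv
          rw [Equiv.swap_apply_right]
          exact ((hN' x hxu hxv).2 hxy.symm).symm
        · rwa [Equiv.swap_apply_of_ne_of_ne hyu hyv]

include huv hN in
/-- Swapping `u` and `v` is an automorphism. -/
def swapIso [DecidableEq V] : G ≃g G where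
  toEquiv := Equiv.swap u v
  map_rel_iff' := by
    intro x y
    constructor
    · intro h
      have := swap_adj_mp huv hN _ _ h
      simpa using this
    · exact swap_adj_mp huv hN x y

include huv hN in
lemma dist_swap [DecidableEq V] (x : V) : G.dist v x = G.dist u (Equiv.swap u v x) := by
  have h := iso_dist_eq (swapIso huv hN) u (Equiv.swap u v x)
  have e_apply : ∀ z, (swapIso huv hN) z = Equiv.swap u v z := fun _ => rfl
  rw [e_apply, e_apply, Equiv.swap_apply_left, Equiv.swap_apply_self] at h
  exact h

end Swap
end SwapSec


section Sums
open Finset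

variable {V : Type*} {G : SimpleGraph V} {u : V}

lemma ap_dist_inr_inr' {m : ℕ} (i j : Fin m) :
    (attachPath G u m).dist (inr i) (inr j) = Nat.dist (i : ℕ) (j : ℕ) := by
  rcases le_total (i : ℕ) (j : ℕ) with h | h
  · rw [ap_dist_inr_inr i j h, Nat.dist_eq_sub_of_le h]
  · rw [dist_comm, ap_dist_inr_inr j i h, Nat.dist_eq_sub_of_le_right h]

/-- `∑_x 1/(d(u,x)+k+1)`. -/
noncomputable def apf {V : Type*} [Fintype V] (G : SimpleGraph V) (u : V) (k : ℕ) : ℝ :=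
  ∑ x : V, 1 / ((G.dist u x : ℝ) + k + 1)

noncomputable def apA {V : Type*} [Fintype V] (G : SimpleGraph V) (u : V) (m : ℕ) : ℝ :=
  ∑ i ∈ Finset.range m, apf G u i

noncomputable def apP (n : ℕ) : ℝ :=
  ∑ i ∈ Finset.range n, ∑ j ∈ Finset.range n, 1 / ((Nat.dist i j : ℝ))

noncomputable def apT (m n : ℕ) : ℝ :=
  ∑ j ∈ Finset.range n, ∑ i ∈ Finset.range m, 1 / ((i : ℝ) + j + 3)

noncomputable def apHh (n : ℕ) : ℝ := ∑ k ∈ Finset.range n, 1 / ((k : ℝ) + 1)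

variable [Fintype V]

lemma ap_sum (hc : G.Connected) (m : ℕ) :
    ∑ z : V ⊕ Fin m, ∑ z' : V ⊕ Fin m, (1 : ℝ) / ((attachPath G u m).dist z z')
    = (∑ x : V, ∑ y : V, (1 : ℝ) / (G.dist x y)) + 2 * apA G u m + apP m := by
  simp only [Fintype.sum_sum_type]
  rw [Finset.sum_add_distrib, Finset.sum_add_distrib]
  have hB1 : ∑ x : V, ∑ y : V, (1 : ℝ) / ((attachPath G u m).dist (inl x) (inl y))
      = ∑ x : V, ∑ y : V, (1 : ℝ) / (G.dist x y) :=
    Finset.sum_congr rfl fun x _ => Finset.sum_congr rfl fun y _ => by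
      rw [ap_dist_inl_inl hc]
  have hB2' : ∑ x : V, ∑ i : Fin m, (1 : ℝ) / ((attachPath G u m).dist (inl x) (inr i))
      = apA G u m := by
    rw [Finset.sum_comm]
    have h1 : ∀ i : Fin m, ∑ x : V, (1 : ℝ) / ((attachPath G u m).dist (inl x) (inr i))
        = apf G u (i : ℕ) := by
      intro i
      refine Finset.sum_congr rfl fun x _ => ?_
      rw [ap_dist_inl_inr hc, dist_comm]
      push_cast
      ring_nf
    calc ∑ i : Fin m, ∑ x : V, (1 : ℝ) / ((attachPath G u m).dist (inl x) (inr i))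
        = ∑ i : Fin m, apf G u (i : ℕ) := Finset.sum_congr rfl fun i _ => h1 i
      _ = apA G u m := Fin.sum_univ_eq_sum_range (fun k => apf G u k) m
  have hB3 : ∑ i : Fin m, ∑ x : V, (1 : ℝ) / ((attachPath G u m).dist (inr i) (inl x))
      = apA G u m := by
    rw [Finset.sum_comm]
    rw [← hB2']
    exact Finset.sum_congr rfl fun x _ => Finset.sum_congr rfl fun i _ => by rw [dist_comm]
  have hB4 : ∑ i : Fin m, ∑ j : Fin m, (1 : ℝ) / ((attachPath G u m).dist (inr i) (inr j))
      = apP m := by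
    have h1 : ∀ i : Fin m, ∑ j : Fin m, (1 : ℝ) / ((attachPath G u m).dist (inr i) (inr j))
        = ∑ j ∈ Finset.range m, 1 / ((Nat.dist (i : ℕ) j : ℝ)) := by
      intro i
      rw [← Fin.sum_univ_eq_sum_range (fun k => (1:ℝ) / (Nat.dist (i : ℕ) k : ℝ)) m]
      exact Finset.sum_congr rfl fun j _ => by rw [ap_dist_inr_inr']
    calc ∑ i : Fin m, ∑ j : Fin m, (1 : ℝ) / ((attachPath G u m).dist (inr i) (inr j))
        = ∑ i : Fin m, ∑ j ∈ Finset.range m, 1 / ((Nat.dist (i : ℕ) j : ℝ)) :=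
          Finset.sum_congr rfl fun i _ => h1 i
      _ = apP m := Fin.sum_univ_eq_sum_range
          (fun k => ∑ j ∈ Finset.range m, 1 / ((Nat.dist k j : ℝ))) m
  rw [hB1, hB2', hB3, hB4]
  ring

end Sums

section Main
open Finset

variable {V : Type*} {G : SimpleGraph V} {u v : V}

section SwapSum
variable [Fintype V] [DecidableEq V]

lemma sum_dist_swap (huv : G.Adj u v)
    (hN : G.neighborSet u \ {v} = G.neighborSet v \ {u}) (F : ℕ → ℝ) :
    ∑ x : V, F (G.dist v x) = ∑ x : V, F (G.dist u x) := by
  have h := Equiv.sum_comp (Equiv.swap u v) (fun x => F (G.dist u x))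
  rw [← h]
  exact Finset.sum_congr rfl fun x _ => by rw [← dist_swap huv hN x]

end SwapSum

variable [Fintype V]

lemma ap_sum2 [DecidableEq V] (hc : G.Connected) (huv : G.Adj u v)
    (hN : G.neighborSet u \ {v} = G.neighborSet v \ {u}) (m n : ℕ) :
    ∑ z : (V ⊕ Fin m) ⊕ Fin n, ∑ z' : (V ⊕ Fin m) ⊕ Fin n,
        (1 : ℝ) / ((attachPath (attachPath G u m) (inl v) n).dist z z')
    = (∑ x : V, ∑ y : V, (1 : ℝ) / (G.dist x y)) + 2 * apA G u m + apP m
      + 2 * (apA G u n + apT m n) + apP n := by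
  have hc2 : (attachPath G u m).Connected := ap_connected hc
  rw [ap_sum hc2 n, ap_sum hc m]
  have happ : apA (attachPath G u m) (inl v) n = apA G u n + apT m n := by
    unfold apA apT
    rw [← Finset.sum_add_distrib]
    refine Finset.sum_congr rfl fun j hj => ?_
    unfold apf
    rw [Fintype.sum_sum_type]
    congr 1
    · rw [show (∑ x : V, 1 / (((attachPath G u m).dist (inl v) (inl x) : ℝ) + j + 1))
          = ∑ x : V, 1 / ((G.dist v x : ℝ) + j + 1) from
        Finset.sum_congr rfl fun x _ => by rw [ap_dist_inl_inl hc]]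
      exact sum_dist_swap huv hN (fun d => 1 / ((d : ℝ) + j + 1))
    · have hd : ∀ i : Fin m, (attachPath G u m).dist (inl v) (inr i) = (i : ℕ) + 2 := by
        intro i
        rw [ap_dist_inl_inr hc, dist_eq_one_iff_adj.2 huv.symm]
        omega
      rw [← Fin.sum_univ_eq_sum_range (fun k => (1 : ℝ) / ((k : ℝ) + (j : ℝ) + 3)) m]
      refine Finset.sum_congr rfl fun i _ => ?_
      rw [hd i]
      push_cast
      ring_nf
      try rfl
  rw [happ]

lemma apHh_add (c : ℕ) : ∀ a : ℕ, apHh (c + a) = apHh c + ∑ i ∈ Finset.range a, 1 / ((c : ℝ) + i + 1) := by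
  intro a
  induction a with
  | zero => simp [apHh]
  | succ a ih =>
    rw [show c + (a + 1) = (c + a) + 1 from rfl]
    unfold apHh at *
    rw [Finset.sum_range_succ, ih, Finset.sum_range_succ]
    push_cast
    ring

lemma apP_succ (k : ℕ) : apP (k + 1) = apP k + 2 * apHh k := by
  unfold apP
  rw [Finset.sum_range_succ]
  rw [show (∑ i ∈ Finset.range k, ∑ j ∈ Finset.range (k+1), (1:ℝ) / (Nat.dist i j : ℝ))
      = (∑ i ∈ Finset.range k, ∑ j ∈ Finset.range k, (1:ℝ) / (Nat.dist i j : ℝ))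
        + ∑ i ∈ Finset.range k, (1:ℝ) / (Nat.dist i k : ℝ) from by
    rw [← Finset.sum_add_distrib]
    exact Finset.sum_congr rfl fun i _ => Finset.sum_range_succ _ _]
  rw [Finset.sum_range_succ]
  have h1 : ∑ i ∈ Finset.range k, (1:ℝ) / (Nat.dist i k : ℝ) = apHh k := by
    unfold apHh
    rw [← Finset.sum_range_reflect]
    refine Finset.sum_congr rfl fun i hi => ?_
    rw [Finset.mem_range] at hi
    rw [show Nat.dist (k - 1 - i) k = i + 1 from by
      rw [Nat.dist_eq_sub_of_le (by omega)]; omega]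
    push_cast
    ring
  have h2 : ∑ j ∈ Finset.range k, (1:ℝ) / (Nat.dist k j : ℝ) = apHh k := by
    rw [← h1]
    exact Finset.sum_congr rfl fun j _ => by rw [Nat.dist_comm]
  rw [h1, h2, Nat.dist_self]
  norm_num
  ring

lemma master (hG : G.Connected) (huv : G.Adj u v)
    (hN : G.neighborSet u \ {v} = G.neighborSet v \ {u})
    (hNne : (G.neighborSet u \ {v}).Nonempty) (a b : ℕ) (hab : b + 1 ≤ a) :
    hararyIndex (attachPath (attachPath G u (a+1)) (Sum.inl v) b) <
      hararyIndex (attachPath (attachPath G u a) (Sum.inl v) (b+1)) := by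
  classical
  unfold hararyIndex
  rw [ap_sum2 hG huv hN (a+1) b, ap_sum2 hG huv hN a (b+1)]
  have hab' : (b : ℝ) + 1 ≤ (a : ℝ) := by exact_mod_cast hab
  -- abbreviations & facts
  have FA1 : apA G u (a+1) = apA G u a + apf G u a := Finset.sum_range_succ _ _
  have FA2 : apA G u (b+1) = apA G u b + apf G u b := Finset.sum_range_succ _ _
  have FT1 : apT (a+1) b = apT a b + ∑ j ∈ Finset.range b, 1 / ((a : ℝ) + j + 3) := by
    unfold apT
    rw [← Finset.sum_add_distrib]
    refine Finset.sum_congr rfl fun j _ => ?_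
    rw [Finset.sum_range_succ]
  have FT2 : apT a (b+1) = apT a b + ∑ i ∈ Finset.range a, 1 / ((i : ℝ) + b + 3) := by
    unfold apT
    rw [Finset.sum_range_succ]
  have FH1 : apHh (b+2+a) = apHh (b+2) + ∑ i ∈ Finset.range a, 1 / ((i : ℝ) + b + 3) := by
    rw [apHh_add (b+2) a]
    congr 1
    refine Finset.sum_congr rfl fun i _ => ?_
    push_cast
    ring_nf
  have FH2 : apHh (a+2+b) = apHh (a+2) + ∑ j ∈ Finset.range b, 1 / ((a : ℝ) + j + 3) := by
    rw [apHh_add (a+2) b]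
    congr 1
    refine Finset.sum_congr rfl fun j _ => ?_
    push_cast
    ring_nf
  have FH3 : apHh (b+2+a) = apHh (a+2+b) := by rw [show b+2+a = a+2+b from by omega]
  have FP1 : apP (a+1) = apP a + 2 * apHh a := apP_succ a
  have FP2 : apP (b+1) = apP b + 2 * apHh b := apP_succ b
  have FH4 : apHh (a+2) = apHh a + 1/((a:ℝ)+1) + 1/((a:ℝ)+2) := by
    unfold apHh
    rw [show a + 2 = (a+1)+1 from rfl, Finset.sum_range_succ, Finset.sum_range_succ]
    push_cast
    ring
  have FH5 : apHh (b+2) = apHh b + 1/((b:ℝ)+1) + 1/((b:ℝ)+2) := by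
    unfold apHh
    rw [show b + 2 = (b+1)+1 from rfl, Finset.sum_range_succ, Finset.sum_range_succ]
    push_cast
    ring
  -- the strict part
  obtain ⟨w, hw⟩ := hNne
  have hwu : G.Adj u w := hw.1
  have hwv : w ≠ v := hw.2
  have hwne : w ≠ u := fun h => G.irrefl (h ▸ hwu)
  have hpos : ∀ x : V, 0 < 1/((G.dist u x : ℝ) + b + 1) - 1/((G.dist u x : ℝ) + a + 1) := by
    intro x
    have hd : (0:ℝ) ≤ (G.dist u x : ℝ) := Nat.cast_nonneg _
    have hlt : (G.dist u x : ℝ) + b + 1 < (G.dist u x : ℝ) + a + 1 := by linarith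
    have := one_div_lt_one_div_of_lt (by linarith) hlt
    linarith
  have hsum : apf G u b - apf G u a
      = ∑ x : V, (1/((G.dist u x : ℝ) + b + 1) - 1/((G.dist u x : ℝ) + a + 1)) := by
    unfold apf
    rw [← Finset.sum_sub_distrib]
  have hlt2 : ∑ x ∈ ({u, v} : Finset V),
        (1/((G.dist u x : ℝ) + b + 1) - 1/((G.dist u x : ℝ) + a + 1))
      < ∑ x : V, (1/((G.dist u x : ℝ) + b + 1) - 1/((G.dist u x : ℝ) + a + 1)) := by
    refine Finset.sum_lt_sum_of_subset (Finset.subset_univ _) (Finset.mem_univ w) ?_ (hpos w)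
      (fun j _ _ => (hpos j).le)
    simp [hwne, hwv]
  have hpair : ∑ x ∈ ({u, v} : Finset V),
        (1/((G.dist u x : ℝ) + b + 1) - 1/((G.dist u x : ℝ) + a + 1))
      = (1/((G.dist u u : ℝ) + b + 1) - 1/((G.dist u u : ℝ) + a + 1))
        + (1/((G.dist u v : ℝ) + b + 1) - 1/((G.dist u v : ℝ) + a + 1)) :=
    Finset.sum_pair (G.ne_of_adj huv)
  have hduu : G.dist u u = 0 := dist_self
  have hduv : G.dist u v = 1 := dist_eq_one_iff_adj.2 huv
  rw [hduu, hduv] at hpair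
  have Fstrict : 1/((b:ℝ)+1) - 1/((a:ℝ)+1) + (1/((b:ℝ)+2) - 1/((a:ℝ)+2))
      < apf G u b - apf G u a := by
    rw [hsum]
    calc 1/((b:ℝ)+1) - 1/((a:ℝ)+1) + (1/((b:ℝ)+2) - 1/((a:ℝ)+2))
        = (1/(((0:ℕ):ℝ) + b + 1) - 1/(((0:ℕ):ℝ) + a + 1))
          + (1/(((1:ℕ):ℝ) + b + 1) - 1/(((1:ℕ):ℝ) + a + 1)) := by push_cast; ring
      _ = ∑ x ∈ ({u, v} : Finset V),
          (1/((G.dist u x : ℝ) + b + 1) - 1/((G.dist u x : ℝ) + a + 1)) := by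
            rw [hpair]
      _ < _ := hlt2
  gcongr ?_ / 2
  linarith [FA1, FA2, FT1, FT2, FH1, FH2, FH3, FP1, FP2, FH4, FH5, Fstrict]

end Main

end Aux

/-- If `G` is connected with adjacent vertices `u, v` having the same neighbours besides
each other (and at least one such common neighbour), and `G_{t,s}` denotes `G` with a
path `P_t` attached at `u` and a path `P_s` attached at `v`, then for `t ≥ s + 2 ≥ 3`
we have `H(G_{t,s}) < H(G_{t-1,s+1})`. -/
theorem harary_attach_paths_lt {V : Type*} [Fintype V] (G : SimpleGraph V) (u v : V)
    (hG : G.Connected) (huv : G.Adj u v)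
    (hN : G.neighborSet u \ {v} = G.neighborSet v \ {u})
    (hNne : (G.neighborSet u \ {v}).Nonempty)
    (t s : ℕ) (hs : 1 ≤ s) (hts : s + 2 ≤ t) :
    hararyIndex (attachPath (attachPath G u (t - 1)) (Sum.inl v) (s - 1)) <
      hararyIndex (attachPath (attachPath G u (t - 2)) (Sum.inl v) s) := by
  classical
  have h1 : t - 1 = (t - 2) + 1 := by omega
  rw [h1]
  have h2 : s = (s - 1) + 1 := by omega
  rw [h2]
  rw [show s - 1 + 1 - 1 = s - 1 from by omega]
  exact master hG huv hN hNne (t - 2) (s - 1) (by omega)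
end

section
/- Let G be a finite connected simple graph whose vertex set is the union V(G) = A ∪ B ∪ C of sets with A ∩ B = {u}, A ∩ C = {v}, B ∩ C = ∅, such that every edge of G has both endpoints in A, both in B, or both in C. Suppose: (i) uv ∈ E(G); (ii) there is a nonempty set W ⊆ A ∖ {u,v} with N_G(u) ∩ (A ∖ {v}) = N_G(v) ∩ (A ∖ {u}) = W; (iii) the induced subgraph G[C] is a path v = z_1, z_2, …, z_s (s ≥ 1); (iv) the induced subgraph G[B] is connected and contains a path x_1, x_2, …, x_t with x_1 = u, t ≥ s + 2, which is a shortest path in G[B] between x_1 and x_t (i.e. the distance from x_1 to x_t in G[B] equals t − 1). Let G′ be the graph obtained from G by deleting all edges vw with w ∈ W and adding all edges x_2w with w ∈ W. Then H(G) < H(G′). -/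
open SimpleGraph

namespace HararyAux

variable {V : Type*}

/-- Chain of adjacent vertices gives a walk, hence a distance bound. -/
lemma dist_chain_le {G : SimpleGraph V} (f : ℕ → V) :
    ∀ n : ℕ, (∀ k, k < n → G.Adj (f k) (f (k+1))) → G.dist (f 0) (f n) ≤ n := by
  intro n h
  suffices hw : ∃ w : G.Walk (f 0) (f n), w.length ≤ n by
    obtain ⟨w, hw⟩ := hw
    exact (SimpleGraph.dist_le w).trans hw
  induction n with
  | zero => exact ⟨.nil, le_rfl⟩
  | succ n ih =>
    obtain ⟨w, hw⟩ := ih (fun k hk => h k (by omega))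
    exact ⟨w.concat (h n (by omega)), by rw [SimpleGraph.Walk.length_concat]; omega⟩

/-- If `S∖{c}` can only be entered through `c`, a walk from outside `S` into `S`
passes through `c`. -/
lemma cut_mem_support {G : SimpleGraph V} {S : Set V} {c : V}
    (hcl : ∀ p q, G.Adj p q → q ∈ S → q ≠ c → p ∈ S) :
    ∀ {a b : V} (w : G.Walk a b), a ∉ S → b ∈ S → c ∈ w.support := by
  intro a b w
  induction w with
  | nil => intro ha hb; exact absurd hb ha
  | @cons p q r h w ih =>
    intro ha hb
    rw [SimpleGraph.Walk.support_cons]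
    by_cases hq : q ∈ S
    · -- then q = c (else p ∈ S)
      by_cases hqc : q = c
      · subst hqc; exact List.mem_cons_of_mem _ w.start_mem_support
      · exact absurd (hcl p q h hq hqc) ha
    · exact List.mem_cons_of_mem _ (ih hq hb)

lemma dist_cut {G : SimpleGraph V} {S : Set V} {c : V}
    (hcl : ∀ p q, G.Adj p q → q ∈ S → q ≠ c → p ∈ S)
    {a b : V} (ha : a ∉ S) (hb : b ∈ S) (hr : G.Reachable a b) :
    G.dist a c + G.dist c b ≤ G.dist a b := by
  classical
  obtain ⟨w, hw⟩ := hr.exists_walk_length_eq_dist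
  have hc : c ∈ w.support := cut_mem_support hcl w ha hb
  have h1 := SimpleGraph.dist_le (w.takeUntil c hc)
  have h2 := SimpleGraph.dist_le (w.dropUntil c hc)
  have h3 : (w.takeUntil c hc).length + (w.dropUntil c hc).length = w.length := by
    rw [← SimpleGraph.Walk.length_append, SimpleGraph.Walk.take_spec]
  omega

/-- 1-Lipschitz integer functions bound distances from below. -/
lemma lipschitz_le_walk {G : SimpleGraph V} (f : V → ℤ)
    (hf : ∀ p q, G.Adj p q → |f p - f q| ≤ 1) :
    ∀ {a b : V} (w : G.Walk a b), |f a - f b| ≤ (w.length : ℤ) := by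
  intro a b w
  induction w with
  | nil => simp
  | @cons p q r h w ih =>
    have h1 := hf p q h
    have h2 : |f p - f r| ≤ |f p - f q| + |f q - f r| := by
      calc |f p - f r| = |(f p - f q) + (f q - f r)| := by ring_nf
        _ ≤ |f p - f q| + |f q - f r| := abs_add_le _ _
    simp only [SimpleGraph.Walk.length_cons]
    push_cast
    omega

/-- 1-Lipschitz integer functions bound distances from below. -/
lemma lipschitz_le_dist {G : SimpleGraph V} (f : V → ℤ)
    (hf : ∀ p q, G.Adj p q → |f p - f q| ≤ 1)
    {a b : V} (hr : G.Reachable a b) : |f a - f b| ≤ (G.dist a b : ℤ) := by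
  obtain ⟨w, hw⟩ := hr.exists_walk_length_eq_dist
  rw [← hw]
  exact lipschitz_le_walk f hf w

end HararyAux

namespace HararyAux

variable {V : Type*}

lemma transfer_walk {G G' : SimpleGraph V} {Cs : Set V} {v y : V}
    (hcl : ∀ p q, G.Adj p q → q ∈ Cs → q ≠ v → p ∈ Cs)
    (hkeep : ∀ p q, G.Adj p q → p ≠ v → q ≠ v → G'.Adj p q)
    (hrep : ∀ c, G.Adj v c → c ∉ Cs → G'.Adj y c)
    (hvC : v ∈ Cs) :
    ∀ (n : ℕ) {a b : V} (w : G.Walk a b), w.length ≤ n → w.IsPath → a ∉ Cs → b ∉ Cs →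
      ∃ w' : G'.Walk a b, w'.length ≤ w.length := by
  intro n
  induction n with
  | zero =>
    intro a b w hlen _ _ _
    cases w with
    | nil => exact ⟨.nil, le_rfl⟩
    | cons h w => simp at hlen
  | succ n ih =>
    intro a b w hlen hpath ha hb
    cases w with
    | nil => exact ⟨.nil, le_rfl⟩
    | @cons _ q _ h w' =>
      by_cases hq : q ∈ Cs
      · -- q = v
        have hqv : v = q := by
          by_contra hne
          exact ha (hcl a q h hq (fun hh => hne hh.symm))
        subst hqv
        cases w' with
        | nil => exact absurd hvC hb
        | @cons _ q2 _ h2 w'' =>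
          by_cases hq2 : q2 ∈ Cs
          · exfalso
            have hpath2 : (SimpleGraph.Walk.cons h2 w'').IsPath ∧ a ∉ _ :=
              (SimpleGraph.Walk.cons_isPath_iff _ _).mp hpath
            have hpath3 := (SimpleGraph.Walk.cons_isPath_iff _ _).mp hpath2.1
            have hvmem : v ∈ w''.reverse.support :=
              cut_mem_support hcl w''.reverse hb hq2
            rw [SimpleGraph.Walk.support_reverse, List.mem_reverse] at hvmem
            exact hpath3.2 hvmem
          · have hay : G'.Adj a y := (hrep a h.symm ha).symm
            have hyq2 : G'.Adj y q2 := hrep q2 h2 hq2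
            have hpath2 := (SimpleGraph.Walk.cons_isPath_iff _ _).mp hpath
            have hpath3 := (SimpleGraph.Walk.cons_isPath_iff _ _).mp hpath2.1
            have hlen2 : w''.length ≤ n := by
              simp only [SimpleGraph.Walk.length_cons] at hlen; omega
            obtain ⟨w3, hw3⟩ := ih w'' hlen2 hpath3.1 hq2 hb
            refine ⟨.cons hay (.cons hyq2 w3), ?_⟩
            simp only [SimpleGraph.Walk.length_cons]
            omega
      · have hav : a ≠ v := fun hh => ha (hh ▸ hvC)
        have hqv : q ≠ v := fun hh => hq (hh ▸ hvC)
        have hpath2 := (SimpleGraph.Walk.cons_isPath_iff _ _).mp hpath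
        have hlen2 : w'.length ≤ n := by
          simp only [SimpleGraph.Walk.length_cons] at hlen; omega
        obtain ⟨w3, hw3⟩ := ih w' hlen2 hpath2.1 hq hb
        refine ⟨.cons (hkeep a q h hav hqv) w3, ?_⟩
        simp only [SimpleGraph.Walk.length_cons]
        omega

lemma transfer_dist {G G' : SimpleGraph V} {Cs : Set V} {v y : V}
    (hcl : ∀ p q, G.Adj p q → q ∈ Cs → q ≠ v → p ∈ Cs)
    (hkeep : ∀ p q, G.Adj p q → p ≠ v → q ≠ v → G'.Adj p q)
    (hrep : ∀ c, G.Adj v c → c ∉ Cs → G'.Adj y c)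
    (hvC : v ∈ Cs) {a b : V} (ha : a ∉ Cs) (hb : b ∉ Cs)
    (hr : G.Reachable a b) :
    G'.dist a b ≤ G.dist a b ∧ G'.Reachable a b := by
  obtain ⟨w, hwp, hwl⟩ := hr.exists_path_of_dist
  obtain ⟨w', hw'⟩ := transfer_walk hcl hkeep hrep hvC w.length w le_rfl hwp ha hb
  exact ⟨(SimpleGraph.dist_le w').trans (hw'.trans hwl.le), ⟨w'⟩⟩

end HararyAux

namespace HararyAux

variable {V : Type*}

lemma walk_chain {G : SimpleGraph V} (f : ℕ → V) :
    ∀ n : ℕ, (∀ k, k < n → G.Adj (f k) (f (k+1))) →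
      ∃ w : G.Walk (f 0) (f n), w.length ≤ n := by
  intro n h
  induction n with
  | zero => exact ⟨.nil, le_rfl⟩
  | succ n ih =>
    obtain ⟨w, hw⟩ := ih (fun k hk => h k (by omega))
    exact ⟨w.concat (h n (by omega)), by rw [SimpleGraph.Walk.length_concat]; omega⟩

lemma induce_walk_le {G : SimpleGraph V} {Bs : Set V} {u : V} (hu : u ∈ Bs)
    (hcl : ∀ p q, G.Adj p q → q ∈ Bs → q ≠ u → p ∈ Bs) :
    ∀ {p : V} (w : G.Walk p u) (hp : p ∈ Bs),
      ∃ w' : (G.induce Bs).Walk ⟨p, hp⟩ ⟨u, hu⟩, w'.length ≤ w.length := by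
  intro p w
  induction w with
  | nil => intro hp; exact ⟨.nil, le_rfl⟩
  | @cons p q r h w' ih =>
    intro hp
    by_cases hpu : p = r
    · subst hpu; exact ⟨.nil, by simp⟩
    · have hqB : q ∈ Bs := hcl q p h.symm hp hpu
      obtain ⟨w2, hw2⟩ := ih hu hcl hqB
      refine ⟨.cons ?_ w2, ?_⟩
      · exact h
      · simp only [SimpleGraph.Walk.length_cons]; exact Nat.succ_le_succ hw2

end HararyAux

namespace HararyAux

lemma one_div_sub_le {d' d m n : ℕ} (hd' : 0 < d') (hm : d' ≤ m) (hn : 0 < n) (hnd : n ≤ d) :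
    (1:ℝ)/(m : ℝ) - 1/(n : ℝ) ≤ 1/(d' : ℝ) - 1/(d : ℝ) := by
  have h1 : (1:ℝ)/(m:ℝ) ≤ 1/(d':ℝ) :=
    one_div_le_one_div_of_le (by exact_mod_cast hd') (by exact_mod_cast hm)
  have h2 : (1:ℝ)/(d:ℝ) ≤ 1/(n:ℝ) :=
    one_div_le_one_div_of_le (by exact_mod_cast hn) (by exact_mod_cast hnd)
  linarith

lemma one_div_sub_nonneg {m n : ℕ} (hm : 0 < m) (hmn : m ≤ n) :
    (0:ℝ) ≤ 1/(m:ℝ) - 1/(n:ℝ) := by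
  have h2 : (1:ℝ)/(n:ℝ) ≤ 1/(m:ℝ) :=
    one_div_le_one_div_of_le (by exact_mod_cast hm) (by exact_mod_cast hmn)
  linarith

lemma one_div_sub_pos {m n : ℕ} (hm : 0 < m) (hmn : m < n) :
    (0:ℝ) < 1/(m:ℝ) - 1/(n:ℝ) := by
  have h2 : (1:ℝ)/(n:ℝ) < 1/(m:ℝ) := by
    apply one_div_lt_one_div_of_lt (by exact_mod_cast hm) (by exact_mod_cast hmn)
  linarith

end HararyAux

open SimpleGraph HararyAux

/-- Lemma 2.2 of the paper.  `G` is connected, with `V(G) = A ∪ B ∪ C`,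
`A ∩ B = {u}`, `A ∩ C = {v}`, `B ∩ C = ∅`, every edge inside `A`, `B` or `C`;
`uv ∈ E(G)`; `u` and `v` have the same neighbourhood `W ≠ ∅` inside `A` (besides each
other); `G[C]` is a path `v = z_1, …, z_s`; `G[B]` contains a path
`u = x_1, …, x_t` (`t ≥ s + 2`) which is a shortest `x_1,x_t`-path in `G[B]`.
Moving the edges from `v` to `W` so that they join `x_2` to `W` increases the
Harary index. -/
theorem harary_lt_move_common_neighbors {V : Type*} [Fintype V] (G : SimpleGraph V)
    (hG : G.Connected) (A B C : Set V) (u v : V)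
    (hcover : A ∪ B ∪ C = Set.univ)
    (hAB : A ∩ B = {u}) (hAC : A ∩ C = {v}) (hBC : B ∩ C = ∅)
    (hedge : ∀ x y, G.Adj x y →
      (x ∈ A ∧ y ∈ A) ∨ (x ∈ B ∧ y ∈ B) ∨ (x ∈ C ∧ y ∈ C))
    (huv : G.Adj u v)
    (W : Set V) (hWsub : W ⊆ A \ {u, v}) (hWne : W.Nonempty)
    (hWu : G.neighborSet u ∩ (A \ {v}) = W)
    (hWv : G.neighborSet v ∩ (A \ {u}) = W)
    (s : ℕ) (hs : 1 ≤ s)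
    (z : Fin s → V) (hzinj : Function.Injective z)
    (hz0 : z ⟨0, by omega⟩ = v) (hzC : Set.range z = C)
    (hzadj : ∀ i j : Fin s,
      G.Adj (z i) (z j) ↔ ((i : ℕ) + 1 = (j : ℕ) ∨ (j : ℕ) + 1 = (i : ℕ)))
    (t : ℕ) (hts : s + 2 ≤ t)
    (x : Fin t → V) (hxinj : Function.Injective x)
    (hx0 : x ⟨0, by omega⟩ = u) (hxB : ∀ i, x i ∈ B)
    (hxpath : ∀ i j : Fin t, (i : ℕ) + 1 = (j : ℕ) → G.Adj (x i) (x j))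
    (hshortest : (G.induce B).dist ⟨x ⟨0, by omega⟩, hxB _⟩ ⟨x ⟨t - 1, by omega⟩, hxB _⟩
      = t - 1) :
    hararyIndex G <
      hararyIndex ((G.deleteEdges {e | ∃ w ∈ W, e = s(v, w)}) ⊔
        SimpleGraph.fromEdgeSet {e | ∃ w ∈ W, e = s(x ⟨1, by omega⟩, w)}) := by
  classical
  set y : V := x ⟨1, by omega⟩ with hy
  set G' : SimpleGraph V := (G.deleteEdges {e | ∃ w ∈ W, e = s(v, w)}) ⊔
      SimpleGraph.fromEdgeSet {e | ∃ w ∈ W, e = s(y, w)} with hG'def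
  -- basic membership facts
  have huAB : u ∈ A ∩ B := by rw [hAB]; exact Set.mem_singleton u
  have hvAC : v ∈ A ∩ C := by rw [hAC]; exact Set.mem_singleton v
  have huA : u ∈ A := huAB.1
  have huB : u ∈ B := huAB.2
  have hvA : v ∈ A := hvAC.1
  have hvC : v ∈ C := hvAC.2
  have hneuv : u ≠ v := huv.ne
  have huC : u ∉ C := by
    intro h
    have : u ∈ A ∩ C := ⟨huA, h⟩
    rw [hAC] at this
    exact hneuv this
  have hvB : v ∉ B := by
    intro h
    have : v ∈ A ∩ B := ⟨hvA, h⟩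
    rw [hAB] at this
    exact hneuv this.symm
  have hWmem : ∀ w ∈ W, w ∈ A ∧ w ≠ u ∧ w ≠ v := by
    intro w hw
    obtain ⟨h1, h2⟩ := hWsub hw
    simp only [Set.mem_insert_iff, Set.mem_singleton_iff, not_or] at h2
    exact ⟨h1, h2.1, h2.2⟩
  have hWB : ∀ w ∈ W, w ∉ B := by
    intro w hw hwB
    obtain ⟨h1, h2, _⟩ := hWmem w hw
    have : w ∈ A ∩ B := ⟨h1, hwB⟩
    rw [hAB] at this
    exact h2 this
  have hWC : ∀ w ∈ W, w ∉ C := by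
    intro w hw hwC
    obtain ⟨h1, _, h3⟩ := hWmem w hw
    have : w ∈ A ∩ C := ⟨h1, hwC⟩
    rw [hAC] at this
    exact h3 this
  have hyB : y ∈ B := hxB _
  have hyu : y ≠ u := by
    intro h
    rw [← hx0] at h
    have := hxinj h
    simp [Fin.ext_iff] at this
  have hyC : y ∉ C := by
    intro h
    rw [Set.eq_empty_iff_forall_notMem] at hBC
    exact hBC y ⟨hyB, h⟩
  have hyv : y ≠ v := fun h => hyC (h ▸ hvC)
  have hyA : y ∉ A := by
    intro h
    have : y ∈ A ∩ B := ⟨h, hyB⟩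
    rw [hAB] at this
    exact hyu this
  have hzmemC : ∀ i, z i ∈ C := fun i => hzC ▸ Set.mem_range_self i
  have hCz : ∀ p, p ∈ C → ∃ i, z i = p := by
    intro p hp
    rw [← hzC] at hp
    exact hp
  have hcover' : ∀ p : V, p ∈ A ∨ p ∈ B ∨ p ∈ C := by
    intro p
    have : p ∈ A ∪ B ∪ C := by rw [hcover]; trivial
    rcases this with (h | h) | h
    · exact Or.inl h
    · exact Or.inr (Or.inl h)
    · exact Or.inr (Or.inr h)
  -- closure facts
  have hCcl : ∀ p q, G.Adj p q → q ∈ C → q ≠ v → p ∈ C := by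
    intro p q hadj hq hqv
    rcases hedge p q hadj with ⟨_, h⟩ | ⟨_, h⟩ | ⟨h, _⟩
    · exact absurd (by rw [← hAC]; exact ⟨h, hq⟩ : q ∈ ({v} : Set V)) hqv
    · exact absurd (Set.eq_empty_iff_forall_notMem.mp hBC q ⟨h, hq⟩) not_false
    · exact h
  have hBcl : ∀ p q, G.Adj p q → q ∈ B → q ≠ u → p ∈ B := by
    intro p q hadj hq hqu
    rcases hedge p q hadj with ⟨_, h⟩ | ⟨h, _⟩ | ⟨_, h⟩
    · exact absurd (by rw [← hAB]; exact ⟨h, hq⟩ : q ∈ ({u} : Set V)) hqu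
    · exact h
    · exact absurd (Set.eq_empty_iff_forall_notMem.mp hBC q ⟨hq, h⟩) not_false
  -- adjacency in G'
  have hkeep2 : ∀ p q, G.Adj p q → (p = v → q ∉ W) → (q = v → p ∉ W) → G'.Adj p q := by
    intro p q hadj h1 h2
    rw [hG'def, SimpleGraph.sup_adj, SimpleGraph.deleteEdges_adj]
    left
    refine ⟨hadj, ?_⟩
    rintro ⟨w, hw, hew⟩
    rw [Sym2.eq_iff] at hew
    rcases hew with ⟨hpv, hqw⟩ | ⟨hpw, hqv⟩
    · exact h1 hpv (hqw ▸ hw)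
    · exact h2 hqv (hpw ▸ hw)
  have hWv' : v ∉ W := fun h => (hWmem v h).2.2 rfl
  have hWu' : u ∉ W := fun h => (hWmem u h).2.1 rfl
  have hkeep : ∀ p q, G.Adj p q → p ≠ v → q ≠ v → G'.Adj p q := by
    intro p q hadj hp hq
    exact hkeep2 p q hadj (fun h => absurd h hp) (fun h => absurd h hq)
  have hvu' : G'.Adj v u :=
    hkeep2 v u huv.symm (fun _ => hWu') (fun h => absurd h (fun hh => hneuv hh))
  have hadjuy : G.Adj u y := hx0 ▸ hxpath ⟨0, by omega⟩ ⟨1, by omega⟩ rfl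
  have hnew : ∀ w ∈ W, G'.Adj y w := by
    intro w hw
    rw [hG'def, SimpleGraph.sup_adj, SimpleGraph.fromEdgeSet_adj]
    right
    refine ⟨⟨w, hw, rfl⟩, ?_⟩
    intro h
    exact hyA (h ▸ (hWmem w hw).1)
  -- neighbours of v outside C are u or in W
  have hNv : ∀ c, G.Adj v c → c ∉ C → c = u ∨ c ∈ W := by
    intro c hadj hcC
    by_cases hcu : c = u
    · exact Or.inl hcu
    · right
      rw [← hWv]
      have hcA : c ∈ A := by
        rcases hedge v c hadj with ⟨_, h⟩ | ⟨h, _⟩ | ⟨_, h⟩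
        · exact h
        · exact absurd h hvB
        · exact absurd h hcC
      exact ⟨hadj, hcA, hcu⟩
  have hrep : ∀ c, G.Adj v c → c ∉ C → G'.Adj y c := by
    intro c hadj hcC
    rcases hNv c hadj hcC with h | h
    · rw [h]; exact (hkeep u y hadjuy hneuv hyv).symm
    · exact hnew c h
  -- transfer of distances from G to G'
  have htrans : ∀ a b : V, a ∉ C → b ∉ C →
      G'.dist a b ≤ G.dist a b ∧ G'.Reachable a b := by
    intro a b ha hb
    exact HararyAux.transfer_dist hCcl hkeep hrep hvC ha hb (hG.preconnected a b)
  -- the canonical path through C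
  have hsz : ∀ k : ℕ, min k (s-1) < s := fun k => by omega
  set ζ : ℕ → V := fun k => z ⟨min k (s-1), hsz k⟩ with hζdef
  have hζ0 : ζ 0 = v := by
    rw [hζdef]
    simp only
    rw [show (⟨min 0 (s-1), hsz 0⟩ : Fin s) = ⟨0, by omega⟩ from Fin.ext (by simp), hz0]
  have hζi : ∀ i : Fin s, ζ (i : ℕ) = z i := by
    intro i
    rw [hζdef]
    simp only
    congr 1
    exact Fin.ext (by simp [Nat.min_eq_left]; omega)
  have hζadjG : ∀ k : ℕ, k + 1 ≤ s - 1 → G.Adj (ζ k) (ζ (k+1)) := by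
    intro k hk
    rw [hζdef]
    simp only
    rw [hzadj]
    left
    simp only
    omega
  have hζC : ∀ k, ζ k ∈ C := fun k => by rw [hζdef]; exact hzmemC _
  have hζadjG' : ∀ k : ℕ, k + 1 ≤ s - 1 → G'.Adj (ζ k) (ζ (k+1)) := by
    intro k hk
    exact hkeep2 _ _ (hζadjG k hk) (fun _ hw => hWC _ hw (hζC (k+1)))
      (fun _ hw => hWC _ hw (hζC k))
  have hdist_vz : ∀ i : Fin s, G.dist v (z i) ≤ (i : ℕ) := by
    intro i
    have h := HararyAux.dist_chain_le (G := G) ζ (i : ℕ)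
      (fun k hk => hζadjG k (by have := i.isLt; omega))
    rwa [hζ0, hζi i] at h
  have hdist_vz' : ∀ i : Fin s, G'.dist v (z i) ≤ (i : ℕ) := by
    intro i
    have h := HararyAux.dist_chain_le (G := G') ζ (i : ℕ)
      (fun k hk => hζadjG' k (by have := i.isLt; omega))
    rwa [hζ0, hζi i] at h
  -- the Lipschitz function measuring depth in C
  set fC : V → ℤ := fun p => if h : ∃ i : Fin s, z i = p then ((Classical.choose h : Fin s) : ℤ) else 0
    with hfCdef
  have hfCz : ∀ i : Fin s, fC (z i) = (i : ℕ) := by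
    intro i
    have hex : ∃ j : Fin s, z j = z i := ⟨i, rfl⟩
    rw [hfCdef]
    simp only [dif_pos hex]
    have := Classical.choose_spec hex
    rw [hzinj this]
  have hfC0 : ∀ p, p ∉ C → fC p = 0 := by
    intro p hp
    have hne : ¬ ∃ i : Fin s, z i = p := by
      rintro ⟨i, rfl⟩
      exact hp (hzmemC i)
    rw [hfCdef]
    simp only [dif_neg hne]
  have hfCv : fC v = 0 := by
    have : fC (z ⟨0, by omega⟩) = ((0 : ℕ) : ℤ) := hfCz ⟨0, by omega⟩
    rwa [hz0] at this
  have hlip : ∀ p q, G.Adj p q → |fC p - fC q| ≤ 1 := by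
    intro p q hadj
    by_cases hp : p ∈ C <;> by_cases hq : q ∈ C
    · obtain ⟨i, rfl⟩ := hCz p hp
      obtain ⟨j, rfl⟩ := hCz q hq
      have := (hzadj i j).mp hadj
      rw [hfCz i, hfCz j]
      rw [abs_le]
      constructor <;> push_cast <;> omega
    · by_cases hpv : p = v
      · rw [hpv, hfCv, hfC0 q hq]; simp
      · exact absurd (hCcl q p hadj.symm hp hpv) hq
    · by_cases hqv : q = v
      · rw [hqv, hfCv, hfC0 p hp]; simp
      · exact absurd (hCcl p q hadj hq hqv) hp
    · rw [hfC0 p hp, hfC0 q hq]; simp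
  have hz_ne_v : ∀ i : Fin s, (i : ℕ) ≠ 0 → z i ≠ v := by
    intro i hi h
    rw [← hz0] at h
    have := hzinj h
    rw [Fin.ext_iff] at this
    exact hi this
  have hlow_vz : ∀ i : Fin s, (i : ℕ) ≤ G.dist v (z i) := by
    intro i
    have h := HararyAux.lipschitz_le_dist fC hlip (hG.preconnected v (z i))
    rw [hfCv, hfCz i] at h
    simp only [zero_sub, abs_neg, abs_of_nonneg (by positivity : (0:ℤ) ≤ ((i:ℕ):ℤ))] at h
    exact_mod_cast h
  have hlow_zz : ∀ i j : Fin s, ((i : ℕ) : ℤ) - ((j : ℕ) : ℤ) ≤ G.dist (z i) (z j) := by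
    intro i j
    have h := HararyAux.lipschitz_le_dist fC hlip (hG.preconnected (z i) (z j))
    rw [hfCz i, hfCz j] at h
    exact (le_abs_self _).trans h
  have hlowzC : ∀ (i : Fin s) (q : V), q ∉ C → G.dist q v + (i : ℕ) ≤ G.dist q (z i) := by
    intro i q hq
    by_cases hi : (i : ℕ) = 0
    · have : z i = v := by
        rw [← hz0]; congr 1; exact Fin.ext (by simp [hi])
      rw [this, hi]
      omega
    · have hcut := HararyAux.dist_cut hCcl hq (hzmemC i) (hG.preconnected q (z i))
      have := hlow_vz i
      omega
  have hd'zz : ∀ i j : Fin s, G'.dist (z i) (z j) ≤ G.dist (z i) (z j) := by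
    have key : ∀ i j : Fin s, (i : ℕ) ≤ (j : ℕ) → G'.dist (z i) (z j) ≤ G.dist (z i) (z j) := by
      intro i j hij
      have hup : G'.dist (z i) (z j) ≤ (j : ℕ) - (i : ℕ) := by
        have h := HararyAux.dist_chain_le (G := G') (fun k => ζ ((i : ℕ) + k)) ((j:ℕ) - (i:ℕ))
          (fun k hk => hζadjG' ((i:ℕ) + k) (by have := j.isLt; omega))
        simp only [Nat.add_zero] at h
        rw [hζi i] at h
        rw [show (i:ℕ) + ((j:ℕ) - (i:ℕ)) = (j:ℕ) by omega, hζi j] at h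
        exact h
      have hlo := hlow_zz j i
      have hji : ((j:ℕ):ℤ) - ((i:ℕ):ℤ) ≤ (G.dist (z i) (z j) : ℤ) := by
        rwa [SimpleGraph.dist_comm] at hlo
      omega
    intro i j
    rcases le_total (i : ℕ) (j : ℕ) with h | h
    · exact key i j h
    · rw [SimpleGraph.dist_comm, SimpleGraph.dist_comm (G := G)]
      exact key j i h
  -- G' connectivity
  have hreachU : ∀ a : V, G'.Reachable a u := by
    intro a
    by_cases ha : a ∈ C
    · obtain ⟨i, rfl⟩ := hCz a ha
      obtain ⟨w, -⟩ := HararyAux.walk_chain (G := G') ζ (i : ℕ)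
        (fun k hk => hζadjG' k (by have := i.isLt; omega))
      rw [hζ0, hζi i] at w
      have r1 : G'.Reachable (z i) v := ⟨w.reverse⟩
      exact r1.trans ⟨hvu'.toWalk⟩
    · exact (htrans a u ha huC).2
  have hG'conn : G'.Connected := by
    haveI := hG.nonempty
    exact ⟨fun a b => (hreachU a).trans (hreachU b).symm⟩
  -- B-side facts
  have hBC' : ∀ b ∈ B, b ∉ C := by
    intro b hb hc
    exact Set.eq_empty_iff_forall_notMem.mp hBC b ⟨hb, hc⟩
  have htx : ∀ k : ℕ, min k (t-1) < t := fun k => by omega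
  set χ : ℕ → V := fun k => x ⟨min k (t-1), htx k⟩ with hχdef
  have hχB : ∀ k, χ k ∈ B := fun k => hxB _
  set ξ : ℕ → ↥B := fun k => ⟨χ k, hχB k⟩ with hξdef
  have hχC : ∀ k, χ k ∉ C := fun k => hBC' _ (hχB k)
  have hχv : ∀ k, χ k ≠ v := fun k h => hvB (h ▸ hχB k)
  have hχinj : ∀ a b : ℕ, a ≤ t-1 → b ≤ t-1 → χ a = χ b → a = b := by
    intro a b ha hb h
    rw [hχdef] at h
    simp only at h
    have := hxinj h
    rw [Fin.ext_iff] at this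
    simp only at this
    omega
  have hχ0 : χ 0 = u := by
    rw [hχdef]
    simp only
    rw [show (⟨min 0 (t-1), htx 0⟩ : Fin t) = ⟨0, by omega⟩ from
      Fin.ext (by show min 0 (t-1) = 0; omega)]
    exact hx0
  have hχ1 : χ 1 = y := by
    rw [hχdef, hy]
    simp only
    congr 1
    exact Fin.ext (by show min 1 (t-1) = 1; omega)
  have hχadjG : ∀ k : ℕ, k + 1 ≤ t - 1 → G.Adj (χ k) (χ (k+1)) := by
    intro k hk
    rw [hχdef]
    simp only
    refine hxpath _ _ ?_
    show min k (t-1) + 1 = min (k+1) (t-1)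
    omega
  have hχadjG' : ∀ k : ℕ, k + 1 ≤ t - 1 → G'.Adj (χ k) (χ (k+1)) := by
    intro k hk
    exact hkeep _ _ (hχadjG k hk) (hχv k) (hχv (k+1))
  have hξadj : ∀ k : ℕ, k + 1 ≤ t - 1 → (G.induce B).Adj (ξ k) (ξ (k+1)) := by
    intro k hk
    rw [hξdef]
    exact hχadjG k hk
  have hwalkξ : ∀ a b : ℕ, a ≤ b → b ≤ t - 1 →
      ∃ w : (G.induce B).Walk (ξ a) (ξ b), w.length ≤ b - a := by
    intro a b hab hb
    obtain ⟨w, hw⟩ := HararyAux.walk_chain (G := G.induce B) (fun k => ξ (a + k)) (b - a)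
      (fun k hk => hξadj (a + k) (by omega))
    refine ⟨w.copy (by show ξ (a + 0) = ξ a; rw [Nat.add_zero])
      (by show ξ (a + (b - a)) = ξ b; rw [show a + (b - a) = b by omega]), ?_⟩
    rwa [SimpleGraph.Walk.length_copy]
  have hshortξ : (G.induce B).dist (ξ 0) (ξ (t-1)) = t - 1 := by
    have h1 : ξ 0 = ⟨x ⟨0, by omega⟩, hxB _⟩ := by
      apply Subtype.ext
      show χ 0 = x ⟨0, by omega⟩
      rw [hχdef]
      simp only
      congr 1
    have h2 : ξ (t-1) = ⟨x ⟨t-1, by omega⟩, hxB _⟩ := by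
      apply Subtype.ext
      show χ (t-1) = x ⟨t-1, by omega⟩
      rw [hχdef]
      simp only
      congr 1
      exact Fin.ext (by show min (t-1) (t-1) = t-1; omega)
    rw [h1, h2]
    exact hshortest
  have hindB_low : ∀ j : ℕ, j ≤ t - 1 → j ≤ (G.induce B).dist (ξ 0) (ξ j) := by
    intro j hj
    have hreach : (G.induce B).Reachable (ξ 0) (ξ j) := by
      obtain ⟨w, -⟩ := hwalkξ 0 j (by omega) hj
      exact ⟨w⟩
    obtain ⟨w1, hw1⟩ := hreach.exists_walk_length_eq_dist
    obtain ⟨w2, hw2⟩ := hwalkξ j (t-1) hj le_rfl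
    have hle := SimpleGraph.dist_le (w1.append w2)
    rw [hshortξ, SimpleGraph.Walk.length_append, hw1] at hle
    omega
  have hux_low : ∀ j : ℕ, j ≤ t - 1 → j ≤ G.dist u (χ j) := by
    intro j hj
    obtain ⟨w, hw⟩ := (hG.preconnected (χ j) u).exists_walk_length_eq_dist
    obtain ⟨w', hw'⟩ := HararyAux.induce_walk_le huB hBcl w (hχB j)
    have h1 : (G.induce B).dist ⟨χ j, hχB j⟩ ⟨u, huB⟩ ≤ G.dist (χ j) u :=
      hw ▸ (SimpleGraph.dist_le w').trans hw'
    have h2 : (⟨u, huB⟩ : ↥B) = ξ 0 := Subtype.ext hχ0.symm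
    have h3 : (⟨χ j, hχB j⟩ : ↥B) = ξ j := rfl
    rw [h2, h3, SimpleGraph.dist_comm] at h1
    have h4 := hindB_low j hj
    rw [SimpleGraph.dist_comm (G := G)]
    omega
  have hyx' : ∀ j : ℕ, 1 ≤ j → j ≤ t - 1 → G'.dist y (χ j) ≤ j - 1 := by
    intro j h1 h2
    obtain ⟨w, hw⟩ := HararyAux.walk_chain (G := G') (fun k => χ (1 + k)) (j - 1)
      (fun k hk => hχadjG' (1 + k) (by omega))
    have hle := SimpleGraph.dist_le
      (w.copy (by show χ (1 + 0) = y; rw [Nat.add_zero]; exact hχ1)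
        (by show χ (1 + (j - 1)) = χ j; rw [show 1 + (j-1) = j by omega]))
    rw [SimpleGraph.Walk.length_copy] at hle
    omega
  -- ζ with explicit nat index
  have hζmk : ∀ k : ℕ, ∀ hk : k < s, ζ k = z ⟨k, hk⟩ := by
    intro k hk
    rw [hζdef]
    simp only
    congr 1
    exact Fin.ext (by show min k (s-1) = k; omega)
  -- distances between v/u
  have hd_vu : G.dist v u = 1 := SimpleGraph.dist_eq_one_iff_adj.mpr huv.symm
  have hd'_vu : G'.dist v u = 1 := SimpleGraph.dist_eq_one_iff_adj.mpr hvu'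
  have hvqB : ∀ q ∈ B, 1 + G.dist u q ≤ G.dist v q := by
    intro q hq
    by_cases hqu : q = u
    · subst hqu
      rw [SimpleGraph.dist_self, hd_vu]
    · have hcut := HararyAux.dist_cut hBcl hvB hq (hG.preconnected v q)
      rw [hd_vu] at hcut
      omega
  -- rest pairs involving C and B
  have hR2 : ∀ (i : Fin s) (q : V), q ∈ B → G'.dist (z i) q ≤ G.dist (z i) q := by
    intro i q hq
    have hqC : q ∉ C := hBC' q hq
    have h1 : G'.dist (z i) q ≤ G'.dist (z i) v + G'.dist v q := hG'conn.dist_triangle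
    have h2 : G'.dist v q ≤ G'.dist v u + G'.dist u q := hG'conn.dist_triangle
    have h3 : G'.dist (z i) v ≤ (i : ℕ) := by
      rw [SimpleGraph.dist_comm]; exact hdist_vz' i
    have h4 : G'.dist u q ≤ G.dist u q := (htrans u q huC hqC).1
    have h5 : G.dist q v + (i : ℕ) ≤ G.dist q (z i) := hlowzC i q hqC
    have h6 : 1 + G.dist u q ≤ G.dist v q := hvqB q hq
    rw [SimpleGraph.dist_comm (G := G) (u := z i) (v := q)]
    rw [SimpleGraph.dist_comm (G := G) (u := q) (v := v)] at h5
    omega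
  -- the difference function
  set gv : V → V → ℝ := fun p q => 1/(G'.dist p q : ℝ) - 1/(G.dist p q : ℝ) with hgvdef
  have hgvsymm : ∀ p q, gv p q = gv q p := by
    intro p q
    show (1:ℝ)/(G'.dist p q : ℝ) - 1/(G.dist p q : ℝ) =
      1/(G'.dist q p : ℝ) - 1/(G.dist q p : ℝ)
    rw [SimpleGraph.dist_comm (G := G') (u := p) (v := q),
      SimpleGraph.dist_comm (G := G) (u := p) (v := q)]
  have hgv_nonneg : ∀ p q : V, G'.dist p q ≤ G.dist p q → 0 ≤ gv p q := by
    intro p q hle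
    by_cases hpq : p = q
    · subst hpq
      rw [hgvdef]
      simp [SimpleGraph.dist_self]
    · have hd : 0 < G.dist p q := hG.pos_dist_of_ne hpq
      have hd' : 0 < G'.dist p q := (hG'conn.preconnected p q).pos_dist_of_ne hpq
      rw [hgvdef]
      simp only
      have := HararyAux.one_div_sub_nonneg hd' hle
      have h2 : (1:ℝ)/(G.dist p q : ℝ) ≤ 1/(G'.dist p q : ℝ) :=
        one_div_le_one_div_of_le (by exact_mod_cast hd') (by exact_mod_cast hle)
      linarith
  -- the index sets
  set Afin : Finset V := Finset.univ.filter (fun p => p ∈ A ∧ p ≠ u ∧ p ≠ v) with hAfin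
  set Kfin : Finset V :=
    ((Finset.range s).image ζ) ∪ ((Finset.range (t-1)).image (fun k => χ (k+1))) with hKfin
  have hmemA : ∀ p, p ∈ Afin ↔ (p ∈ A ∧ p ≠ u ∧ p ≠ v) := by
    intro p
    rw [hAfin]
    simp
  have hKC : ∀ i : Fin s, z i ∈ Kfin := by
    intro i
    rw [hKfin]
    apply Finset.mem_union_left
    apply Finset.mem_image.mpr
    exact ⟨(i : ℕ), Finset.mem_range.mpr i.isLt, hζi i⟩
  have hAKdisj : ∀ p ∈ Kfin, p ∉ Afin := by
    intro p hp hpA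
    rw [hmemA] at hpA
    rw [hKfin] at hp
    rcases Finset.mem_union.mp hp with h | h
    · obtain ⟨k, hk, rfl⟩ := Finset.mem_image.mp h
      have : ζ k ∈ A ∩ C := ⟨hpA.1, hζC k⟩
      rw [hAC] at this
      exact hpA.2.2 this
    · obtain ⟨k, hk, rfl⟩ := Finset.mem_image.mp h
      have : χ (k+1) ∈ A ∩ B := ⟨hpA.1, hχB (k+1)⟩
      rw [hAB] at this
      exact hpA.2.1 this
  -- injectivity / disjointness for the K index set
  have hKdisj : Disjoint ((Finset.range s).image ζ)
      ((Finset.range (t-1)).image (fun k => χ (k+1))) := by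
    rw [Finset.disjoint_left]
    intro a ha hb
    obtain ⟨k, hk, rfl⟩ := Finset.mem_image.mp ha
    obtain ⟨k', hk', he⟩ := Finset.mem_image.mp hb
    exact hBC' _ (he ▸ hχB (k'+1)) (hζC k)
  have hKinj1 : ∀ a ∈ Finset.range s, ∀ b ∈ Finset.range s, ζ a = ζ b → a = b := by
    intro a ha b hb h
    rw [Finset.mem_range] at ha hb
    rw [hζmk a ha, hζmk b hb] at h
    have := hzinj h
    rw [Fin.ext_iff] at this
    exact this
  have hKinj2 : ∀ a ∈ Finset.range (t-1), ∀ b ∈ Finset.range (t-1),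
      χ (a+1) = χ (b+1) → a = b := by
    intro a ha b hb h
    rw [Finset.mem_range] at ha hb
    have := hχinj (a+1) (b+1) (by omega) (by omega) h
    omega
  -- main per-vertex estimate
  have hmain : ∀ p, p ∈ A → p ≠ u → p ≠ v →
      (∑ k ∈ Finset.Ico s (t-1),
          ((1:ℝ)/((k + G.dist v p : ℕ) : ℝ) - 1/((k + 1 + G.dist u p : ℕ) : ℝ)))
        ≤ ∑ q ∈ Kfin, gv p q := by
    intro p hpA hpu hpv
    have hpB : p ∉ B := fun h => hpu (by have : p ∈ A ∩ B := ⟨hpA, h⟩; rwa [hAB] at this)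
    have hpC : p ∉ C := fun h => hpv (by have : p ∈ A ∩ C := ⟨hpA, h⟩; rwa [hAC] at this)
    set du := G.dist u p with hdu
    set dv := G.dist v p with hdv
    have hdu1 : 1 ≤ du := hG.pos_dist_of_ne (fun h => hpu h.symm)
    have hdv1 : 1 ≤ dv := hG.pos_dist_of_ne (fun h => hpv h.symm)
    have hdvu : dv ≤ 1 + du := by
      have h1 : G.dist v p ≤ G.dist v u + G.dist u p := hG.dist_triangle
      rw [hd_vu] at h1
      omega
    -- bounds for the pairs with C
    have hzlow : ∀ k : ℕ, ∀ hk : k < s, k + dv ≤ G.dist p (ζ k) := by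
      intro k hk
      rw [hζmk k hk]
      have h5 : G.dist p v + k ≤ G.dist p (z ⟨k, hk⟩) := hlowzC ⟨k, hk⟩ p hpC
      have h6 : G.dist p v = dv := SimpleGraph.dist_comm
      omega
    have hzup : ∀ k : ℕ, ∀ hk : k < s, G'.dist p (ζ k) ≤ k + 1 + du := by
      intro k hk
      have h1 : G'.dist p (ζ k) ≤ G'.dist p u + G'.dist u (ζ k) := hG'conn.dist_triangle
      have h2 : G'.dist u (ζ k) ≤ G'.dist u v + G'.dist v (ζ k) := hG'conn.dist_triangle
      have h3 : G'.dist v (ζ k) ≤ k := by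
        rw [hζmk k hk]
        exact hdist_vz' ⟨k, hk⟩
      have h4 : G'.dist p u ≤ du := by
        have h7 := (htrans p u hpC huC).1
        have h8 : G.dist p u = du := SimpleGraph.dist_comm
        omega
      have h5 : G'.dist u v = 1 := by rw [SimpleGraph.dist_comm]; exact hd'_vu
      omega
    have hzpos : ∀ k : ℕ, ∀ hk : k < s, 0 < G'.dist p (ζ k) := by
      intro k hk
      exact (hG'conn.preconnected p (ζ k)).pos_dist_of_ne (fun h => hpC (h ▸ hζC k))
    have hzposG : ∀ k : ℕ, ∀ hk : k < s, 0 < G.dist p (ζ k) := by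
      intro k hk
      exact hG.pos_dist_of_ne (fun h => hpC (h ▸ hζC k))
    -- the stepping stone c
    have hstep : ∃ c, c ∉ C ∧ G'.Adj y c ∧ G.dist c p + 1 = dv := by
      obtain ⟨w, hw⟩ := (hG.preconnected v p).exists_walk_length_eq_dist
      cases w with
      | nil => exact absurd rfl (fun h => hpv h.symm)
      | @cons _ c _ h w' =>
        have hlen : w'.length + 1 = dv := by
          rw [hdv, ← hw]
          simp [SimpleGraph.Walk.length_cons]
        have hca : G.dist c p ≤ dv - 1 := by
          have := SimpleGraph.dist_le w'
          omega
        have hca2 : dv ≤ 1 + G.dist c p := by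
          have htr : G.dist v p ≤ G.dist v c + G.dist c p := hG.dist_triangle
          have h1 : G.dist v c = 1 := SimpleGraph.dist_eq_one_iff_adj.mpr h
          omega
        have hcC : c ∉ C := by
          intro hcCmem
          obtain ⟨i, hic⟩ := hCz c hcCmem
          have hi0 : (i : ℕ) ≠ 0 := by
            intro h0
            have hzv : z i = v := by
              rw [← hz0]
              congr 1
              exact Fin.ext (by simp [h0])
            exact h.ne' (hic.symm.trans hzv)
          have h5 : G.dist p v + (i : ℕ) ≤ G.dist p (z i) := hlowzC i p hpC
          have h6 : G.dist p v = dv := SimpleGraph.dist_comm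
          have h7 : G.dist p (z i) = G.dist c p := by rw [hic, SimpleGraph.dist_comm]
          omega
        exact ⟨c, hcC, hrep c h hcC, by omega⟩
    obtain ⟨c, hcC, hyc, hcdv⟩ := hstep
    -- bounds for the pairs with the x-path
    have hxlow : ∀ k : ℕ, k < t-1 → (k + 1) + du ≤ G.dist p (χ (k+1)) := by
      intro k hk
      have hcut := HararyAux.dist_cut hBcl hpB (hχB (k+1)) (hG.preconnected p (χ (k+1)))
      have h1 : k+1 ≤ G.dist u (χ (k+1)) := hux_low (k+1) (by omega)
      have h2 : G.dist p u = du := SimpleGraph.dist_comm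
      omega
    have hxup : ∀ k : ℕ, k < t-1 → G'.dist p (χ (k+1)) ≤ k + dv := by
      intro k hk
      have h1 : G'.dist p (χ (k+1)) ≤ G'.dist p c + G'.dist c (χ (k+1)) := hG'conn.dist_triangle
      have h2 : G'.dist c (χ (k+1)) ≤ G'.dist c y + G'.dist y (χ (k+1)) := hG'conn.dist_triangle
      have h3 : G'.dist c y = 1 := SimpleGraph.dist_eq_one_iff_adj.mpr hyc.symm
      have h4 : G'.dist y (χ (k+1)) ≤ k := by
        have := hyx' (k+1) (by omega) (by omega)
        omega
      have h5 : G'.dist p c ≤ dv - 1 := by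
        have h6 := (htrans p c hpC hcC).1
        have h7 : G.dist p c = G.dist c p := SimpleGraph.dist_comm
        omega
      omega
    have hxposB : ∀ k : ℕ, k < t-1 → 0 < G'.dist p (χ (k+1)) := by
      intro k hk
      exact (hG'conn.preconnected p (χ (k+1))).pos_dist_of_ne (fun h => hpB (h ▸ hχB (k+1)))
    have hxposG : ∀ k : ℕ, k < t-1 → 0 < G.dist p (χ (k+1)) := by
      intro k hk
      exact hG.pos_dist_of_ne (fun h => hpB (h ▸ hχB (k+1)))
    -- split the sum over K
    have hsum1 : ∑ q ∈ Kfin, gv p q =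
        (∑ k ∈ Finset.range s, gv p (ζ k)) +
          (∑ k ∈ Finset.range (t-1), gv p (χ (k+1))) := by
      rw [hKfin, Finset.sum_union hKdisj, Finset.sum_image hKinj1, Finset.sum_image hKinj2]
    -- term-by-term bounds
    have hb1 : ∑ k ∈ Finset.range s,
        ((1:ℝ)/((k + 1 + du : ℕ) : ℝ) - 1/((k + dv : ℕ) : ℝ)) ≤
          ∑ k ∈ Finset.range s, gv p (ζ k) := by
      apply Finset.sum_le_sum
      intro k hk
      rw [Finset.mem_range] at hk
      have := HararyAux.one_div_sub_le (hzpos k hk) (hzup k hk)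
        (by omega : 0 < k + dv) (hzlow k hk)
      exact this
    have hb2 : ∑ k ∈ Finset.range (t-1),
        ((1:ℝ)/((k + dv : ℕ) : ℝ) - 1/((k + 1 + du : ℕ) : ℝ)) ≤
          ∑ k ∈ Finset.range (t-1), gv p (χ (k+1)) := by
      apply Finset.sum_le_sum
      intro k hk
      rw [Finset.mem_range] at hk
      have := HararyAux.one_div_sub_le (hxposB k hk) (hxup k hk)
        (by omega : 0 < k + 1 + du) (hxlow k hk)
      exact this
    have hsplitφ := Finset.sum_range_add_sum_Ico
      (fun k => ((1:ℝ)/((k + dv : ℕ) : ℝ) - 1/((k + 1 + du : ℕ) : ℝ)))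
      (show s ≤ t - 1 by omega)
    rw [hsum1]
    have hneg : ∑ k ∈ Finset.range s,
        ((1:ℝ)/((k + 1 + du : ℕ) : ℝ) - 1/((k + dv : ℕ) : ℝ)) =
        - ∑ k ∈ Finset.range s,
          ((1:ℝ)/((k + dv : ℕ) : ℝ) - 1/((k + 1 + du : ℕ) : ℝ)) := by
      rw [← Finset.sum_neg_distrib]
      apply Finset.sum_congr rfl
      intro k _
      ring
    rw [hneg] at hb1
    linarith
  -- nonnegativity of the inner sums
  have hdvu_gen : ∀ p, p ≠ u → G.dist v p ≤ 1 + G.dist u p := by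
    intro p hpu
    have h1 : G.dist v p ≤ G.dist v u + G.dist u p := hG.dist_triangle
    rw [hd_vu] at h1
    omega
  have hdv_pos : ∀ p, p ≠ v → 0 < G.dist v p :=
    fun p h => hG.pos_dist_of_ne (fun hh => h hh.symm)
  have hinner_nonneg : ∀ p ∈ Afin, 0 ≤ ∑ q ∈ Kfin, gv p q := by
    intro p hp
    rw [hmemA] at hp
    refine le_trans ?_ (hmain p hp.1 hp.2.1 hp.2.2)
    apply Finset.sum_nonneg
    intro k hk
    apply HararyAux.one_div_sub_nonneg
    · have := hdv_pos p hp.2.2; omega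
    · have := hdvu_gen p hp.2.1; omega
  obtain ⟨w₀, hw₀⟩ := hWne
  have hw₀m := hWmem w₀ hw₀
  have hw₀A : w₀ ∈ Afin := (hmemA w₀).mpr ⟨hw₀m.1, hw₀m.2.1, hw₀m.2.2⟩
  have hw₀du : G.dist u w₀ = 1 := by
    apply SimpleGraph.dist_eq_one_iff_adj.mpr
    have hmem : w₀ ∈ G.neighborSet u ∩ (A \ {v}) := by rw [hWu]; exact hw₀
    exact hmem.1
  have hw₀dv : G.dist v w₀ = 1 := by
    apply SimpleGraph.dist_eq_one_iff_adj.mpr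
    have hmem : w₀ ∈ G.neighborSet v ∩ (A \ {u}) := by rw [hWv]; exact hw₀
    exact hmem.1
  have hinner_pos : 0 < ∑ q ∈ Kfin, gv w₀ q := by
    refine lt_of_lt_of_le ?_ (hmain w₀ hw₀m.1 hw₀m.2.1 hw₀m.2.2)
    apply Finset.sum_pos
    · intro k hk
      rw [hw₀du, hw₀dv]
      apply HararyAux.one_div_sub_pos <;> omega
    · exact ⟨s, Finset.mem_Ico.mpr ⟨le_rfl, by omega⟩⟩
  -- the global sum
  set T : Finset (V × V) := Afin ×ˢ Kfin with hT
  set Tsw : Finset (V × V) := T.map ⟨Prod.swap, Prod.swap_injective⟩ with hTswdef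
  have hTdisj : Disjoint T Tsw := by
    rw [Finset.disjoint_left]
    intro pq hpq hpq'
    rw [hT, Finset.mem_product] at hpq
    rw [hTswdef, Finset.mem_map] at hpq'
    obtain ⟨ab, hab, habe⟩ := hpq'
    rw [hT, Finset.mem_product] at hab
    have h1 : pq.1 ∈ Kfin := by
      have he : ab.swap = pq := habe
      rw [← he]
      exact hab.2
    exact hAKdisj _ h1 hpq.1
  have hsumTsw : ∑ pq ∈ Tsw, gv pq.1 pq.2 = ∑ pq ∈ T, gv pq.1 pq.2 := by
    rw [hTswdef, Finset.sum_map]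
    apply Finset.sum_congr rfl
    intro pq _
    simp only [Function.Embedding.coeFn_mk, Prod.fst_swap, Prod.snd_swap]
    exact (hgvsymm pq.1 pq.2).symm
  have hsumT_pos : 0 < ∑ pq ∈ T, gv pq.1 pq.2 := by
    rw [hT, Finset.sum_product]
    exact Finset.sum_pos' hinner_nonneg ⟨w₀, hw₀A, hinner_pos⟩
  have hTU : T ∪ Tsw ⊆ Finset.univ ×ˢ Finset.univ := fun pq _ =>
    Finset.mem_product.mpr ⟨Finset.mem_univ _, Finset.mem_univ _⟩
  have hrest : ∀ pq ∈ Finset.univ ×ˢ Finset.univ, pq ∉ T ∪ Tsw → 0 ≤ gv pq.1 pq.2 := by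
    rintro ⟨p, q⟩ - hpq
    rw [Finset.mem_union] at hpq
    push_neg at hpq
    obtain ⟨h1, h2⟩ := hpq
    by_cases hpC : p ∈ C <;> by_cases hqC : q ∈ C
    · obtain ⟨i, rfl⟩ := hCz p hpC
      obtain ⟨j, rfl⟩ := hCz q hqC
      exact hgv_nonneg _ _ (hd'zz i j)
    · obtain ⟨i, rfl⟩ := hCz p hpC
      have hqB : q ∈ B := by
        rcases hcover' q with h | h | h
        · by_cases hqu : q = u
          · rw [hqu]; exact huB
          · by_cases hqv : q = v
            · exact absurd (hqv ▸ hvC) hqC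
            · exfalso
              apply h2
              rw [hTswdef, Finset.mem_map]
              refine ⟨(q, z i), ?_, rfl⟩
              rw [hT, Finset.mem_product]
              exact ⟨(hmemA q).mpr ⟨h, hqu, hqv⟩, hKC i⟩
        · exact h
        · exact absurd h hqC
      exact hgv_nonneg _ _ (hR2 i q hqB)
    · obtain ⟨j, rfl⟩ := hCz q hqC
      rw [hgvsymm]
      have hpB : p ∈ B := by
        rcases hcover' p with h | h | h
        · by_cases hpu : p = u
          · rw [hpu]; exact huB
          · by_cases hpv : p = v
            · exact absurd (hpv ▸ hvC) hpC
            · exfalso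
              apply h1
              rw [hT, Finset.mem_product]
              exact ⟨(hmemA p).mpr ⟨h, hpu, hpv⟩, hKC j⟩
        · exact h
        · exact absurd h hpC
      exact hgv_nonneg _ _ (hR2 j p hpB)
    · exact hgv_nonneg _ _ (htrans p q hpC hqC).1
  have htotal : ∑ pq ∈ T ∪ Tsw, gv pq.1 pq.2 ≤
      ∑ pq ∈ Finset.univ ×ˢ Finset.univ, gv pq.1 pq.2 :=
    Finset.sum_le_sum_of_subset_of_nonneg hTU (fun pq h h' => hrest pq h h')
  have hpos : 0 < ∑ pq ∈ Finset.univ ×ˢ Finset.univ, gv pq.1 pq.2 := by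
    refine lt_of_lt_of_le ?_ htotal
    rw [Finset.sum_union hTdisj, hsumTsw]
    linarith
  have hsum_eq : ∑ pq ∈ Finset.univ ×ˢ Finset.univ, gv pq.1 pq.2 =
      (∑ a : V, ∑ b : V, (1:ℝ)/(G'.dist a b : ℝ)) -
        (∑ a : V, ∑ b : V, (1:ℝ)/(G.dist a b : ℝ)) := by
    rw [Finset.sum_product, ← Finset.sum_sub_distrib]
    apply Finset.sum_congr rfl
    intro a _
    rw [← Finset.sum_sub_distrib]
  show hararyIndex G < hararyIndex G'
  unfold hararyIndex
  linarith
end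

section
/- Let G be a finite connected simple graph containing vertex subsets P and Q with |P| = p ≥ 3, |Q| = q ≥ 3 and P ∩ Q = {u}, such that P and Q each induce complete subgraphs of G. Suppose G is obtained from this union of two cliques sharing the vertex u by: attaching a path P_t (t ≥ 1) at a vertex w_1 ∈ P ∖ {u}, attaching a path P_s (s ≥ 1) at a vertex v_1 ∈ Q ∖ {u}, and, for each vertex x ∈ (P ∪ Q) ∖ {u, v_1, w_1}, possibly attaching a connected graph H_x meeting the rest of G only in the vertex x; assume t ≥ s. Let G′ be the graph obtained from G by deleting every edge v_1y with y ∈ Q ∖ {u, v_1} and adding every edge zy with z ∈ Q ∖ {v_1}, y ∈ P, z ≠ y, for which zy is not already an edge. Then H(G) < H(G′). -/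
open SimpleGraph

namespace HararyAux

variable {V : Type*}

/-- Lower bound on walk length from a cut vertex: any walk from `a ∈ S` to `b ∉ S`
has length at least `dist a x + dist x b`, when all edges leaving `S` do so at `x`. -/
lemma walk_cut_le {G : SimpleGraph V} (hc : G.Connected) {S : Set V} {x : V}
    (hcut : ∀ a b, G.Adj a b → a ∈ S → b ∉ S → a = x) :
    ∀ {a b : V} (p : G.Walk a b), a ∈ S → b ∉ S →
      G.dist a x + G.dist x b ≤ p.length := by
  intro a b p
  induction p with
  | nil => intro ha hb; exact absurd ha hb
  | @cons a c b h q ih =>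
    intro ha hb
    by_cases hcS : c ∈ S
    · have h1 : G.dist a x ≤ 1 + G.dist c x := by
        have := hc.dist_triangle (u := a) (v := c) (w := x)
        have hac : G.dist a c ≤ 1 := by
          have : G.dist a c = 1 := dist_eq_one_iff_adj.mpr h
          omega
        omega
      have h2 := ih hcS hb
      simp only [Walk.length_cons]
      omega
    · have hax : a = x := hcut a c h ha hcS
      have hxc : G.Adj x c := hax ▸ h
      have h1 : G.dist x b ≤ 1 + G.dist c b := by
        have ht := hc.dist_triangle (u := x) (v := c) (w := b)
        have hd1 : G.dist x c = 1 := dist_eq_one_iff_adj.mpr hxc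
        omega
      have h2 : G.dist c b ≤ q.length := dist_le q
      have h3 : G.dist a x = 0 := by rw [hax]; exact SimpleGraph.dist_self
      simp only [Walk.length_cons]
      omega

/-- Additivity of distance at a cut vertex. -/
lemma cut_dist {G : SimpleGraph V} (hc : G.Connected) {S : Set V} {x : V} (hx : x ∈ S)
    (hcut : ∀ a b, G.Adj a b → a ∈ S → b ∉ S → a = x)
    {a b : V} (ha : a ∈ S) (hb : b ∉ S) :
    G.dist a b = G.dist a x + G.dist x b := by
  refine le_antisymm (hc.dist_triangle) ?_
  obtain ⟨p, hp⟩ := hc.exists_walk_length_eq_dist a b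
  rw [← hp]
  exact walk_cut_le hc hcut p ha hb

/-- If two graphs agree inside `S` and `S` has a cut at `x` in `G₁`, then any `G₁`-walk
between two vertices of `S` is at least as long as the `G₂`-distance. -/
lemma walk_inside_le {G₁ G₂ : SimpleGraph V} (h2 : G₂.Connected) {S : Set V} {x : V}
    (hcut : ∀ a b, G₁.Adj a b → a ∈ S → b ∉ S → a = x)
    (hsame : ∀ a b, a ∈ S → b ∈ S → G₁.Adj a b → G₂.Adj a b) :
    ∀ {a b : V} (p : G₁.Walk a b), b ∈ S →
      ((a ∈ S → G₂.dist a b ≤ p.length) ∧ (a ∉ S → G₂.dist x b ≤ p.length)) := by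
  intro a b p
  induction p with
  | nil =>
    intro hb
    exact ⟨fun _ => by simp, fun ha => absurd hb ha⟩
  | @cons a c b h q ih =>
    intro hb
    obtain ⟨ih1, ih2⟩ := ih hb
    constructor
    · intro ha
      by_cases hcS : c ∈ S
      · have hadj2 : G₂.Adj a c := hsame a c ha hcS h
        have h1 : G₂.dist a c ≤ 1 := by
          have : G₂.dist a c = 1 := dist_eq_one_iff_adj.mpr hadj2
          omega
        have := h2.dist_triangle (u := a) (v := c) (w := b)
        have := ih1 hcS
        simp only [Walk.length_cons]
        omega
      · have hax : a = x := hcut a c h ha hcS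
        have h5 : G₂.dist a b ≤ q.length := hax ▸ ih2 hcS
        simp only [Walk.length_cons]
        omega
    · intro ha
      by_cases hcS : c ∈ S
      · have hcx : c = x := hcut c a h.symm hcS ha
        have h5 : G₂.dist x b ≤ q.length := hcx ▸ ih1 hcS
        simp only [Walk.length_cons]
        omega
      · have := ih2 hcS
        simp only [Walk.length_cons]
        omega

/-- If two connected graphs agree inside `S`, and `S` has a cut vertex `x` in both,
then their distances agree on `S`. -/
lemma dist_eq_of_agree_inside {G₁ G₂ : SimpleGraph V} (h1 : G₁.Connected)
    (h2 : G₂.Connected) {S : Set V} {x : V}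
    (hcut1 : ∀ a b, G₁.Adj a b → a ∈ S → b ∉ S → a = x)
    (hcut2 : ∀ a b, G₂.Adj a b → a ∈ S → b ∉ S → a = x)
    (hsame : ∀ a b, a ∈ S → b ∈ S → (G₁.Adj a b ↔ G₂.Adj a b))
    {a b : V} (ha : a ∈ S) (hb : b ∈ S) :
    G₁.dist a b = G₂.dist a b := by
  refine le_antisymm ?_ ?_
  · obtain ⟨p, hp⟩ := h2.exists_walk_length_eq_dist a b
    rw [← hp]
    exact (walk_inside_le h1 hcut2 (fun a b ha hb => (hsame a b ha hb).mpr) p hb).1 ha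
  · obtain ⟨p, hp⟩ := h1.exists_walk_length_eq_dist a b
    rw [← hp]
    exact (walk_inside_le h2 hcut1 (fun a b ha hb => (hsame a b ha hb).mp) p hb).1 ha

/-- Potential-function lower bound on distances. -/
lemma pot_le_dist {G : SimpleGraph V} (hc : G.Connected) (φ : V → ℤ)
    (hφ : ∀ a b, G.Adj a b → φ a ≤ φ b + 1) (a b : V) :
    φ a - φ b ≤ (G.dist a b : ℤ) := by
  obtain ⟨p, hp⟩ := hc.exists_walk_length_eq_dist a b
  rw [← hp]
  clear hp
  induction p with
  | nil => simp
  | @cons a c b h q ih =>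
    have := hφ a c h
    simp only [Walk.length_cons]
    push_cast
    omega

end HararyAux

namespace HararyAux2
open HararyAux

variable {V : Type*}

/-- Distance along an attached path: `dist (w j) (w 0) = j`. -/
lemma path_dist {G : SimpleGraph V} (hc : G.Connected) {t : ℕ} (ht : 0 < t)
    (w : Fin t → V) (hinj : Function.Injective w)
    (hpath : ∀ i j : Fin t, G.Adj (w i) (w j) ↔ ((i : ℕ) + 1 = (j : ℕ) ∨ (j : ℕ) + 1 = (i : ℕ)))
    (hcut : ∀ a b, G.Adj a b → a ∈ Set.range w → b ∉ Set.range w → a = w ⟨0, ht⟩) :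
    ∀ j : Fin t, G.dist (w j) (w ⟨0, ht⟩) = (j : ℕ) := by
  classical
  -- upper bound
  have hub : ∀ k (hk : k < t), G.dist (w ⟨k, hk⟩) (w ⟨0, ht⟩) ≤ k := by
    intro k
    induction k with
    | zero => intro hk; simp [SimpleGraph.dist_self]
    | succ m ihm =>
      intro hk
      have hm : m < t := by omega
      have hadj : G.Adj (w ⟨m + 1, hk⟩) (w ⟨m, hm⟩) := by
        rw [hpath]; right; simp
      have h1 : G.dist (w ⟨m + 1, hk⟩) (w ⟨m, hm⟩) = 1 := dist_eq_one_iff_adj.mpr hadj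
      have := hc.dist_triangle (u := w ⟨m + 1, hk⟩) (v := w ⟨m, hm⟩) (w := w ⟨0, ht⟩)
      have := ihm hm
      omega
  -- potential function
  set φ : V → ℤ := fun v => if h : ∃ i, w i = v then ((Classical.choose h : Fin t) : ℤ) else 0
    with hφdef
  have hφw : ∀ i : Fin t, φ (w i) = (i : ℤ) := by
    intro i
    have hex : ∃ j, w j = w i := ⟨i, rfl⟩
    have : Classical.choose hex = i := hinj (Classical.choose_spec hex)
    simp only [hφdef, dif_pos hex, this]
  have hφnn : ∀ v, 0 ≤ φ v := by
    intro v
    by_cases h : ∃ i, w i = v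
    · simp only [hφdef, dif_pos h]; positivity
    · simp only [hφdef, dif_neg h]; exact le_refl 0
  have hφ0 : ∀ v, v ∉ Set.range w → φ v = 0 := by
    intro v hv
    have h : ¬ ∃ i, w i = v := by simpa [Set.mem_range] using hv
    simp only [hφdef, dif_neg h]
  have hlip : ∀ a b, G.Adj a b → φ a ≤ φ b + 1 := by
    intro a b hab
    by_cases haR : a ∈ Set.range w
    · obtain ⟨i, rfl⟩ := haR
      by_cases hbR : b ∈ Set.range w
      · obtain ⟨j, rfl⟩ := hbR
        rw [hφw, hφw]
        rcases (hpath i j).mp hab with h | h <;> omega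
      · have ha0 : w i = w ⟨0, ht⟩ := hcut (w i) b hab ⟨i, rfl⟩ hbR
        have hi0 : i = ⟨0, ht⟩ := hinj ha0
        rw [hi0, hφw]
        have := hφnn b
        simp only [Fin.val_mk, Nat.cast_zero]  -- φ (w 0) = 0 handled
        omega
    · rw [hφ0 a haR]
      have := hφnn b
      omega
  intro j
  have hlb := pot_le_dist hc φ hlip (w j) (w ⟨0, ht⟩)
  rw [hφw, hφw] at hlb
  have := hub j j.2
  have hj : (⟨(j : ℕ), j.2⟩ : Fin t) = j := by ext; rfl
  rw [hj] at this
  simp only [Fin.val_mk, Nat.cast_zero, sub_zero] at hlb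
  omega

end HararyAux2

/-- Lemma 2.4 of the paper.  `G` is connected and is built from two cliques `P` (of size
`p ≥ 3`) and `Q` (of size `q ≥ 3`) sharing exactly the vertex `u`, by attaching a path
`P_t` at `w1 ∈ P \ {u}`, a path `P_s` at `v1 ∈ Q \ {u}` (with `t ≥ s ≥ 1`), and possibly
attaching at each other vertex `x ∈ (P ∪ Q) \ {u, v1, w1}` a connected graph `A x`
meeting the rest of `G` only in `x`.  Deleting the edges of the clique `Q` incident with
`v1` except `v1 u`, and adding all possible edges between `Q \ {v1}` and `P`, strictly
increases the Harary index. -/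
theorem harary_lt_merge_cliques {V : Type*} [Fintype V] (G : SimpleGraph V)
    (hG : G.Connected) (P Q : Set V) (u w1 v1 : V) (p q : ℕ)
    (hp : 3 ≤ p) (hq : 3 ≤ q) (hPcard : P.ncard = p) (hQcard : Q.ncard = q)
    (hPQ : P ∩ Q = {u})
    (hPclique : G.IsClique P) (hQclique : G.IsClique Q)
    (hw1P : w1 ∈ P) (hw1u : w1 ≠ u) (hv1Q : v1 ∈ Q) (hv1u : v1 ≠ u)
    (t s : ℕ) (hs : 1 ≤ s) (hts : s ≤ t)
    (w : Fin t → V) (hwinj : Function.Injective w) (hw0 : w ⟨0, by omega⟩ = w1)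
    (z : Fin s → V) (hzinj : Function.Injective z) (hz0 : z ⟨0, by omega⟩ = v1)
    (hwPQ : Set.range w ∩ (P ∪ Q) = {w1})
    (hzPQ : Set.range z ∩ (P ∪ Q) = {v1})
    (hwz : Set.range w ∩ Set.range z = ∅)
    (hwpath : ∀ i j : Fin t,
      G.Adj (w i) (w j) ↔ ((i : ℕ) + 1 = (j : ℕ) ∨ (j : ℕ) + 1 = (i : ℕ)))
    (hzpath : ∀ i j : Fin s,
      G.Adj (z i) (z j) ↔ ((i : ℕ) + 1 = (j : ℕ) ∨ (j : ℕ) + 1 = (i : ℕ)))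
    (R : Set V) (hR : R = (P ∪ Q) \ {u, v1, w1})
    (A : V → Set V)
    (hAx : ∀ x ∈ R, x ∈ A x)
    (hAconn : ∀ x ∈ R, (G.induce (A x)).Connected)
    (hAPQ : ∀ x ∈ R, A x ∩ (P ∪ Q) = {x})
    (hApath : ∀ x ∈ R, A x ∩ (Set.range w ∪ Set.range z) = ∅)
    (hAdisj : ∀ x ∈ R, ∀ y ∈ R, x ≠ y → A x ∩ A y = ∅)
    (hcover : Set.univ = P ∪ Q ∪ Set.range w ∪ Set.range z ∪ ⋃ x ∈ R, A x)
    (hedge : ∀ a b, G.Adj a b →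
      (a ∈ P ∧ b ∈ P) ∨ (a ∈ Q ∧ b ∈ Q) ∨
      (∃ i j : Fin t, a = w i ∧ b = w j) ∨
      (∃ i j : Fin s, a = z i ∧ b = z j) ∨
      (∃ x ∈ R, a ∈ A x ∧ b ∈ A x)) :
    hararyIndex G <
      hararyIndex ((G.deleteEdges {e | ∃ y ∈ Q \ {u, v1}, e = s(v1, y)}) ⊔
        SimpleGraph.fromEdgeSet {e | ∃ a ∈ Q \ {v1}, ∃ b ∈ P, e = s(a, b)}) := by
  classical
  -- abbreviations for the two modified edge sets and the new graph
  set D : Set (Sym2 V) := {e | ∃ y ∈ Q \ {u, v1}, e = s(v1, y)} with hD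
  set E : Set (Sym2 V) := {e | ∃ a ∈ Q \ {v1}, ∃ b ∈ P, e = s(a, b)} with hE
  set G' : SimpleGraph V := (G.deleteEdges D) ⊔ SimpleGraph.fromEdgeSet E with hG'def
  have hG'adj : ∀ a b : V, G'.Adj a b ↔ ((G.Adj a b ∧ s(a, b) ∉ D) ∨ (s(a, b) ∈ E ∧ a ≠ b)) := by
    intro a b
    simp [hG'def, SimpleGraph.sup_adj, SimpleGraph.deleteEdges_adj, SimpleGraph.fromEdgeSet_adj]
  have hDmem : ∀ a b : V, s(a, b) ∈ D ↔ ∃ y, (y ∈ Q ∧ y ≠ u ∧ y ≠ v1) ∧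
      ((a = v1 ∧ b = y) ∨ (a = y ∧ b = v1)) := by
    intro a b
    simp only [hD, Set.mem_setOf_eq, Set.mem_diff, Set.mem_insert_iff, Set.mem_singleton_iff]
    constructor
    · rintro ⟨y, ⟨hyQ, hy⟩, heq⟩
      exact ⟨y, ⟨hyQ, fun h => hy (Or.inl h), fun h => hy (Or.inr h)⟩, by
        rw [Sym2.eq_iff] at heq; tauto⟩
    · rintro ⟨y, ⟨hyQ, hyu, hyv⟩, hor⟩
      exact ⟨y, ⟨hyQ, by tauto⟩, by rw [Sym2.eq_iff]; tauto⟩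
  have hEmem : ∀ a b : V, s(a, b) ∈ E ↔ ∃ c d, (c ∈ Q ∧ c ≠ v1) ∧ d ∈ P ∧
      ((a = c ∧ b = d) ∨ (a = d ∧ b = c)) := by
    intro a b
    simp only [hE, Set.mem_setOf_eq, Set.mem_diff, Set.mem_singleton_iff]
    constructor
    · rintro ⟨c, ⟨hcQ, hc⟩, d, hdP, heq⟩
      exact ⟨c, d, ⟨hcQ, hc⟩, hdP, by rw [Sym2.eq_iff] at heq; tauto⟩
    · rintro ⟨c, d, ⟨hcQ, hc⟩, hdP, hor⟩
      exact ⟨c, ⟨hcQ, hc⟩, d, hdP, by rw [Sym2.eq_iff]; tauto⟩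
  -- basic membership facts
  have huPQ : u ∈ P ∩ Q := hPQ ▸ rfl
  have huP : u ∈ P := huPQ.1
  have huQ : u ∈ Q := huPQ.2
  have hv1P : v1 ∉ P := fun h => hv1u (by
    have : v1 ∈ P ∩ Q := ⟨h, hv1Q⟩
    rwa [hPQ] at this)
  have hw1Q : w1 ∉ Q := fun h => hw1u (by
    have : w1 ∈ P ∩ Q := ⟨hw1P, h⟩
    rwa [hPQ] at this)
  have hw1v1 : w1 ≠ v1 := fun h => hw1Q (h ▸ hv1Q)
  have hRsub : R ⊆ P ∪ Q := by rw [hR]; exact Set.diff_subset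
  have huR : u ∉ R := by rw [hR]; rintro ⟨-, h⟩; exact h (Or.inl rfl)
  have hv1R : v1 ∉ R := by rw [hR]; rintro ⟨-, h⟩; exact h (Or.inr (Or.inl rfl))
  have hw1R : w1 ∉ R := by rw [hR]; rintro ⟨-, h⟩; exact h (Or.inr (Or.inr rfl))
  have h0t : 0 < t := lt_of_lt_of_le hs hts
  have hw1r : w1 ∈ Set.range w := ⟨⟨0, h0t⟩, hw0⟩
  have hv1r : v1 ∈ Set.range z := ⟨⟨0, hs⟩, hz0⟩
  have hwmem : ∀ {a : V}, a ∈ Set.range w → a ∈ P ∪ Q → a = w1 := by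
    intro a h1 h2
    have : a ∈ Set.range w ∩ (P ∪ Q) := ⟨h1, h2⟩
    rwa [hwPQ] at this
  have hzmem : ∀ {a : V}, a ∈ Set.range z → a ∈ P ∪ Q → a = v1 := by
    intro a h1 h2
    have : a ∈ Set.range z ∩ (P ∪ Q) := ⟨h1, h2⟩
    rwa [hzPQ] at this
  have hAmem : ∀ {x : V}, x ∈ R → ∀ {a : V}, a ∈ A x → a ∈ P ∪ Q → a = x := by
    intro x hx a h1 h2
    have : a ∈ A x ∩ (P ∪ Q) := ⟨h1, h2⟩
    rwa [hAPQ x hx] at this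
  have hAw : ∀ {x : V}, x ∈ R → ∀ {a : V}, a ∈ A x → a ∉ Set.range w := by
    intro x hx a h1 h2
    have : a ∈ A x ∩ (Set.range w ∪ Set.range z) := ⟨h1, Or.inl h2⟩
    rw [hApath x hx] at this
    exact this
  have hAz : ∀ {x : V}, x ∈ R → ∀ {a : V}, a ∈ A x → a ∉ Set.range z := by
    intro x hx a h1 h2
    have : a ∈ A x ∩ (Set.range w ∪ Set.range z) := ⟨h1, Or.inr h2⟩
    rw [hApath x hx] at this
    exact this
  have hunw : u ∉ Set.range w := fun h => hw1u (hwmem h (Or.inl huP)).symm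
  have hunz : u ∉ Set.range z := fun h => hv1u (hzmem h (Or.inl huP)).symm
  have hwz' : ∀ {a : V}, a ∈ Set.range w → a ∉ Set.range z := by
    intro a h1 h2
    have : a ∈ Set.range w ∩ Set.range z := ⟨h1, h2⟩
    rw [hwz] at this
    exact this
  -- no edges between `P \ {u}` and `Q \ {u}`
  have hnoPQ : ∀ a b : V, a ∈ P → b ∈ Q → a ≠ u → b ≠ u → ¬ G.Adj a b := by
    intro a b haP hbQ hau hbu hab
    rcases hedge a b hab with ⟨h1, h2⟩ | ⟨h1, h2⟩ | ⟨i, j, rfl, rfl⟩ | ⟨i, j, rfl, rfl⟩ |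
        ⟨x, hx, h1, h2⟩
    · have : b ∈ P ∩ Q := ⟨h2, hbQ⟩
      rw [hPQ] at this; exact hbu this
    · have : a ∈ P ∩ Q := ⟨haP, h1⟩
      rw [hPQ] at this; exact hau this
    · have e1 : w i = w1 := hwmem ⟨i, rfl⟩ (Or.inl haP)
      have e2 : w j = w1 := hwmem ⟨j, rfl⟩ (Or.inr hbQ)
      exact hab.ne (e1.trans e2.symm)
    · have e1 : z i = v1 := hzmem ⟨i, rfl⟩ (Or.inl haP)
      have e2 : z j = v1 := hzmem ⟨j, rfl⟩ (Or.inr hbQ)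
      exact hab.ne (e1.trans e2.symm)
    · have e1 : a = x := hAmem hx h1 (Or.inl haP)
      have e2 : b = x := hAmem hx h2 (Or.inr hbQ)
      exact hab.ne (e1.trans e2.symm)
  -- the branch decomposition
  set B : V → Set V := fun x =>
    if x = w1 then Set.range w else if x = v1 then Set.range z
    else if x ∈ R then A x else {x} with hBdef
  have hBw1 : B w1 = Set.range w := by simp [hBdef]
  have hBv1 : B v1 = Set.range z := by
    simp [hBdef, Ne.symm hw1v1]
  have hBR : ∀ x ∈ R, B x = A x := by
    intro x hx
    have h1 : x ≠ w1 := fun h => hw1R (h ▸ hx)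
    have h2 : x ≠ v1 := fun h => hv1R (h ▸ hx)
    simp [hBdef, h1, h2, hx]
  have hBu : B u = {u} := by
    simp [hBdef, Ne.symm hw1u, Ne.symm hv1u, huR]
  have hclass : ∀ x, x ∈ P ∪ Q → x = u ∨ x = v1 ∨ x = w1 ∨ x ∈ R := by
    intro x hx
    by_cases h1 : x = u
    · exact Or.inl h1
    by_cases h2 : x = v1
    · exact Or.inr (Or.inl h2)
    by_cases h3 : x = w1
    · exact Or.inr (Or.inr (Or.inl h3))
    refine Or.inr (Or.inr (Or.inr ?_))
    rw [hR]
    refine ⟨hx, ?_⟩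
    simp only [Set.mem_insert_iff, Set.mem_singleton_iff]
    tauto
  have hBself : ∀ x ∈ P ∪ Q, x ∈ B x := by
    intro x hx
    rcases hclass x hx with rfl | rfl | rfl | h
    · rw [hBu]; rfl
    · rw [hBv1]; exact hv1r
    · rw [hBw1]; exact hw1r
    · rw [hBR x h]; exact hAx x h
  have hBcore : ∀ x ∈ P ∪ Q, ∀ a, a ∈ B x → a ∈ P ∪ Q → a = x := by
    intro x hx a ha haPQ
    rcases hclass x hx with rfl | rfl | rfl | h
    · rw [hBu] at ha; exact ha
    · rw [hBv1] at ha; exact hzmem ha haPQ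
    · rw [hBw1] at ha; exact hwmem ha haPQ
    · rw [hBR x h] at ha; exact hAmem h ha haPQ
  have hBdisj : ∀ x ∈ P ∪ Q, ∀ y ∈ P ∪ Q, x ≠ y → ∀ a, a ∈ B x → a ∈ B y → False := by
    have key : ∀ x ∈ P ∪ Q, ∀ a, a ∈ B x → a ∈ P ∪ Q → a = x := hBcore
    intro x hx y hy hxy a hax hay
    rcases hclass x hx with rfl | rfl | rfl | h <;> rcases hclass y hy with rfl | rfl | rfl | h'
    · exact hxy rfl
    · rw [hBu] at hax
      rw [hBv1] at hay
      exact hunz (hax ▸ hay)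
    · rw [hBu] at hax
      rw [hBw1] at hay
      exact hunw (hax ▸ hay)
    · rw [hBu] at hax
      rw [hBR y h'] at hay
      exact huR ((hAmem h' (hax ▸ hay) (Or.inl huP)) ▸ h')
    · rw [hBu] at hay
      rw [hBv1] at hax
      exact hunz (hay ▸ hax)
    · exact hxy rfl
    · rw [hBv1] at hax
      rw [hBw1] at hay
      exact hwz' hay hax
    · rw [hBv1] at hax
      rw [hBR y h'] at hay
      exact hAz h' hay hax
    · rw [hBu] at hay
      rw [hBw1] at hax
      exact hunw (hay ▸ hax)
    · rw [hBv1] at hay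
      rw [hBw1] at hax
      exact hwz' hax hay
    · exact hxy rfl
    · rw [hBw1] at hax
      rw [hBR y h'] at hay
      exact hAw h' hay hax
    · rw [hBu] at hay
      rw [hBR x h] at hax
      exact huR ((hAmem h (hay ▸ hax) (Or.inl huP)) ▸ h)
    · rw [hBv1] at hay
      rw [hBR x h] at hax
      exact hAz h hax hay
    · rw [hBw1] at hay
      rw [hBR x h] at hax
      exact hAw h hax hay
    · rw [hBR x h] at hax
      rw [hBR y h'] at hay
      have : a ∈ A x ∩ A y := ⟨hax, hay⟩
      rw [hAdisj x h y h' hxy] at this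
      exact this
  have hcover' : ∀ a : V, ∃ x, (x ∈ P ∪ Q) ∧ a ∈ B x := by
    intro a
    have ha : a ∈ P ∪ Q ∪ Set.range w ∪ Set.range z ∪ ⋃ x ∈ R, A x := by
      rw [← hcover]; exact Set.mem_univ a
    rcases ha with ((hPQ' | hw') | hz') | hA'
    · rcases hclass a hPQ' with h | h | h | h
      · exact ⟨u, Or.inl huP, by rw [hBu]; exact h⟩
      · exact ⟨v1, Or.inr hv1Q, by rw [hBv1, h]; exact hv1r⟩
      · exact ⟨w1, Or.inl hw1P, by rw [hBw1, h]; exact hw1r⟩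
      · exact ⟨a, hPQ', by rw [hBR a h]; exact hAx a h⟩
    · exact ⟨w1, Or.inl hw1P, by rw [hBw1]; exact hw'⟩
    · exact ⟨v1, Or.inr hv1Q, by rw [hBv1]; exact hz'⟩
    · simp only [Set.mem_iUnion] at hA'
      obtain ⟨x, hx, hax⟩ := hA'
      exact ⟨x, hRsub hx, by rw [hBR x hx]; exact hax⟩
  -- the gate of a vertex
  set gate : V → V := fun a => Classical.choose (hcover' a) with hgatedef
  have hgatePQ : ∀ a, gate a ∈ P ∪ Q := fun a => (Classical.choose_spec (hcover' a)).1
  have hgateB : ∀ a, a ∈ B (gate a) := fun a => (Classical.choose_spec (hcover' a)).2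
  have hgate_eq : ∀ a x, x ∈ P ∪ Q → a ∈ B x → gate a = x := by
    intro a x hx haB
    by_contra hne
    exact hBdisj _ (hgatePQ a) _ hx hne a (hgateB a) haB
  have hgate_core : ∀ x ∈ P ∪ Q, gate x = x := fun x hx => hgate_eq x x hx (hBself x hx)
  have hgate_w : ∀ i : Fin t, gate (w i) = w1 :=
    fun i => hgate_eq _ w1 (Or.inl hw1P) (by rw [hBw1]; exact ⟨i, rfl⟩)
  have hgate_z : ∀ i : Fin s, gate (z i) = v1 :=
    fun i => hgate_eq _ v1 (Or.inr hv1Q) (by rw [hBv1]; exact ⟨i, rfl⟩)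
  set n : V → ℕ := fun a => G.dist a (gate a) with hndef
  -- cut conditions
  have hcutG : ∀ x ∈ P ∪ Q, ∀ a b : V, G.Adj a b → a ∈ B x → b ∉ B x → a = x := by
    intro x hx a b hab ha hb
    rcases hedge a b hab with ⟨h1, h2⟩ | ⟨h1, h2⟩ | ⟨i, j, rfl, rfl⟩ | ⟨i, j, rfl, rfl⟩ |
        ⟨y, hy, h1, h2⟩
    · exact hBcore x hx a ha (Or.inl h1)
    · exact hBcore x hx a ha (Or.inr h1)
    · by_cases hxw : x = w1
      · subst hxw
        rw [hBw1] at hb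
        exact absurd ⟨j, rfl⟩ hb
      · exact absurd (hBw1 ▸ (⟨i, rfl⟩ : w i ∈ Set.range w))
          (fun hmem => hBdisj x hx w1 (Or.inl hw1P) hxw (w i) ha hmem)
    · by_cases hxz : x = v1
      · subst hxz
        rw [hBv1] at hb
        exact absurd ⟨j, rfl⟩ hb
      · exact absurd (hBv1 ▸ (⟨i, rfl⟩ : z i ∈ Set.range z))
          (fun hmem => hBdisj x hx v1 (Or.inr hv1Q) hxz (z i) ha hmem)
    · by_cases hxy : x = y
      · subst hxy
        rw [← hBR x hy] at h2
        exact absurd h2 hb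
      · exact absurd ((hBR y hy) ▸ h1)
          (fun hmem => hBdisj x hx y (hRsub hy) hxy a ha hmem)
  -- G' is connected
  have hadj_v1u : G'.Adj v1 u := by
    rw [hG'adj]
    left
    refine ⟨hQclique hv1Q huQ hv1u, ?_⟩
    rw [hDmem]
    rintro ⟨y, ⟨hyQ, hyu, hyv⟩, ⟨-, rfl⟩ | ⟨rfl, h2⟩⟩
    · exact hyu rfl
    · exact hyv rfl
  have hadj_uy : ∀ y, y ∈ Q → y ≠ u → y ≠ v1 → G'.Adj u y := by
    intro y hyQ hyu hyv
    rw [hG'adj]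
    left
    refine ⟨hQclique huQ hyQ (Ne.symm hyu), ?_⟩
    rw [hDmem]
    rintro ⟨y', ⟨hy'Q, hy'u, hy'v⟩, ⟨rfl, -⟩ | ⟨-, rfl⟩⟩
    · exact hv1u rfl
    · exact hyv rfl
  have hG'reach : ∀ a b : V, G.Adj a b → G'.Reachable a b := by
    intro a b hab
    by_cases hmem : s(a, b) ∈ D
    · rw [hDmem] at hmem
      obtain ⟨y, ⟨hyQ, hyu, hyv⟩, hor⟩ := hmem
      have key : G'.Reachable v1 y :=
        (hadj_v1u.reachable).trans (hadj_uy y hyQ hyu hyv).reachable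
      rcases hor with ⟨e1, e2⟩ | ⟨e1, e2⟩
      · rw [e1, e2]; exact key
      · rw [e1, e2]; exact key.symm
    · exact ((hG'adj a b).mpr (Or.inl ⟨hab, hmem⟩)).reachable
  have hG'c : G'.Connected := by
    have hwalk : ∀ {a b : V} (_ : G.Walk a b), G'.Reachable a b := by
      intro a b p
      induction p with
      | nil => exact Reachable.refl _
      | cons h q ih => exact (hG'reach _ _ h).trans ih
    rw [SimpleGraph.connected_iff]
    refine ⟨fun a b => ?_, hG.nonempty⟩
    obtain ⟨p⟩ := hG.preconnected a b
    exact hwalk p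
  have hcutG' : ∀ x ∈ P ∪ Q, ∀ a b : V, G'.Adj a b → a ∈ B x → b ∉ B x → a = x := by
    intro x hx a b hab ha hb
    rcases (hG'adj a b).mp hab with ⟨hGab, -⟩ | ⟨hmemE, -⟩
    · exact hcutG x hx a b hGab ha hb
    · rw [hEmem] at hmemE
      obtain ⟨c, d, ⟨hcQ, -⟩, hdP, ⟨e1, -⟩ | ⟨e1, -⟩⟩ := hmemE
      · exact hBcore x hx _ ha (Or.inr (e1 ▸ hcQ))
      · exact hBcore x hx _ ha (Or.inl (e1 ▸ hdP))
  -- inside a branch, G and G' agree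
  have hsame : ∀ x ∈ P ∪ Q, ∀ a b : V, a ∈ B x → b ∈ B x → (G.Adj a b ↔ G'.Adj a b) := by
    intro x hx a b ha hb
    constructor
    · intro hab
      rw [hG'adj]
      left
      refine ⟨hab, ?_⟩
      rw [hDmem]
      rintro ⟨y, ⟨hyQ, hyu, hyv⟩, ⟨e1, e2⟩ | ⟨e1, e2⟩⟩
      · have hx1 : v1 = x := hBcore x hx v1 (e1 ▸ ha) (Or.inr hv1Q)
        have hb2 : b ∈ Set.range z := by rw [← hBv1, hx1]; exact hb
        exact hyv (hzmem (e2 ▸ hb2) (Or.inr hyQ))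
      · have hx1 : v1 = x := hBcore x hx v1 (e2 ▸ hb) (Or.inr hv1Q)
        have ha2 : a ∈ Set.range z := by rw [← hBv1, hx1]; exact ha
        exact hyv (hzmem (e1 ▸ ha2) (Or.inr hyQ))
    · intro hab
      rcases (hG'adj a b).mp hab with ⟨hGab, -⟩ | ⟨hmemE, hne⟩
      · exact hGab
      · rw [hEmem] at hmemE
        obtain ⟨c, d, ⟨hcQ, -⟩, hdP, ⟨e1, e2⟩ | ⟨e1, e2⟩⟩ := hmemE
        · have f1 : a = x := hBcore x hx a ha (Or.inr (e1 ▸ hcQ))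
          have f2 : b = x := hBcore x hx b hb (Or.inl (e2 ▸ hdP))
          exact absurd (f1.trans f2.symm) hne
        · have f1 : a = x := hBcore x hx a ha (Or.inl (e1 ▸ hdP))
          have f2 : b = x := hBcore x hx b hb (Or.inr (e2 ▸ hcQ))
          exact absurd (f1.trans f2.symm) hne
  have hsameDist : ∀ x ∈ P ∪ Q, ∀ a b : V, a ∈ B x → b ∈ B x → G.dist a b = G'.dist a b :=
    fun x hx a b ha hb => HararyAux.dist_eq_of_agree_inside hG hG'c
      (hcutG x hx) (hcutG' x hx) (hsame x hx) ha hb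
  have hn' : ∀ a : V, G'.dist a (gate a) = n a :=
    fun a => (hsameDist (gate a) (hgatePQ a) a (gate a) (hgateB a)
      (hBself _ (hgatePQ a))).symm
  -- master distance formulas across branches
  have hmaster : ∀ a b : V, gate a ≠ gate b →
      (G.dist a b = n a + G.dist (gate a) (gate b) + n b ∧
       G'.dist a b = n a + G'.dist (gate a) (gate b) + n b) := by
    intro a b hne
    have hbx : b ∉ B (gate a) := fun h => hne (hgate_eq b (gate a) (hgatePQ a) h).symm
    have hxy : gate a ∉ B (gate b) := by
      intro h
      have := hgate_eq (gate a) (gate b) (hgatePQ b) h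
      rw [hgate_core (gate a) (hgatePQ a)] at this
      exact hne this
    constructor
    · have s1 : G.dist a b = G.dist a (gate a) + G.dist (gate a) b :=
        HararyAux.cut_dist hG (hBself _ (hgatePQ a)) (hcutG _ (hgatePQ a)) (hgateB a) hbx
      have s2 : G.dist b (gate a) = G.dist b (gate b) + G.dist (gate b) (gate a) :=
        HararyAux.cut_dist hG (hBself _ (hgatePQ b)) (hcutG _ (hgatePQ b)) (hgateB b) hxy
      have c1 : G.dist (gate a) b = G.dist b (gate a) := SimpleGraph.dist_comm
      have c2 : G.dist (gate b) (gate a) = G.dist (gate a) (gate b) := SimpleGraph.dist_comm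
      have hna : n a = G.dist a (gate a) := rfl
      have hnb : n b = G.dist b (gate b) := rfl
      omega
    · have s1 : G'.dist a b = G'.dist a (gate a) + G'.dist (gate a) b :=
        HararyAux.cut_dist hG'c (hBself _ (hgatePQ a)) (hcutG' _ (hgatePQ a)) (hgateB a) hbx
      have s2 : G'.dist b (gate a) = G'.dist b (gate b) + G'.dist (gate b) (gate a) :=
        HararyAux.cut_dist hG'c (hBself _ (hgatePQ b)) (hcutG' _ (hgatePQ b)) (hgateB b) hxy
      have c1 : G'.dist (gate a) b = G'.dist b (gate a) := SimpleGraph.dist_comm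
      have c2 : G'.dist (gate b) (gate a) = G'.dist (gate a) (gate b) := SimpleGraph.dist_comm
      have hna := hn' a
      have hnb := hn' b
      omega
  -- distances between core vertices in G
  have hdist2 : ∀ (H : SimpleGraph V), H.Connected → ∀ a b : V, a ≠ b → ¬H.Adj a b →
      ∀ c : V, H.Adj a c → H.Adj c b → H.dist a b = 2 := by
    intro H hc a b hne hnadj c h1 h2
    have hub : H.dist a b ≤ 2 := by
      have ht := hc.dist_triangle (u := a) (v := c) (w := b)
      have e1 : H.dist a c = 1 := dist_eq_one_iff_adj.mpr h1
      have e2 : H.dist c b = 1 := dist_eq_one_iff_adj.mpr h2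
      omega
    have h0 : 0 < H.dist a b := hc.pos_dist_of_ne hne
    have h1' : H.dist a b ≠ 1 := fun h => hnadj (dist_eq_one_iff_adj.mp h)
    omega
  have hcliqueDist : ∀ a b : V, a ≠ b → ((a ∈ P ∧ b ∈ P) ∨ (a ∈ Q ∧ b ∈ Q)) →
      G.dist a b = 1 := by
    rintro a b hne (⟨h1, h2⟩ | ⟨h1, h2⟩)
    · exact dist_eq_one_iff_adj.mpr (hPclique h1 h2 hne)
    · exact dist_eq_one_iff_adj.mpr (hQclique h1 h2 hne)
  have hadjU : ∀ x, x ∈ P ∪ Q → x ≠ u → G.Adj x u := by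
    rintro x (hx | hx) hxu
    · exact hPclique hx huP hxu
    · exact hQclique hx huQ hxu
  have hcrossDist : ∀ a b : V, a ∈ P → b ∈ Q → a ≠ u → b ≠ u → G.dist a b = 2 := by
    intro a b haP hbQ hau hbu
    have hne : a ≠ b := by
      rintro rfl
      have : a ∈ P ∩ Q := ⟨haP, hbQ⟩
      rw [hPQ] at this
      exact hau this
    exact hdist2 G hG a b hne (hnoPQ a b haP hbQ hau hbu) u
      (hadjU a (Or.inl haP) hau) ((hadjU b (Or.inr hbQ) hbu).symm)
  -- distances between core vertices in G'
  have hK'adj : ∀ x, x ∈ P ∪ Q → ∀ y, y ∈ P ∪ Q → x ≠ y → x ≠ v1 → y ≠ v1 →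
      G'.Adj x y := by
    intro x hx y hy hxy hxv yv
    rw [hG'adj]
    by_cases hcl : (x ∈ P ∧ y ∈ P) ∨ (x ∈ Q ∧ y ∈ Q)
    · left
      refine ⟨?_, ?_⟩
      · rcases hcl with ⟨h1, h2⟩ | ⟨h1, h2⟩
        · exact hPclique h1 h2 hxy
        · exact hQclique h1 h2 hxy
      · rw [hDmem]
        rintro ⟨y', ⟨-, -, hy'v⟩, ⟨e1, -⟩ | ⟨-, e2⟩⟩
        · exact hxv e1
        · exact yv e2
    · right
      refine ⟨?_, hxy⟩
      rw [hEmem]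
      rcases hx with hxP | hxQ <;> rcases hy with hyP | hyQ
      · exact absurd (Or.inl ⟨hxP, hyP⟩) hcl
      · exact ⟨y, x, ⟨hyQ, yv⟩, hxP, Or.inr ⟨rfl, rfl⟩⟩
      · exact ⟨x, y, ⟨hxQ, hxv⟩, hyP, Or.inl ⟨rfl, rfl⟩⟩
      · exact absurd (Or.inr ⟨hxQ, hyQ⟩) hcl
  have hK'dist : ∀ x, x ∈ P ∪ Q → ∀ y, y ∈ P ∪ Q → x ≠ y → x ≠ v1 → y ≠ v1 →
      G'.dist x y = 1 :=
    fun x hx y hy hxy hxv yv => dist_eq_one_iff_adj.mpr (hK'adj x hx y hy hxy hxv yv)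
  have hnadj'v1 : ∀ y, y ∈ P ∪ Q → y ≠ u → y ≠ v1 → ¬G'.Adj v1 y := by
    intro y hy hyu hyv hadj
    rcases (hG'adj v1 y).mp hadj with ⟨hGadj, hnD⟩ | ⟨hmemE, -⟩
    · rcases hedge v1 y hGadj with ⟨h1, -⟩ | ⟨-, h2⟩ | ⟨i, j, e1, e2⟩ | ⟨i, j, e1, e2⟩ |
          ⟨x, hx, h1, h2⟩
      · exact hv1P h1
      · refine hnD ?_
        rw [hDmem]
        exact ⟨y, ⟨h2, hyu, hyv⟩, Or.inl ⟨rfl, rfl⟩⟩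
      · exact hw1v1 (hwmem ⟨i, e1.symm⟩ (Or.inr hv1Q)).symm
      · exact hyv (hzmem ⟨j, e2.symm⟩ hy)
      · exact hv1R ((hAmem hx h1 (Or.inr hv1Q)) ▸ hx)
    · rw [hEmem] at hmemE
      obtain ⟨c, d, ⟨hcQ, hcv⟩, hdP, ⟨e1, -⟩ | ⟨e1, -⟩⟩ := hmemE
      · exact hcv e1.symm
      · exact hv1P (e1 ▸ hdP)
  have hv1y' : ∀ y, y ∈ P ∪ Q → y ≠ u → y ≠ v1 → G'.dist v1 y = 2 := by
    intro y hy hyu hyv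
    exact hdist2 G' hG'c v1 y (Ne.symm hyv) (hnadj'v1 y hy hyu hyv) u hadj_v1u
      (hK'adj u (Or.inl huP) y hy (Ne.symm hyu) (Ne.symm hv1u) hyv)
  -- depth along the two attached paths
  have hcutw : ∀ a b : V, G.Adj a b → a ∈ Set.range w → b ∉ Set.range w →
      a = w ⟨0, h0t⟩ := by
    intro a b hab ha hb
    have := hcutG w1 (Or.inl hw1P) a b hab (by rw [hBw1]; exact ha)
      (by rw [hBw1]; exact hb)
    rw [this]
    exact hw0.symm
  have hcutz : ∀ a b : V, G.Adj a b → a ∈ Set.range z → b ∉ Set.range z →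
      a = z ⟨0, hs⟩ := by
    intro a b hab ha hb
    have := hcutG v1 (Or.inr hv1Q) a b hab (by rw [hBv1]; exact ha)
      (by rw [hBv1]; exact hb)
    rw [this]
    exact hz0.symm
  have hdw := HararyAux2.path_dist hG h0t w hwinj hwpath hcutw
  have hdz := HararyAux2.path_dist hG hs z hzinj hzpath hcutz
  have hnw : ∀ j : Fin t, n (w j) = (j : ℕ) := by
    intro j
    have h1 : n (w j) = G.dist (w j) w1 := by
      rw [hndef]
      simp only
      rw [hgate_w j]
    rw [h1, ← hw0]
    exact hdw j
  have hnz : ∀ j : Fin s, n (z j) = (j : ℕ) := by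
    intro j
    have h1 : n (z j) = G.dist (z j) v1 := by
      rw [hndef]
      simp only
      rw [hgate_z j]
    rw [h1, ← hz0]
    exact hdz j
  -- existence of extra clique vertices
  have hPQu : ∀ c, c ∈ P → c ∈ Q → c = u := by
    intro c h1 h2
    have : c ∈ P ∩ Q := ⟨h1, h2⟩
    rwa [hPQ] at this
  have hy0 : ∃ y0, y0 ∈ Q ∧ y0 ≠ u ∧ y0 ≠ v1 := by
    by_contra hcon
    push_neg at hcon
    have hsub : Q ⊆ {u, v1} := by
      intro y hy
      by_cases h1 : y = u
      · exact Or.inl h1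
      · exact Or.inr (hcon y hy h1)
    have h2 : Q.ncard ≤ ({u, v1} : Set V).ncard :=
      Set.ncard_le_ncard hsub ((Set.finite_singleton v1).insert u)
    have h3 : ({u, v1} : Set V).ncard ≤ 2 := by
      have := Set.ncard_insert_le u ({v1} : Set V)
      simpa using this
    rw [hQcard] at h2
    omega
  have ha0 : ∃ a0, a0 ∈ P ∧ a0 ≠ u ∧ a0 ≠ w1 := by
    by_contra hcon
    push_neg at hcon
    have hsub : P ⊆ {u, w1} := by
      intro y hy
      by_cases h1 : y = u
      · exact Or.inl h1
      · exact Or.inr (hcon y hy h1)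
    have h2 : P.ncard ≤ ({u, w1} : Set V).ncard :=
      Set.ncard_le_ncard hsub ((Set.finite_singleton w1).insert u)
    have h3 : ({u, w1} : Set V).ncard ≤ 2 := by
      have := Set.ncard_insert_le u ({w1} : Set V)
      simpa using this
    rw [hPcard] at h2
    omega
  obtain ⟨y0, hy0Q, hy0u, hy0v⟩ := hy0
  obtain ⟨a0, ha0P, ha0u, ha0w⟩ := ha0
  -- vertex classes
  set CP : V → Prop := fun a => gate a ∈ P ∧ gate a ≠ u with hCPdef
  set CQ : V → Prop := fun a => gate a ∈ Q ∧ gate a ≠ u ∧ gate a ≠ v1 with hCQdef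
  set CZ : V → Prop := fun a => gate a = v1 with hCZdef
  have hclass4 : ∀ a, CP a ∨ CQ a ∨ CZ a ∨ gate a = u := by
    intro a
    rcases hgatePQ a with h | h
    · by_cases hu : gate a = u
      · exact Or.inr (Or.inr (Or.inr hu))
      · exact Or.inl ⟨h, hu⟩
    · by_cases hu : gate a = u
      · exact Or.inr (Or.inr (Or.inr hu))
      · by_cases hv : gate a = v1
        · exact Or.inr (Or.inr (Or.inl hv))
        · exact Or.inr (Or.inl ⟨h, hu, hv⟩)
  have hCPQ : ∀ c, CP c → CQ c → False := fun c h1 h2 => h1.2 (hPQu _ h1.1 h2.1)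
  have hCPZ : ∀ c, CP c → CZ c → False := fun c h1 h2 => hv1P (h2 ▸ h1.1)
  have hCQZ : ∀ c, CQ c → CZ c → False := fun c h1 h2 => h1.2.2 h2
  have hCPU : ∀ c, CP c → gate c = u → False := fun c h1 h2 => h1.2 h2
  have hCQU : ∀ c, CQ c → gate c = u → False := fun c h1 h2 => h1.2.1 h2
  have hCZU : ∀ c, CZ c → gate c = u → False := by
    intro c h1 h2
    rw [hCZdef] at h1
    rw [h1] at h2
    exact hv1u h2
  -- the elementary gain function
  set gf : ℕ → ℝ := fun m => 1 / ((m : ℝ) + 1) - 1 / ((m : ℝ) + 2) with hgfdef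
  have hgpos : ∀ m : ℕ, 0 < gf m := by
    intro m
    rw [hgfdef]
    simp only
    have h1 : (0 : ℝ) < (m : ℝ) + 1 := by positivity
    have h2 : (m : ℝ) + 1 < (m : ℝ) + 2 := by linarith
    have := one_div_lt_one_div_of_lt h1 h2
    linarith
  -- the pointwise change of the reciprocal distances
  have hdelta : ∀ a b : V,
      (1 : ℝ) / (G'.dist a b) - 1 / (G.dist a b) =
        (if (CP a ∧ CQ b) ∨ (CQ a ∧ CP b) then gf (n a + n b) else 0) -
        (if (CZ a ∧ CQ b) ∨ (CQ a ∧ CZ b) then gf (n a + n b) else 0) := by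
    intro a b
    by_cases hgg : gate a = gate b
    · have hdd : G.dist a b = G'.dist a b :=
        hsameDist (gate a) (hgatePQ a) a b (hgateB a) (hgg ▸ hgateB b)
      have hc1 : ¬((CP a ∧ CQ b) ∨ (CQ a ∧ CP b)) := by
        rintro (⟨h1, h2⟩ | ⟨h1, h2⟩)
        · exact h1.2 (hPQu _ (hgg ▸ h1.1) h2.1 ▸ (hgg ▸ rfl))
        · exact h2.2 (hPQu _ h2.1 (hgg ▸ h1.1) ▸ rfl)
      have hc2 : ¬((CZ a ∧ CQ b) ∨ (CQ a ∧ CZ b)) := by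
        rintro (⟨h1, h2⟩ | ⟨h1, h2⟩)
        · exact h2.2.2 (hgg ▸ (h1 : gate a = v1))
        · exact h1.2.2 (hgg.trans (h2 : gate b = v1))
      rw [hdd, if_neg hc1, if_neg hc2]
      simp
    · obtain ⟨hdG, hdG'⟩ := hmaster a b hgg
      rcases hclass4 a with hA | hA | hA | hA <;> rcases hclass4 b with hB | hB | hB | hB
      · -- CP CP
        have hcG : G.dist (gate a) (gate b) = 1 :=
          hcliqueDist _ _ hgg (Or.inl ⟨hA.1, hB.1⟩)
        have hcG' : G'.dist (gate a) (gate b) = 1 :=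
          hK'dist _ (Or.inl hA.1) _ (Or.inl hB.1) hgg
            (fun h => hv1P (h ▸ hA.1)) (fun h => hv1P (h ▸ hB.1))
        have hc1 : ¬((CP a ∧ CQ b) ∨ (CQ a ∧ CP b)) := by
          rintro (⟨-, h2⟩ | ⟨h1, -⟩)
          exacts [hCPQ b hB h2, hCPQ a hA h1]
        have hc2 : ¬((CZ a ∧ CQ b) ∨ (CQ a ∧ CZ b)) := by
          rintro (⟨h1, -⟩ | ⟨h1, -⟩)
          exacts [hCPZ a hA h1, hCPQ a hA h1]
        rw [hdG, hdG', hcG, hcG', if_neg hc1, if_neg hc2]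
        simp
      · -- CP CQ : gain
        have hcG : G.dist (gate a) (gate b) = 2 :=
          hcrossDist _ _ hA.1 hB.1 hA.2 hB.2.1
        have hcG' : G'.dist (gate a) (gate b) = 1 :=
          hK'dist _ (Or.inl hA.1) _ (Or.inr hB.1) hgg
            (fun h => hv1P (h ▸ hA.1)) hB.2.2
        have hc2 : ¬((CZ a ∧ CQ b) ∨ (CQ a ∧ CZ b)) := by
          rintro (⟨h1, -⟩ | ⟨h1, -⟩)
          exacts [hCPZ a hA h1, hCPQ a hA h1]
        rw [hdG, hdG', hcG, hcG', if_pos (Or.inl ⟨hA, hB⟩), if_neg hc2, hgfdef]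
        push_cast
        ring
      · -- CP CZ : zero
        have hBv : gate b = v1 := hB
        have hcG : G.dist (gate a) (gate b) = 2 := by
          rw [hBv]; exact hcrossDist _ _ hA.1 hv1Q hA.2 hv1u
        have hcG' : G'.dist (gate a) (gate b) = 2 := by
          rw [hBv, SimpleGraph.dist_comm]
          exact hv1y' _ (Or.inl hA.1) hA.2 (fun h => hv1P (h ▸ hA.1))
        have hc1 : ¬((CP a ∧ CQ b) ∨ (CQ a ∧ CP b)) := by
          rintro (⟨-, h2⟩ | ⟨h1, -⟩)
          exacts [hCQZ b h2 hB, hCPQ a hA h1]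
        have hc2 : ¬((CZ a ∧ CQ b) ∨ (CQ a ∧ CZ b)) := by
          rintro (⟨h1, -⟩ | ⟨h1, -⟩)
          exacts [hCPZ a hA h1, hCPQ a hA h1]
        rw [hdG, hdG', hcG, hcG', if_neg hc1, if_neg hc2]
        simp
      · -- CP U : zero
        have hcG : G.dist (gate a) (gate b) = 1 :=
          hcliqueDist _ _ hgg (Or.inl ⟨hA.1, by rw [hB]; exact huP⟩)
        have hcG' : G'.dist (gate a) (gate b) = 1 :=
          hK'dist _ (Or.inl hA.1) _ (by rw [hB]; exact Or.inl huP) hgg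
            (fun h => hv1P (h ▸ hA.1)) (by rw [hB]; exact Ne.symm hv1u)
        have hc1 : ¬((CP a ∧ CQ b) ∨ (CQ a ∧ CP b)) := by
          rintro (⟨-, h2⟩ | ⟨h1, -⟩)
          exacts [hCQU b h2 hB, hCPQ a hA h1]
        have hc2 : ¬((CZ a ∧ CQ b) ∨ (CQ a ∧ CZ b)) := by
          rintro (⟨h1, -⟩ | ⟨h1, -⟩)
          exacts [hCPZ a hA h1, hCPQ a hA h1]
        rw [hdG, hdG', hcG, hcG', if_neg hc1, if_neg hc2]
        simp
      · -- CQ CP : gain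
        have hcG : G.dist (gate a) (gate b) = 2 := by
          rw [SimpleGraph.dist_comm]
          exact hcrossDist _ _ hB.1 hA.1 hB.2 hA.2.1
        have hcG' : G'.dist (gate a) (gate b) = 1 :=
          hK'dist _ (Or.inr hA.1) _ (Or.inl hB.1) hgg hA.2.2
            (fun h => hv1P (h ▸ hB.1))
        have hc2 : ¬((CZ a ∧ CQ b) ∨ (CQ a ∧ CZ b)) := by
          rintro (⟨h1, -⟩ | ⟨-, h2⟩)
          exacts [hCQZ a hA h1, hCPZ b hB h2]
        rw [hdG, hdG', hcG, hcG', if_pos (Or.inr ⟨hA, hB⟩), if_neg hc2, hgfdef]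
        push_cast
        ring
      · -- CQ CQ : zero
        have hcG : G.dist (gate a) (gate b) = 1 :=
          hcliqueDist _ _ hgg (Or.inr ⟨hA.1, hB.1⟩)
        have hcG' : G'.dist (gate a) (gate b) = 1 :=
          hK'dist _ (Or.inr hA.1) _ (Or.inr hB.1) hgg hA.2.2 hB.2.2
        have hc1 : ¬((CP a ∧ CQ b) ∨ (CQ a ∧ CP b)) := by
          rintro (⟨h1, -⟩ | ⟨-, h2⟩)
          exacts [hCPQ a h1 hA, hCPQ b h2 hB]
        have hc2 : ¬((CZ a ∧ CQ b) ∨ (CQ a ∧ CZ b)) := by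
          rintro (⟨h1, -⟩ | ⟨-, h2⟩)
          exacts [hCQZ a hA h1, hCQZ b hB h2]
        rw [hdG, hdG', hcG, hcG', if_neg hc1, if_neg hc2]
        simp
      · -- CQ CZ : loss
        have hBv : gate b = v1 := hB
        have hcG : G.dist (gate a) (gate b) = 1 :=
          hcliqueDist _ _ hgg (Or.inr ⟨hA.1, by rw [hBv]; exact hv1Q⟩)
        have hcG' : G'.dist (gate a) (gate b) = 2 := by
          rw [hBv, SimpleGraph.dist_comm]
          exact hv1y' _ (Or.inr hA.1) hA.2.1 hA.2.2
        have hc1 : ¬((CP a ∧ CQ b) ∨ (CQ a ∧ CP b)) := by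
          rintro (⟨h1, -⟩ | ⟨-, h2⟩)
          exacts [hCPQ a h1 hA, hCPZ b h2 hB]
        rw [hdG, hdG', hcG, hcG', if_neg hc1, if_pos (Or.inr ⟨hA, hB⟩), hgfdef]
        push_cast
        ring
      · -- CQ U : zero
        have hcG : G.dist (gate a) (gate b) = 1 :=
          hcliqueDist _ _ hgg (Or.inr ⟨hA.1, by rw [hB]; exact huQ⟩)
        have hcG' : G'.dist (gate a) (gate b) = 1 :=
          hK'dist _ (Or.inr hA.1) _ (by rw [hB]; exact Or.inl huP) hgg hA.2.2
            (by rw [hB]; exact Ne.symm hv1u)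
        have hc1 : ¬((CP a ∧ CQ b) ∨ (CQ a ∧ CP b)) := by
          rintro (⟨h1, -⟩ | ⟨-, h2⟩)
          exacts [hCPQ a h1 hA, hCPU b h2 hB]
        have hc2 : ¬((CZ a ∧ CQ b) ∨ (CQ a ∧ CZ b)) := by
          rintro (⟨h1, -⟩ | ⟨-, h2⟩)
          exacts [hCQZ a hA h1, hCZU b h2 hB]
        rw [hdG, hdG', hcG, hcG', if_neg hc1, if_neg hc2]
        simp
      · -- CZ CP : zero
        have hAv : gate a = v1 := hA
        have hcG : G.dist (gate a) (gate b) = 2 := by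
          rw [hAv, SimpleGraph.dist_comm]
          exact hcrossDist _ _ hB.1 hv1Q hB.2 hv1u
        have hcG' : G'.dist (gate a) (gate b) = 2 := by
          rw [hAv]
          exact hv1y' _ (Or.inl hB.1) hB.2 (fun h => hv1P (h ▸ hB.1))
        have hc1 : ¬((CP a ∧ CQ b) ∨ (CQ a ∧ CP b)) := by
          rintro (⟨h1, -⟩ | ⟨h1, -⟩)
          exacts [hCPZ a h1 hA, hCQZ a h1 hA]
        have hc2 : ¬((CZ a ∧ CQ b) ∨ (CQ a ∧ CZ b)) := by
          rintro (⟨-, h2⟩ | ⟨-, h2⟩)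
          exacts [hCPQ b hB h2, hCPZ b hB h2]
        rw [hdG, hdG', hcG, hcG', if_neg hc1, if_neg hc2]
        simp
      · -- CZ CQ : loss
        have hAv : gate a = v1 := hA
        have hcG : G.dist (gate a) (gate b) = 1 :=
          hcliqueDist _ _ hgg (Or.inr ⟨by rw [hAv]; exact hv1Q, hB.1⟩)
        have hcG' : G'.dist (gate a) (gate b) = 2 := by
          rw [hAv]
          exact hv1y' _ (Or.inr hB.1) hB.2.1 hB.2.2
        have hc1 : ¬((CP a ∧ CQ b) ∨ (CQ a ∧ CP b)) := by
          rintro (⟨h1, -⟩ | ⟨h1, -⟩)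
          exacts [hCPZ a h1 hA, hCQZ a h1 hA]
        rw [hdG, hdG', hcG, hcG', if_neg hc1, if_pos (Or.inl ⟨hA, hB⟩), hgfdef]
        push_cast
        ring
      · -- CZ CZ : impossible
        exact absurd ((hA : gate a = v1).trans (hB : gate b = v1).symm) hgg
      · -- CZ U : zero
        have hAv : gate a = v1 := hA
        have hcG : G.dist (gate a) (gate b) = 1 :=
          hcliqueDist _ _ hgg (Or.inr ⟨by rw [hAv]; exact hv1Q, by rw [hB]; exact huQ⟩)
        have hcG' : G'.dist (gate a) (gate b) = 1 := by
          rw [hAv, hB]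
          exact dist_eq_one_iff_adj.mpr hadj_v1u
        have hc1 : ¬((CP a ∧ CQ b) ∨ (CQ a ∧ CP b)) := by
          rintro (⟨h1, -⟩ | ⟨h1, -⟩)
          exacts [hCPZ a h1 hA, hCQZ a h1 hA]
        have hc2 : ¬((CZ a ∧ CQ b) ∨ (CQ a ∧ CZ b)) := by
          rintro (⟨-, h2⟩ | ⟨h1, -⟩)
          exacts [hCQU b h2 hB, hCQZ a h1 hA]
        rw [hdG, hdG', hcG, hcG', if_neg hc1, if_neg hc2]
        simp
      · -- U CP : zero
        have hcG : G.dist (gate a) (gate b) = 1 :=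
          hcliqueDist _ _ hgg (Or.inl ⟨by rw [hA]; exact huP, hB.1⟩)
        have hcG' : G'.dist (gate a) (gate b) = 1 :=
          hK'dist _ (by rw [hA]; exact Or.inl huP) _ (Or.inl hB.1) hgg
            (by rw [hA]; exact Ne.symm hv1u) (fun h => hv1P (h ▸ hB.1))
        have hc1 : ¬((CP a ∧ CQ b) ∨ (CQ a ∧ CP b)) := by
          rintro (⟨h1, -⟩ | ⟨h1, -⟩)
          exacts [hCPU a h1 hA, hCQU a h1 hA]
        have hc2 : ¬((CZ a ∧ CQ b) ∨ (CQ a ∧ CZ b)) := by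
          rintro (⟨h1, -⟩ | ⟨h1, -⟩)
          exacts [hCZU a h1 hA, hCQU a h1 hA]
        rw [hdG, hdG', hcG, hcG', if_neg hc1, if_neg hc2]
        simp
      · -- U CQ : zero
        have hcG : G.dist (gate a) (gate b) = 1 :=
          hcliqueDist _ _ hgg (Or.inr ⟨by rw [hA]; exact huQ, hB.1⟩)
        have hcG' : G'.dist (gate a) (gate b) = 1 :=
          hK'dist _ (by rw [hA]; exact Or.inl huP) _ (Or.inr hB.1) hgg
            (by rw [hA]; exact Ne.symm hv1u) hB.2.2
        have hc1 : ¬((CP a ∧ CQ b) ∨ (CQ a ∧ CP b)) := by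
          rintro (⟨h1, -⟩ | ⟨h1, -⟩)
          exacts [hCPU a h1 hA, hCQU a h1 hA]
        have hc2 : ¬((CZ a ∧ CQ b) ∨ (CQ a ∧ CZ b)) := by
          rintro (⟨h1, -⟩ | ⟨h1, -⟩)
          exacts [hCZU a h1 hA, hCQU a h1 hA]
        rw [hdG, hdG', hcG, hcG', if_neg hc1, if_neg hc2]
        simp
      · -- U CZ : zero
        have hBv : gate b = v1 := hB
        have hcG : G.dist (gate a) (gate b) = 1 :=
          hcliqueDist _ _ hgg (Or.inr ⟨by rw [hA]; exact huQ, by rw [hBv]; exact hv1Q⟩)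
        have hcG' : G'.dist (gate a) (gate b) = 1 := by
          rw [hA, hBv]
          exact dist_eq_one_iff_adj.mpr hadj_v1u.symm
        have hc1 : ¬((CP a ∧ CQ b) ∨ (CQ a ∧ CP b)) := by
          rintro (⟨h1, -⟩ | ⟨h1, -⟩)
          exacts [hCPU a h1 hA, hCQU a h1 hA]
        have hc2 : ¬((CZ a ∧ CQ b) ∨ (CQ a ∧ CZ b)) := by
          rintro (⟨h1, -⟩ | ⟨h1, -⟩)
          exacts [hCZU a h1 hA, hCQU a h1 hA]
        rw [hdG, hdG', hcG, hcG', if_neg hc1, if_neg hc2]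
        simp
      · -- U U : impossible
        exact absurd (hA.trans hB.symm) hgg
  -- Finset versions of the classes
  set FP : Finset V := Finset.univ.filter CP with hFPdef
  set FQ : Finset V := Finset.univ.filter CQ with hFQdef
  set FZ : Finset V := Finset.univ.filter CZ with hFZdef
  have hFZ : FZ = Finset.image z Finset.univ := by
    rw [hFZdef]
    ext a
    simp only [Finset.mem_filter, Finset.mem_univ, true_and, Finset.mem_image]
    constructor
    · intro h
      have ha : a ∈ Set.range z := by
        rw [← hBv1]
        have h2 := hgateB a
        rwa [(h : gate a = v1)] at h2
      obtain ⟨i, hi⟩ := ha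
      exact ⟨i, hi⟩
    · rintro ⟨i, hi⟩
      exact hi ▸ hgate_z i
  have hsumFZ : ∀ m : ℕ, ∑ a ∈ FZ, gf (n a + m) = ∑ i : Fin s, gf ((i : ℕ) + m) := by
    intro m
    rw [hFZ, Finset.sum_image (fun i _ j _ h => hzinj h)]
    exact Finset.sum_congr rfl (fun i _ => by rw [hnz i])
  set W' : Finset V := Finset.image (fun i : Fin s => w (Fin.castLE hts i)) Finset.univ
    with hW'def
  have hsumW : ∀ m : ℕ, ∑ a ∈ W', gf (n a + m) = ∑ i : Fin s, gf ((i : ℕ) + m) := by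
    intro m
    rw [hW'def, Finset.sum_image (fun i _ j _ h => by
      have h2 := hwinj h
      exact Fin.ext (by simpa using congrArg Fin.val h2))]
    refine Finset.sum_congr rfl (fun i _ => ?_)
    rw [hnw (Fin.castLE hts i)]
    simp [Fin.coe_castLE]
  have ha0W : a0 ∉ W' := by
    rw [hW'def]
    simp only [Finset.mem_image, Finset.mem_univ, true_and]
    rintro ⟨i, hi⟩
    exact ha0w (hwmem ⟨_, hi⟩ (Or.inl ha0P))
  have hn0 : n a0 = 0 := by
    rw [hndef]
    simp only
    rw [hgate_core a0 (Or.inl ha0P)]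
    exact SimpleGraph.dist_self
  have hWsub : insert a0 W' ⊆ FP := by
    intro x hx
    rw [hFPdef]
    simp only [Finset.mem_filter, Finset.mem_univ, true_and]
    rcases Finset.mem_insert.mp hx with hx0 | hx'
    · have hg : gate x = x := by rw [hx0]; exact hgate_core a0 (Or.inl ha0P)
      exact ⟨by rw [hg, hx0]; exact ha0P, by rw [hg, hx0]; exact ha0u⟩
    · rw [hW'def] at hx'
      simp only [Finset.mem_image, Finset.mem_univ, true_and] at hx'
      obtain ⟨i, hi⟩ := hx'
      have hg : gate x = w1 := hi ▸ hgate_w (Fin.castLE hts i)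
      exact ⟨by rw [hg]; exact hw1P, by rw [hg]; exact hw1u⟩
  have hkey : ∀ m : ℕ, (∑ a ∈ FZ, gf (n a + m)) + gf m ≤ ∑ a ∈ FP, gf (n a + m) := by
    intro m
    have h1 : (∑ a ∈ FZ, gf (n a + m)) + gf m = ∑ a ∈ insert a0 W', gf (n a + m) := by
      rw [Finset.sum_insert ha0W, hn0, Nat.zero_add, hsumFZ m, ← hsumW m]
      ring
    rw [h1]
    exact Finset.sum_le_sum_of_subset_of_nonneg hWsub (fun i _ _ => (hgpos _).le)
  have hy0FQ : y0 ∈ FQ := by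
    rw [hFQdef]
    simp only [Finset.mem_filter, Finset.mem_univ, true_and]
    have hg : gate y0 = y0 := hgate_core y0 (Or.inr hy0Q)
    exact ⟨by rw [hg]; exact hy0Q, by rw [hg]; exact hy0u, by rw [hg]; exact hy0v⟩
  have hTpos : 0 < ∑ b ∈ FQ, gf (n b) :=
    Finset.sum_pos' (fun b _ => (hgpos _).le) ⟨y0, hy0FQ, hgpos _⟩
  -- splitting the double sums
  have e2a : (∑ a : V, ∑ b : V, (if CP a ∧ CQ b then gf (n a + n b) else 0)) =
      ∑ a ∈ FP, ∑ b ∈ FQ, gf (n a + n b) := by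
    rw [hFPdef, Finset.sum_filter]
    refine Finset.sum_congr rfl (fun a _ => ?_)
    rw [hFQdef, Finset.sum_filter]
    by_cases h : CP a
    · rw [if_pos h]
      refine Finset.sum_congr rfl (fun b _ => ?_)
      by_cases hb : CQ b
      · rw [if_pos ⟨h, hb⟩, if_pos hb]
      · rw [if_neg (fun hc => hb hc.2), if_neg hb]
    · rw [if_neg h]
      exact Finset.sum_eq_zero (fun b _ => if_neg (fun hc => h hc.1))
  have e2b : (∑ a : V, ∑ b : V, (if CQ a ∧ CP b then gf (n a + n b) else 0)) =
      ∑ a ∈ FQ, ∑ b ∈ FP, gf (n a + n b) := by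
    rw [hFQdef, Finset.sum_filter]
    refine Finset.sum_congr rfl (fun a _ => ?_)
    rw [hFPdef, Finset.sum_filter]
    by_cases h : CQ a
    · rw [if_pos h]
      refine Finset.sum_congr rfl (fun b _ => ?_)
      by_cases hb : CP b
      · rw [if_pos ⟨h, hb⟩, if_pos hb]
      · rw [if_neg (fun hc => hb hc.2), if_neg hb]
    · rw [if_neg h]
      exact Finset.sum_eq_zero (fun b _ => if_neg (fun hc => h hc.1))
  have e2c : (∑ a : V, ∑ b : V, (if CZ a ∧ CQ b then gf (n a + n b) else 0)) =
      ∑ a ∈ FZ, ∑ b ∈ FQ, gf (n a + n b) := by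
    rw [hFZdef, Finset.sum_filter]
    refine Finset.sum_congr rfl (fun a _ => ?_)
    rw [hFQdef, Finset.sum_filter]
    by_cases h : CZ a
    · rw [if_pos h]
      refine Finset.sum_congr rfl (fun b _ => ?_)
      by_cases hb : CQ b
      · rw [if_pos ⟨h, hb⟩, if_pos hb]
      · rw [if_neg (fun hc => hb hc.2), if_neg hb]
    · rw [if_neg h]
      exact Finset.sum_eq_zero (fun b _ => if_neg (fun hc => h hc.1))
  have e2d : (∑ a : V, ∑ b : V, (if CQ a ∧ CZ b then gf (n a + n b) else 0)) =
      ∑ a ∈ FQ, ∑ b ∈ FZ, gf (n a + n b) := by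
    rw [hFQdef, Finset.sum_filter]
    refine Finset.sum_congr rfl (fun a _ => ?_)
    rw [hFZdef, Finset.sum_filter]
    by_cases h : CQ a
    · rw [if_pos h]
      refine Finset.sum_congr rfl (fun b _ => ?_)
      by_cases hb : CZ b
      · rw [if_pos ⟨h, hb⟩, if_pos hb]
      · rw [if_neg (fun hc => hb hc.2), if_neg hb]
    · rw [if_neg h]
      exact Finset.sum_eq_zero (fun b _ => if_neg (fun hc => h hc.1))
  have hS1 : (∑ a : V, ∑ b : V,
      (if (CP a ∧ CQ b) ∨ (CQ a ∧ CP b) then gf (n a + n b) else 0)) =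
      (∑ a ∈ FP, ∑ b ∈ FQ, gf (n a + n b)) + (∑ a ∈ FQ, ∑ b ∈ FP, gf (n a + n b)) := by
    have hpt : ∀ a b : V, (if (CP a ∧ CQ b) ∨ (CQ a ∧ CP b) then gf (n a + n b) else 0)
        = (if CP a ∧ CQ b then gf (n a + n b) else 0) +
          (if CQ a ∧ CP b then gf (n a + n b) else 0) := by
      intro a b
      by_cases h1 : CP a ∧ CQ b
      · have h2 : ¬(CQ a ∧ CP b) := fun h => hCPQ a h1.1 h.1
        simp [h1, h2]
      · simp [h1]
    calc (∑ a : V, ∑ b : V,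
        (if (CP a ∧ CQ b) ∨ (CQ a ∧ CP b) then gf (n a + n b) else 0))
        = ∑ a : V, ((∑ b : V, (if CP a ∧ CQ b then gf (n a + n b) else 0)) +
            ∑ b : V, (if CQ a ∧ CP b then gf (n a + n b) else 0)) := by
          refine Finset.sum_congr rfl (fun a _ => ?_)
          rw [← Finset.sum_add_distrib]
          exact Finset.sum_congr rfl (fun b _ => hpt a b)
      _ = (∑ a : V, ∑ b : V, (if CP a ∧ CQ b then gf (n a + n b) else 0)) +
            ∑ a : V, ∑ b : V, (if CQ a ∧ CP b then gf (n a + n b) else 0) :=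
          Finset.sum_add_distrib
      _ = (∑ a ∈ FP, ∑ b ∈ FQ, gf (n a + n b)) + (∑ a ∈ FQ, ∑ b ∈ FP, gf (n a + n b)) := by
          rw [e2a, e2b]
  have hS2 : (∑ a : V, ∑ b : V,
      (if (CZ a ∧ CQ b) ∨ (CQ a ∧ CZ b) then gf (n a + n b) else 0)) =
      (∑ a ∈ FZ, ∑ b ∈ FQ, gf (n a + n b)) + (∑ a ∈ FQ, ∑ b ∈ FZ, gf (n a + n b)) := by
    have hpt : ∀ a b : V, (if (CZ a ∧ CQ b) ∨ (CQ a ∧ CZ b) then gf (n a + n b) else 0)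
        = (if CZ a ∧ CQ b then gf (n a + n b) else 0) +
          (if CQ a ∧ CZ b then gf (n a + n b) else 0) := by
      intro a b
      by_cases h1 : CZ a ∧ CQ b
      · have h2 : ¬(CQ a ∧ CZ b) := fun h => hCQZ a h.1 h1.1
        simp [h1, h2]
      · simp [h1]
    calc (∑ a : V, ∑ b : V,
        (if (CZ a ∧ CQ b) ∨ (CQ a ∧ CZ b) then gf (n a + n b) else 0))
        = ∑ a : V, ((∑ b : V, (if CZ a ∧ CQ b then gf (n a + n b) else 0)) +
            ∑ b : V, (if CQ a ∧ CZ b then gf (n a + n b) else 0)) := by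
          refine Finset.sum_congr rfl (fun a _ => ?_)
          rw [← Finset.sum_add_distrib]
          exact Finset.sum_congr rfl (fun b _ => hpt a b)
      _ = (∑ a : V, ∑ b : V, (if CZ a ∧ CQ b then gf (n a + n b) else 0)) +
            ∑ a : V, ∑ b : V, (if CQ a ∧ CZ b then gf (n a + n b) else 0) :=
          Finset.sum_add_distrib
      _ = (∑ a ∈ FZ, ∑ b ∈ FQ, gf (n a + n b)) + (∑ a ∈ FQ, ∑ b ∈ FZ, gf (n a + n b)) := by
          rw [e2c, e2d]
  have htotal : (∑ a : V, ∑ b : V, ((1 : ℝ) / (G'.dist a b) - 1 / (G.dist a b))) =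
      ((∑ a ∈ FP, ∑ b ∈ FQ, gf (n a + n b)) + (∑ a ∈ FQ, ∑ b ∈ FP, gf (n a + n b))) -
      ((∑ a ∈ FZ, ∑ b ∈ FQ, gf (n a + n b)) + (∑ a ∈ FQ, ∑ b ∈ FZ, gf (n a + n b))) := by
    rw [← hS1, ← hS2, ← Finset.sum_sub_distrib]
    refine Finset.sum_congr rfl (fun a _ => ?_)
    rw [← Finset.sum_sub_distrib]
    exact Finset.sum_congr rfl (fun b _ => hdelta a b)
  have hineq1 : (∑ a ∈ FZ, ∑ b ∈ FQ, gf (n a + n b)) + ∑ b ∈ FQ, gf (n b) ≤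
      ∑ a ∈ FP, ∑ b ∈ FQ, gf (n a + n b) := by
    have c1 : ∑ a ∈ FZ, ∑ b ∈ FQ, gf (n a + n b) = ∑ b ∈ FQ, ∑ a ∈ FZ, gf (n a + n b) :=
      Finset.sum_comm
    have c2 : ∑ a ∈ FP, ∑ b ∈ FQ, gf (n a + n b) = ∑ b ∈ FQ, ∑ a ∈ FP, gf (n a + n b) :=
      Finset.sum_comm
    rw [c1, c2, ← Finset.sum_add_distrib]
    exact Finset.sum_le_sum (fun b _ => hkey (n b))
  have hineq2 : (∑ a ∈ FQ, ∑ b ∈ FZ, gf (n a + n b)) + ∑ b ∈ FQ, gf (n b) ≤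
      ∑ a ∈ FQ, ∑ b ∈ FP, gf (n a + n b) := by
    rw [← Finset.sum_add_distrib]
    refine Finset.sum_le_sum (fun a _ => ?_)
    have h1 : ∑ b ∈ FZ, gf (n a + n b) = ∑ b ∈ FZ, gf (n b + n a) :=
      Finset.sum_congr rfl (fun b _ => by rw [Nat.add_comm])
    have h2 : ∑ b ∈ FP, gf (n a + n b) = ∑ b ∈ FP, gf (n b + n a) :=
      Finset.sum_congr rfl (fun b _ => by rw [Nat.add_comm])
    rw [h1, h2]
    exact hkey (n a)
  have hpos : 0 < ∑ a : V, ∑ b : V, ((1 : ℝ) / (G'.dist a b) - 1 / (G.dist a b)) := by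
    rw [htotal]
    linarith [hineq1, hineq2, hTpos]
  have hdiff : (∑ a : V, ∑ b : V, ((1 : ℝ) / (G'.dist a b) - 1 / (G.dist a b))) =
      (∑ a : V, ∑ b : V, (1 : ℝ) / (G'.dist a b)) -
      ∑ a : V, ∑ b : V, (1 : ℝ) / (G.dist a b) :=
    calc (∑ a : V, ∑ b : V, ((1 : ℝ) / (G'.dist a b) - 1 / (G.dist a b)))
        = ∑ a : V, ((∑ b : V, (1 : ℝ) / (G'.dist a b)) - ∑ b : V, (1 : ℝ) / (G.dist a b)) :=
          Finset.sum_congr rfl (fun a _ => Finset.sum_sub_distrib _ _)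
      _ = _ := Finset.sum_sub_distrib _ _
  rw [hdiff] at hpos
  unfold hararyIndex
  linarith [hpos]
end

section
/- Let G be a finite simple graph of order n ≥ 3 that contains a cut vertex or a cut edge. Then H(G) ≤ H(G_{n,1}), with equality if and only if G is isomorphic to G_{n,1}, where G_{n,1} is the graph obtained from the complete graph K_{n−1} by attaching one pendant vertex. -/
open SimpleGraph
open Finset
open scoped Classical

/-- The clique vertex "owning" vertex `j` of `GNK n k`: the first `n - k` vertices form
the clique `K_{n-k}`, and the remaining `k` vertices are distributed round-robin among
the clique vertices, forming pendant paths of almost equal lengths. -/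
def gnkOwner (n k j : ℕ) : ℕ := if j < n - k then j else (j - (n - k)) % (n - k)

/-- The distance of vertex `j` of `GNK n k` from its owning clique vertex along the
attached pendant path. -/
def gnkDepth (n k j : ℕ) : ℕ := if j < n - k then 0 else (j - (n - k)) / (n - k) + 1

/-- The graph `G_{n,k}` on `n` vertices: obtained from `K_{n-k}` by attaching pendant
paths of almost equal lengths (`k` new vertices in total, distributed round-robin) at
its `n - k` vertices. -/
def GNK (n k : ℕ) : SimpleGraph (Fin n) :=
  SimpleGraph.fromRel (fun a b =>
    (gnkDepth n k a = 0 ∧ gnkDepth n k b = 0) ∨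
    (gnkOwner n k a = gnkOwner n k b ∧ gnkDepth n k a + 1 = gnkDepth n k b))

/-- A vertex is a cut vertex if deleting it increases the number of connected
components. -/
def IsCutVertex {V : Type*} [Fintype V] (G : SimpleGraph V) (v : V) : Prop :=
  Nat.card G.ConnectedComponent <
    Nat.card (G.induce ({v}ᶜ : Set V)).ConnectedComponent

/-- An edge is a cut edge if deleting it increases the number of connected
components. -/
def IsCutEdge {V : Type*} [Fintype V] (G : SimpleGraph V) (e : Sym2 V) : Prop :=
  e ∈ G.edgeSet ∧
    Nat.card G.ConnectedComponent < Nat.card (G.deleteEdges {e}).ConnectedComponent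

section HararyAux

variable {V : Type*}

def PCfun (G : SimpleGraph V) (a v : V) : Prop :=
  a ≠ v ∧ ∀ x y, G.Adj x y ↔ (x ≠ y ∧ (x = a → y = v) ∧ (y = a → x = v))

noncomputable def badset [Fintype V] (G : SimpleGraph V) : Finset (V × V) :=
  Finset.univ.filter (fun p => p.1 ≠ p.2 ∧ ¬ G.Adj p.1 p.2)

lemma mem_badset [Fintype V] {G : SimpleGraph V} {p : V × V} :
    p ∈ badset G ↔ p.1 ≠ p.2 ∧ ¬ G.Adj p.1 p.2 := by
  simp [badset]

noncomputable def gfun (G : SimpleGraph V) (u v : V) : ℝ :=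
  if u = v then 0 else if G.Adj u v then 1 else 1/2

lemma gfun_eq (G : SimpleGraph V) (u v : V) :
    gfun G u v = (if u = v then (0:ℝ) else 1) - (if u ≠ v ∧ ¬ G.Adj u v then (1:ℝ)/2 else 0) := by
  by_cases h : u = v
  · rw [gfun, if_pos h, if_pos h, if_neg (by tauto)]; ring
  · by_cases h2 : G.Adj u v
    · rw [gfun, if_neg h, if_pos h2, if_neg h, if_neg (by tauto)]; ring
    · rw [gfun, if_neg h, if_neg h2, if_neg h, if_pos ⟨h, h2⟩]; ring

lemma sum_gfun [Fintype V] (G : SimpleGraph V) :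
    ∑ u : V, ∑ v : V, gfun G u v
      = (Fintype.card V : ℝ) * ((Fintype.card V : ℝ) - 1) - ((badset G).card : ℝ) / 2 := by
  simp only [gfun_eq, Finset.sum_sub_distrib]
  have h1 : ∀ u : V, ∑ v : V, (if u = v then (0:ℝ) else 1) = (Fintype.card V : ℝ) - 1 := by
    intro u
    have e : ∑ v : V, (if u = v then (0:ℝ) else 1) = ∑ v : V, ((1:ℝ) - if u = v then 1 else 0) := by
      apply Finset.sum_congr rfl
      intro v _
      by_cases h : u = v <;> simp [h]
    rw [e, Finset.sum_sub_distrib, Finset.sum_ite_eq Finset.univ u (fun _ => (1:ℝ))]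
    simp [Finset.card_univ]
  have h2 : ∑ u : V, ∑ v : V, (if u ≠ v ∧ ¬ G.Adj u v then (1:ℝ)/2 else 0)
      = ((badset G).card : ℝ) / 2 := by
    rw [← Finset.sum_product', ← Finset.sum_filter, Finset.univ_product_univ, Finset.sum_const]
    have hfb : Finset.filter (fun p : V × V => p.1 ≠ p.2 ∧ ¬ G.Adj p.1 p.2) Finset.univ
        = badset G := by
      ext p; simp [badset]
    rw [hfb, nsmul_eq_mul]
    ring
  rw [h2, Finset.sum_congr rfl (fun u _ => h1 u)]
  simp [Finset.card_univ]
  ring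

lemma one_div_dist_le [Fintype V] (G : SimpleGraph V) (u v : V) :
    (1:ℝ) / (G.dist u v) ≤ gfun G u v := by
  by_cases h : u = v
  · simp [gfun, h]
  · by_cases h2 : G.Adj u v
    · rw [dist_eq_one_iff_adj.mpr h2]
      simp [gfun, h, h2]
    · have hne1 : G.dist u v ≠ 1 := fun hd => h2 (dist_eq_one_iff_adj.mp hd)
      rw [gfun, if_neg h, if_neg h2]
      rcases Nat.eq_zero_or_pos (G.dist u v) with h0 | hpos
      · rw [h0]; norm_num
      · have h2le : 2 ≤ G.dist u v := by omega
        have hc : (2:ℝ) ≤ (G.dist u v : ℝ) := by exact_mod_cast h2le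
        rw [div_le_div_iff₀ (by linarith) (by norm_num)]
        linarith

lemma pc_adj_av {G : SimpleGraph V} {a v : V} (h : PCfun G a v) : G.Adj a v :=
  (h.2 a v).mpr ⟨h.1, fun _ => rfl, fun hva => absurd hva.symm h.1⟩

lemma pc_dist_two {G : SimpleGraph V} {a v w : V} (h : PCfun G a v)
    (hwa : w ≠ a) (hwv : w ≠ v) : G.dist a w = 2 := by
  have hvw : G.Adj v w :=
    (h.2 v w).mpr ⟨fun hv => hwv hv.symm, fun hva => absurd hva.symm h.1,
      fun hwa' => absurd hwa' hwa⟩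
  have hna : ¬ G.Adj a w := by
    rw [h.2 a w]
    push_neg
    intro _ hi
    exact absurd (hi rfl) hwv
  have hle := SimpleGraph.dist_le (Walk.cons (pc_adj_av h) (Walk.cons hvw Walk.nil))
  simp only [Walk.length_cons, Walk.length_nil] at hle
  have hpos : 0 < G.dist a w :=
    Reachable.pos_dist_of_ne ⟨Walk.cons (pc_adj_av h) (Walk.cons hvw Walk.nil)⟩
      (fun he => hwa he.symm)
  have hne1 : G.dist a w ≠ 1 := fun hd => hna (dist_eq_one_iff_adj.mp hd)
  omega

lemma pc_one_div_dist [Fintype V] {G : SimpleGraph V} {a v : V} (h : PCfun G a v) (u w : V) :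
    (1:ℝ) / (G.dist u w) = gfun G u w := by
  by_cases he : u = w
  · simp [gfun, he, SimpleGraph.dist_self]
  · by_cases h2 : G.Adj u w
    · rw [dist_eq_one_iff_adj.mpr h2]; simp [gfun, he, h2]
    · have hchar := h.2 u w
      have hd2 : G.dist u w = 2 := by
        by_cases hu : u = a
        · have hwv : w ≠ v := fun hwv =>
            h2 (hchar.mpr ⟨he, fun _ => hwv, fun hwa => absurd (hu.trans hwa.symm) he⟩)
          subst hu
          exact pc_dist_two h (fun hwa => he hwa.symm) hwv
        · by_cases hw : w = a
          · have huv : u ≠ v := fun huv =>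
              h2 (hchar.mpr ⟨he, fun hua => absurd hua hu, fun _ => huv⟩)
            subst hw
            rw [SimpleGraph.dist_comm]
            exact pc_dist_two h hu huv
          · exact absurd (hchar.mpr ⟨he, fun hua => absurd hua hu, fun hwa => absurd hwa hw⟩) h2
      rw [hd2, gfun, if_neg he, if_neg h2]
      norm_num

lemma pc_badset_card [Fintype V] {G : SimpleGraph V} {a v : V} (h : PCfun G a v) :
    (badset G).card = 2 * (Fintype.card V - 2) := by
  have hset : badset G
      = ({a} ×ˢ (Finset.univ \ {a, v})) ∪ ((Finset.univ \ {a, v}) ×ˢ {a}) := by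
    ext p
    rw [mem_badset]
    simp only [Finset.mem_union, Finset.mem_product, Finset.mem_singleton, Finset.mem_sdiff,
      Finset.mem_univ, true_and, Finset.mem_insert]
    constructor
    · rintro ⟨hne, hna⟩
      by_cases h1 : p.1 = a
      · refine Or.inl ⟨h1, ?_⟩
        push_neg
        refine ⟨fun e => hne (by rw [h1, e]), fun e => ?_⟩
        exact hna ((h.2 p.1 p.2).mpr ⟨hne, fun _ => e, fun h2a => absurd (e.symm.trans h2a) h.1.symm⟩)
      · by_cases h2 : p.2 = a
        · refine Or.inr ⟨?_, h2⟩
          push_neg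
          refine ⟨fun e => hne (by rw [h2, e]), fun e => ?_⟩
          exact hna ((h.2 p.1 p.2).mpr ⟨hne, fun h1a => absurd h1a h1, fun _ => e⟩)
        · exact (hna ((h.2 p.1 p.2).mpr
            ⟨hne, fun h1a => absurd h1a h1, fun h2a => absurd h2a h2⟩)).elim
    · rintro (⟨h1, h2⟩ | ⟨h2, h1⟩) <;> push_neg at h2
      · refine ⟨fun e => h2.1 (by rw [← e, h1]), ?_⟩
        rw [h.2]
        push_neg
        intro _ hB
        exact (h2.2 (hB h1)).elim
      · refine ⟨fun e => h2.1 (by rw [e, h1]), ?_⟩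
        rw [h.2]
        push_neg
        intro _ _
        exact ⟨h1, h2.2⟩
  rw [hset, Finset.card_union_of_disjoint, Finset.card_product, Finset.card_product]
  · have hc : (Finset.univ \ {a, v} : Finset V).card = Fintype.card V - 2 := by
      rw [Finset.card_sdiff_of_subset (by simp)]
      rw [Finset.card_univ, Finset.card_insert_of_notMem (by simp [h.1]), Finset.card_singleton]
    rw [hc]
    simp
    omega
  · rw [Finset.disjoint_left]
    rintro ⟨p1, p2⟩ hp hq
    simp only [Finset.mem_product, Finset.mem_singleton, Finset.mem_sdiff, Finset.mem_univ,
      true_and, Finset.mem_insert] at hp hq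
    push_neg at hq
    exact hq.1.1 hp.1


lemma pc_harary [Fintype V] {G : SimpleGraph V} {a v : V} (h : PCfun G a v)
    (hn : 3 ≤ Fintype.card V) :
    hararyIndex G
      = ((Fintype.card V : ℝ) * ((Fintype.card V : ℝ) - 1) - ((Fintype.card V : ℝ) - 2)) / 2 := by
  rw [hararyIndex]
  rw [Finset.sum_congr rfl (fun u _ => Finset.sum_congr rfl (fun w _ => pc_one_div_dist h u w))]
  rw [sum_gfun, pc_badset_card h]
  have : ((2 * (Fintype.card V - 2) : ℕ) : ℝ) = 2 * ((Fintype.card V : ℝ) - 2) := by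
    push_cast [Nat.cast_sub (by omega : 2 ≤ Fintype.card V)]
    ring
  rw [this]
  ring

lemma pc_transport {W : Type*} {G : SimpleGraph V} {G' : SimpleGraph W} (φ : G ≃g G')
    {a v : W} (h : PCfun G' a v) : PCfun G (φ.symm a) (φ.symm v) := by
  refine ⟨fun e => h.1 (by simpa using congrArg φ e), fun x y => ?_⟩
  rw [← φ.map_adj_iff, h.2 (φ x) (φ y)]
  constructor
  · rintro ⟨h1, h2, h3⟩
    refine ⟨fun e => h1 (by rw [e]), fun e => ?_, fun e => ?_⟩
    · have := h2 (by rw [e]; simp)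
      apply_fun φ.symm at this
      simpa using this
    · have := h3 (by rw [e]; simp)
      apply_fun φ.symm at this
      simpa using this
  · rintro ⟨h1, h2, h3⟩
    refine ⟨fun e => h1 (by apply_fun φ.symm at e; simpa using e), fun e => ?_, fun e => ?_⟩
    · have : x = φ.symm a := by apply_fun φ.symm at e; simpa using e
      rw [h2 this]; simp
    · have : y = φ.symm a := by apply_fun φ.symm at e; simpa using e
      rw [h3 this]; simp

lemma pc_iso {W : Type*} [Fintype V] [Fintype W] {G : SimpleGraph V} {G' : SimpleGraph W}
    {a v : V} {a' v' : W} (h : PCfun G a v) (h' : PCfun G' a' v')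
    (hc : Fintype.card V = Fintype.card W) : Nonempty (G ≃g G') := by
  obtain ⟨e0⟩ := Fintype.card_eq.mp hc
  let e1 : V ≃ W := e0.trans (Equiv.swap (e0 a) a')
  have he1a : e1 a = a' := by simp [e1]
  let e2 : V ≃ W := e1.trans (Equiv.swap (e1 v) v')
  have he2v : e2 v = v' := by simp [e2]
  have he2a : e2 a = a' := by
    have h1 : a' ≠ e1 v := fun e => h.1 (e1.injective (he1a.trans e))
    have h2 : a' ≠ v' := h'.1
    simp [e2, he1a, Equiv.swap_apply_of_ne_of_ne h1 h2]
  refine ⟨⟨e2, ?_⟩⟩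
  intro x y
  rw [h.2 x y, h'.2 (e2 x) (e2 y)]
  constructor
  · rintro ⟨h1, h2, h3⟩
    refine ⟨fun e => h1 (by rw [e]), fun e => ?_, fun e => ?_⟩
    · have hyv := h2 (by rw [e, he2a])
      exact e2.injective (by rw [hyv, he2v])
    · have hxv := h3 (by rw [e, he2a])
      exact e2.injective (by rw [hxv, he2v])
  · rintro ⟨h1, h2, h3⟩
    refine ⟨fun e => h1 (e2.injective e), fun e => ?_, fun e => ?_⟩
    · have hxa : x = a := e2.injective (by rw [e, he2a])
      rw [h2 hxa]
      exact he2v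
    · have hya : y = a := e2.injective (by rw [e, he2a])
      rw [h3 hya]
      exact he2v
lemma gnk_adj_iff {n : ℕ} (hn : 3 ≤ n) (x y : Fin n) :
    (GNK n 1).Adj x y ↔ x ≠ y ∧
      (((x:ℕ) < n-1 ∧ (y:ℕ) < n-1) ∨ ((x:ℕ) = n-1 ∧ (y:ℕ) = 0) ∨
        ((y:ℕ) = n-1 ∧ (x:ℕ) = 0)) := by
  have hgd : ∀ j : Fin n, gnkDepth n 1 (j:ℕ) = if (j:ℕ) < n - 1 then 0 else 1 := by
    intro j
    rw [gnkDepth]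
    by_cases hj : (j:ℕ) < n - 1
    · rw [if_pos hj, if_pos hj]
    · have : (j:ℕ) = n - 1 := by have := j.isLt; omega
      rw [if_neg hj, if_neg hj, this]
      simp
  have hgo : ∀ j : Fin n, gnkOwner n 1 (j:ℕ) = if (j:ℕ) < n - 1 then (j:ℕ) else 0 := by
    intro j
    rw [gnkOwner]
    by_cases hj : (j:ℕ) < n - 1
    · rw [if_pos hj, if_pos hj]
    · have : (j:ℕ) = n - 1 := by have := j.isLt; omega
      rw [if_neg hj, if_neg hj, this]
      simp
  rw [GNK, SimpleGraph.fromRel_adj, hgd, hgd, hgo, hgo]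
  have hxl := x.isLt
  have hyl := y.isLt
  apply and_congr_right
  intro _
  by_cases hx : (x:ℕ) < n - 1 <;> by_cases hy : (y:ℕ) < n - 1 <;>
    (try simp [hx, hy]) <;> omega

lemma pc_gnk {n : ℕ} (hn : 3 ≤ n) :
    PCfun (GNK n 1) ⟨n-1, by omega⟩ ⟨0, by omega⟩ := by
  constructor
  · intro e
    rw [Fin.ext_iff] at e
    simp at e
    omega
  · intro x y
    rw [gnk_adj_iff hn x y]
    have hxl := x.isLt
    have hyl := y.isLt
    simp only [ne_eq, Fin.ext_iff]
    omega

lemma not_inj_aux {α β : Type*} [Finite β] (f : α → β) (h : Nat.card β < Nat.card α) :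
    ∃ x y, x ≠ y ∧ f x = f y := by
  by_contra hc
  push_neg at hc
  have hinj : Function.Injective f := fun x y hxy => by_contra fun hne => (hc x y hne) hxy
  exact absurd (Nat.card_le_card_of_injective f hinj) (by omega)

lemma cutvertex_sep [Fintype V] {G : SimpleGraph V} {v : V} (hv : IsCutVertex G v) :
    ∃ A B : Finset V, A.Nonempty ∧ B.Nonempty ∧ Disjoint A B ∧ v ∉ A ∧ v ∉ B ∧
      (∀ x : V, x ∈ A ∨ x ∈ B ∨ x = v) ∧ ∀ a ∈ A, ∀ b ∈ B, ¬ G.Adj a b := by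
  set S : Set V := ({v}ᶜ : Set V) with hS
  set G' : SimpleGraph S := G.induce S with hG'
  have hom : G' →g G := ⟨Subtype.val, fun h => h⟩
  obtain ⟨C, D, hCD, hmap⟩ := not_inj_aux (ConnectedComponent.map hom) hv
  obtain ⟨x, rfl⟩ := C.exists_rep
  obtain ⟨y, rfl⟩ := D.exists_rep
  have hnr : ¬ G'.Reachable x y := fun hr => hCD (ConnectedComponent.sound hr)
  classical
  refine ⟨Finset.univ.filter (fun z => ∃ hz : z ∈ S, G'.Reachable x ⟨z, hz⟩),
    Finset.univ.filter (fun z => z ∈ S ∧ ¬ ∃ hz : z ∈ S, G'.Reachable x ⟨z, hz⟩),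
    ⟨x.1, by simp only [Finset.mem_filter, Finset.mem_univ, true_and]; exact ⟨x.2, Reachable.refl x⟩⟩,
    ⟨y.1, by
      simp only [Finset.mem_filter, Finset.mem_univ, true_and]
      exact ⟨y.2, fun ⟨hz, hr⟩ => hnr hr⟩⟩,
    ?_, ?_, ?_, ?_, ?_⟩
  · rw [Finset.disjoint_left]
    intro z hz1 hz2
    simp only [Finset.mem_filter, Finset.mem_univ, true_and] at hz1 hz2
    exact hz2.2 hz1
  · simp only [Finset.mem_filter, Finset.mem_univ, true_and, not_exists]
    intro hz
    exact absurd hz (by simp [hS])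
  · simp only [Finset.mem_filter, Finset.mem_univ, true_and, not_and]
    intro hz
    exact absurd hz (by simp [hS])
  · intro z
    by_cases hzv : z = v
    · exact Or.inr (Or.inr hzv)
    · have hzS : z ∈ S := by simp [hS, hzv]
      by_cases hP : ∃ hz : z ∈ S, G'.Reachable x ⟨z, hz⟩
      · exact Or.inl (by simp only [Finset.mem_filter, Finset.mem_univ, true_and]; exact hP)
      · exact Or.inr (Or.inl (by
          simp only [Finset.mem_filter, Finset.mem_univ, true_and]
          exact ⟨hzS, hP⟩))
  · intro a ha b hb hadj
    simp only [Finset.mem_filter, Finset.mem_univ, true_and] at ha hb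
    obtain ⟨haS, hra⟩ := ha
    obtain ⟨hbS, hnb⟩ := hb
    have hadj' : G'.Adj ⟨a, haS⟩ ⟨b, hbS⟩ := hadj
    exact hnb ⟨hbS, hra.trans hadj'.reachable⟩

lemma cutedge_sep [Fintype V] {G : SimpleGraph V} {e : Sym2 V} (he : IsCutEdge G e) :
    ∃ (A : Finset V) (u v : V), u ∈ A ∧ v ∉ A ∧ G.Adj u v ∧
      ∀ a ∈ A, ∀ b ∉ A, G.Adj a b → a = u ∧ b = v := by
  obtain ⟨hmem, hlt⟩ := he
  induction e using Sym2.ind with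
  | _ u v =>
  have huv : G.Adj u v := hmem
  set G'' : SimpleGraph V := G.deleteEdges {s(u, v)} with hG''
  let hom : G'' →g G := Hom.ofLE (deleteEdges_le _)
  obtain ⟨C, D, hCD, hmap⟩ := not_inj_aux (ConnectedComponent.map hom) hlt
  obtain ⟨x, rfl⟩ := C.exists_rep
  obtain ⟨y, rfl⟩ := D.exists_rep
  have hnr : ¬ G''.Reachable x y := fun hr => hCD (ConnectedComponent.sound hr)
  have hr : G.Reachable x y := by
    have hmap' : ConnectedComponent.map hom (G''.connectedComponentMk x)
        = ConnectedComponent.map hom (G''.connectedComponentMk y) := hmap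
    rw [ConnectedComponent.map_mk, ConnectedComponent.map_mk] at hmap'
    have h2 : G.Reachable (hom x) (hom y) := (ConnectedComponent.eq).mp hmap'
    simpa [hom] using h2
  have transfer : G''.Reachable u v → ∀ {p q : V}, G.Reachable p q → G''.Reachable p q := by
    intro huvr p q hpq
    obtain ⟨w⟩ := hpq
    induction w with
    | nil => exact Reachable.refl _
    | @cons a b c h pw ih =>
      refine Reachable.trans ?_ ih
      by_cases hsab : s(a, b) = s(u, v)
      · rcases Sym2.eq_iff.mp hsab with ⟨ha, hb⟩ | ⟨ha, hb⟩
        · subst ha; subst hb; exact huvr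
        · subst ha; subst hb; exact huvr.symm
      · exact SimpleGraph.Adj.reachable (by rw [hG'', deleteEdges_adj]; exact ⟨h, by simp [hsab]⟩)
  have hnuv : ¬ G''.Reachable u v := fun huvr => hnr (transfer huvr hr)
  classical
  refine ⟨Finset.univ.filter (fun z => G''.Reachable u z), u, v, ?_, ?_, huv, ?_⟩
  · simp only [Finset.mem_filter, Finset.mem_univ, true_and]
    exact Reachable.refl _
  · simp only [Finset.mem_filter, Finset.mem_univ, true_and]
    exact hnuv
  · intro a ha b hb hadj
    simp only [Finset.mem_filter, Finset.mem_univ, true_and] at ha hb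
    by_cases hsab : s(a, b) = s(u, v)
    · rcases Sym2.eq_iff.mp hsab with ⟨rfl, rfl⟩ | ⟨rfl, rfl⟩
      · exact ⟨rfl, rfl⟩
      · exact (hnuv ha).elim
    · have : G''.Adj a b := by rw [hG'', deleteEdges_adj]; exact ⟨hadj, by simp [hsab]⟩
      exact (hb (ha.trans this.reachable)).elim

lemma pc_of_vsep [Fintype V] {G : SimpleGraph V} {A B : Finset V} {v a : V}
    (hdisj : Disjoint A B) (hvA : v ∉ A) (hvB : v ∉ B)
    (hcover : ∀ x, x ∈ A ∨ x ∈ B ∨ x = v)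
    (hbad : badset G = (A ×ˢ B) ∪ (B ×ˢ A))
    (hA : A = {a}) : PCfun G a v := by
  subst hA
  have hav : a ≠ v := fun e => hvA (by rw [e]; exact Finset.mem_singleton_self v)
  refine ⟨hav, fun x y => ?_⟩
  constructor
  · intro hadj
    have hnb : (x, y) ∉ badset G := fun hb => (mem_badset.mp hb).2 hadj
    refine ⟨hadj.ne, fun hx => ?_, fun hy => ?_⟩
    · rcases hcover y with hyA | hyB | hyv
      · exact (hadj.ne (hx.trans (Finset.mem_singleton.mp hyA).symm)).elim
      · exact (hnb (by
          rw [hbad]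
          exact Finset.mem_union_left _ (Finset.mem_product.mpr
            ⟨by rw [hx]; exact Finset.mem_singleton_self a, hyB⟩))).elim
      · exact hyv
    · rcases hcover x with hxA | hxB | hxv
      · exact (hadj.ne ((Finset.mem_singleton.mp hxA).trans hy.symm)).elim
      · exact (hnb (by
          rw [hbad]
          exact Finset.mem_union_right _ (Finset.mem_product.mpr
            ⟨hxB, by rw [hy]; exact Finset.mem_singleton_self a⟩))).elim
      · exact hxv
  · rintro ⟨hne, h2, h3⟩
    by_contra hna
    have hb : (x, y) ∈ badset G := mem_badset.mpr ⟨hne, hna⟩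
    rw [hbad] at hb
    rcases Finset.mem_union.mp hb with hm | hm <;> rw [Finset.mem_product] at hm
    · exact hvB (h2 (Finset.mem_singleton.mp hm.1) ▸ hm.2)
    · exact hvB (h3 (Finset.mem_singleton.mp hm.2) ▸ hm.1)

lemma key_vertex [Fintype V] {G : SimpleGraph V} {v : V} (hv : IsCutVertex G v)
    (hn : 3 ≤ Fintype.card V) :
    2 * (Fintype.card V - 2) ≤ (badset G).card ∧
      ((badset G).card = 2 * (Fintype.card V - 2) → ∃ a w, PCfun G a w) := by
  obtain ⟨A, B, hAne, hBne, hdisj, hvA, hvB, hcover, hnoedge⟩ := cutvertex_sep hv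
  set n := Fintype.card V with hn'
  have hdisj2 : Disjoint (A ×ˢ B) (B ×ˢ A) := by
    rw [Finset.disjoint_left]
    rintro ⟨p1, p2⟩ h1 h2
    rw [Finset.mem_product] at h1 h2
    exact (Finset.disjoint_left.mp hdisj h1.1) h2.1
  have hsub : (A ×ˢ B) ∪ (B ×ˢ A) ⊆ badset G := by
    intro p hp
    rw [mem_badset]
    rcases Finset.mem_union.mp hp with hm | hm <;> rw [Finset.mem_product] at hm
    · exact ⟨fun e => Finset.disjoint_left.mp hdisj (e ▸ hm.1) hm.2, hnoedge _ hm.1 _ hm.2⟩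
    · exact ⟨fun e => Finset.disjoint_left.mp hdisj hm.2 (e.symm ▸ hm.1),
        fun hadj => hnoedge _ hm.2 _ hm.1 hadj.symm⟩
  have hcardcross : ((A ×ˢ B) ∪ (B ×ˢ A)).card = 2 * (A.card * B.card) := by
    rw [Finset.card_union_of_disjoint hdisj2, Finset.card_product, Finset.card_product]
    ring
  have hunion : A ∪ B = Finset.univ.erase v := by
    ext z
    simp only [Finset.mem_union, Finset.mem_erase, Finset.mem_univ, and_true]
    constructor
    · rintro (hz | hz)
      · exact fun e => hvA (e ▸ hz)
      · exact fun e => hvB (e ▸ hz)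
    · intro hz
      rcases hcover z with h | h | h
      · exact Or.inl h
      · exact Or.inr h
      · exact absurd h hz
  have hsum : A.card + B.card = n - 1 := by
    rw [← Finset.card_union_of_disjoint hdisj, hunion,
      Finset.card_erase_of_mem (Finset.mem_univ v), Finset.card_univ]
  obtain ⟨a', ha'⟩ := Nat.exists_eq_add_of_le (Finset.card_pos.mpr hAne)
  obtain ⟨b', hb'⟩ := Nat.exists_eq_add_of_le (Finset.card_pos.mpr hBne)
  have hexpand : A.card * B.card = 1 + a' + b' + a' * b' := by
    rw [ha', hb']; ring
  have hle : 2 * (n - 2) ≤ ((A ×ˢ B) ∪ (B ×ˢ A)).card := by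
    rw [hcardcross]
    omega
  have hcle : ((A ×ˢ B) ∪ (B ×ˢ A)).card ≤ (badset G).card := Finset.card_le_card hsub
  refine ⟨le_trans hle hcle, fun heq => ?_⟩
  have hab : a' * b' = 0 := by omega
  have hbadeq : badset G = (A ×ˢ B) ∪ (B ×ˢ A) :=
    (Finset.eq_of_subset_of_card_le hsub (by omega)).symm
  rcases Nat.mul_eq_zero.mp hab with h0 | h0
  · have hA1 : A.card = 1 := by omega
    obtain ⟨a, rfl⟩ := Finset.card_eq_one.mp hA1
    exact ⟨a, v, pc_of_vsep hdisj hvA hvB hcover hbadeq rfl⟩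
  · have hB1 : B.card = 1 := by omega
    obtain ⟨b, rfl⟩ := Finset.card_eq_one.mp hB1
    refine ⟨b, v, pc_of_vsep hdisj.symm hvB hvA ?_ ?_ rfl⟩
    · intro x
      rcases hcover x with h | h | h
      · exact Or.inr (Or.inl h)
      · exact Or.inl h
      · exact Or.inr (Or.inr h)
    · rw [hbadeq, Finset.union_comm]

lemma pc_of_esep [Fintype V] {G : SimpleGraph V} {A : Finset V} {u v : V}
    (hvA : v ∉ A) (hadj : G.Adj u v)
    (hbad : badset G = ((A ×ˢ Aᶜ).erase (u, v)) ∪ ((Aᶜ ×ˢ A).erase (v, u)))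
    (hA : A = {u}) : PCfun G u v := by
  subst hA
  refine ⟨hadj.ne, fun x y => ?_⟩
  constructor
  · intro hxy
    have hnb : (x, y) ∉ badset G := fun hb => (mem_badset.mp hb).2 hxy
    refine ⟨hxy.ne, fun hx => ?_, fun hy => ?_⟩
    · by_contra hyv
      apply hnb
      rw [hbad]
      apply Finset.mem_union_left
      refine Finset.mem_erase.mpr ⟨fun e => hyv (congrArg Prod.snd e), ?_⟩
      refine Finset.mem_product.mpr ⟨by rw [hx]; exact Finset.mem_singleton_self u, ?_⟩
      rw [Finset.mem_compl, Finset.mem_singleton]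
      exact fun e => hxy.ne (hx.trans e.symm)
    · by_contra hxv
      apply hnb
      rw [hbad]
      apply Finset.mem_union_right
      refine Finset.mem_erase.mpr ⟨fun e => hxv (congrArg Prod.fst e), ?_⟩
      refine Finset.mem_product.mpr ⟨?_, by rw [hy]; exact Finset.mem_singleton_self u⟩
      rw [Finset.mem_compl, Finset.mem_singleton]
      exact fun e => hxy.ne (e.trans hy.symm)
  · rintro ⟨hne, h2, h3⟩
    by_contra hna
    have hb : (x, y) ∈ badset G := mem_badset.mpr ⟨hne, hna⟩
    rw [hbad] at hb
    rcases Finset.mem_union.mp hb with hm | hm <;>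
      obtain ⟨hne2, hm⟩ := Finset.mem_erase.mp hm <;> rw [Finset.mem_product] at hm
    · have hx : x = u := Finset.mem_singleton.mp hm.1
      exact hne2 (Prod.ext hx (h2 hx))
    · have hy : y = u := Finset.mem_singleton.mp hm.2
      exact hne2 (Prod.ext (h3 hy) hy)

lemma key_edge [Fintype V] {G : SimpleGraph V} {e : Sym2 V} (he : IsCutEdge G e)
    (hn : 3 ≤ Fintype.card V) :
    2 * (Fintype.card V - 2) ≤ (badset G).card ∧
      ((badset G).card = 2 * (Fintype.card V - 2) → ∃ a w, PCfun G a w) := by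
  obtain ⟨A, u, v, huA, hvA, hadj, hcrossE⟩ := cutedge_sep he
  set n := Fintype.card V with hn'
  have hvc : v ∈ Aᶜ := Finset.mem_compl.mpr hvA
  have huv_mem : (u, v) ∈ A ×ˢ Aᶜ := Finset.mem_product.mpr ⟨huA, hvc⟩
  have hvu_mem : (v, u) ∈ Aᶜ ×ˢ A := Finset.mem_product.mpr ⟨hvc, huA⟩
  have hdisj2 : Disjoint ((A ×ˢ Aᶜ).erase (u, v)) ((Aᶜ ×ˢ A).erase (v, u)) := by
    rw [Finset.disjoint_left]
    rintro ⟨p1, p2⟩ h1 h2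
    have h1' := Finset.mem_product.mp (Finset.mem_of_mem_erase h1)
    have h2' := Finset.mem_product.mp (Finset.mem_of_mem_erase h2)
    exact (Finset.mem_compl.mp h2'.1) h1'.1
  have hsub : ((A ×ˢ Aᶜ).erase (u, v)) ∪ ((Aᶜ ×ˢ A).erase (v, u)) ⊆ badset G := by
    intro p hp
    rw [mem_badset]
    rcases Finset.mem_union.mp hp with hm | hm <;>
      obtain ⟨hne2, hm⟩ := Finset.mem_erase.mp hm <;> rw [Finset.mem_product] at hm
    · refine ⟨fun e => (Finset.mem_compl.mp hm.2) (e ▸ hm.1), fun hadj' => ?_⟩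
      obtain ⟨h1, h2⟩ := hcrossE _ hm.1 _ (Finset.mem_compl.mp hm.2) hadj'
      exact hne2 (Prod.ext h1 h2)
    · refine ⟨fun e => (Finset.mem_compl.mp hm.1) (e.symm ▸ hm.2), fun hadj' => ?_⟩
      obtain ⟨h1, h2⟩ := hcrossE _ hm.2 _ (Finset.mem_compl.mp hm.1) hadj'.symm
      exact hne2 (Prod.ext h2 h1)
  have hcardcross : (((A ×ˢ Aᶜ).erase (u, v)) ∪ ((Aᶜ ×ˢ A).erase (v, u))).card
      = (A.card * Aᶜ.card - 1) + (A.card * Aᶜ.card - 1) := by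
    rw [Finset.card_union_of_disjoint hdisj2, Finset.card_erase_of_mem huv_mem,
      Finset.card_erase_of_mem hvu_mem, Finset.card_product, Finset.card_product,
      Nat.mul_comm Aᶜ.card A.card]
  have hsum : A.card + Aᶜ.card = n := by
    rw [Finset.card_add_card_compl]
  obtain ⟨a', ha'⟩ := Nat.exists_eq_add_of_le (Finset.card_pos.mpr ⟨u, huA⟩)
  obtain ⟨b', hb'⟩ := Nat.exists_eq_add_of_le (Finset.card_pos.mpr ⟨v, hvc⟩)
  have hexpand : A.card * Aᶜ.card = 1 + a' + b' + a' * b' := by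
    rw [ha', hb']; ring
  have hle : 2 * (n - 2) ≤ (((A ×ˢ Aᶜ).erase (u, v)) ∪ ((Aᶜ ×ˢ A).erase (v, u))).card := by
    rw [hcardcross]
    omega
  have hcle : (((A ×ˢ Aᶜ).erase (u, v)) ∪ ((Aᶜ ×ˢ A).erase (v, u))).card ≤ (badset G).card :=
    Finset.card_le_card hsub
  refine ⟨le_trans hle hcle, fun heq => ?_⟩
  have hab : a' * b' = 0 := by omega
  have hbadeq : badset G = ((A ×ˢ Aᶜ).erase (u, v)) ∪ ((Aᶜ ×ˢ A).erase (v, u)) :=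
    (Finset.eq_of_subset_of_card_le hsub (by omega)).symm
  rcases Nat.mul_eq_zero.mp hab with h0 | h0
  · have hA1 : A.card = 1 := by omega
    obtain ⟨w, hw⟩ := Finset.card_eq_one.mp hA1
    have hAu : A = {u} := by rw [hw]; rw [hw] at huA; rw [Finset.mem_singleton] at huA; rw [huA]
    exact ⟨u, v, pc_of_esep hvA hadj hbadeq hAu⟩
  · have hB1 : Aᶜ.card = 1 := by omega
    obtain ⟨w, hw⟩ := Finset.card_eq_one.mp hB1
    have hAv : Aᶜ = {v} := by rw [hw]; rw [hw] at hvc; rw [Finset.mem_singleton] at hvc; rw [hvc]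
    refine ⟨v, u, pc_of_esep (by rw [Finset.mem_compl]; exact fun h => h huA) hadj.symm ?_ hAv⟩
    rw [hbadeq, Finset.union_comm, compl_compl]

end HararyAux

/-- If a graph of order `n ≥ 3` contains a cut vertex or a cut edge, then its Harary
index is at most that of `G_{n,1}` (the complete graph `K_{n-1}` with one pendant
vertex attached), with equality iff the graph is isomorphic to `G_{n,1}`. -/
theorem harary_le_GNK1 (n : ℕ) (hn : 3 ≤ n) {V : Type*} [Fintype V] (G : SimpleGraph V)
    (hcard : Fintype.card V = n)
    (h : (∃ v, IsCutVertex G v) ∨ (∃ e, IsCutEdge G e)) :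
    hararyIndex G ≤ hararyIndex (GNK n 1) ∧
      (hararyIndex G = hararyIndex (GNK n 1) ↔ Nonempty (G ≃g GNK n 1)) := by
  have hn3 : 3 ≤ Fintype.card V := by rw [hcard]; exact hn
  have key : 2 * (Fintype.card V - 2) ≤ (badset G).card ∧
      ((badset G).card = 2 * (Fintype.card V - 2) → ∃ a w, PCfun G a w) := by
    rcases h with ⟨v, hv⟩ | ⟨e, he⟩
    · exact key_vertex hv hn3
    · exact key_edge he hn3
  have hfin : Fintype.card (Fin n) = n := Fintype.card_fin n
  have hGNK : hararyIndex (GNK n 1) = ((n:ℝ) * ((n:ℝ) - 1) - ((n:ℝ) - 2)) / 2 := by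
    have hh := pc_harary (pc_gnk hn) (by rw [hfin]; exact hn)
    rw [hfin] at hh
    exact hh
  have hHle : hararyIndex G ≤ (((Fintype.card V : ℝ)) * ((Fintype.card V : ℝ) - 1)
      - ((badset G).card : ℝ) / 2) / 2 := by
    rw [hararyIndex]
    have hb : ∑ u : V, ∑ w : V, (1:ℝ) / (G.dist u w) ≤ ∑ u : V, ∑ w : V, gfun G u w :=
      Finset.sum_le_sum (fun u _ => Finset.sum_le_sum (fun w _ => one_div_dist_le G u w))
    rw [sum_gfun] at hb
    linarith
  have hcast : ((2 * (Fintype.card V - 2) : ℕ) : ℝ) = 2 * ((Fintype.card V : ℝ) - 2) := by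
    push_cast [Nat.cast_sub (by omega : 2 ≤ Fintype.card V)]
    ring
  have h1 : ((Fintype.card V : ℝ) - 2) ≤ ((badset G).card : ℝ) / 2 := by
    have h1a : ((2 * (Fintype.card V - 2) : ℕ) : ℝ) ≤ ((badset G).card : ℝ) :=
      Nat.cast_le.mpr key.1
    rw [hcast] at h1a
    linarith
  have hfinal : hararyIndex G ≤ ((n:ℝ) * ((n:ℝ) - 1) - ((n:ℝ) - 2)) / 2 := by
    rw [← hcard]
    push_cast
    linarith
  refine ⟨by rw [hGNK]; exact hfinal, ?_, ?_⟩
  · intro heq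
    have h2 : ((badset G).card : ℝ) ≤ 2 * ((Fintype.card V : ℝ) - 2) := by
      have e1 : hararyIndex G = ((n:ℝ) * ((n:ℝ) - 1) - ((n:ℝ) - 2)) / 2 := by rw [heq, hGNK]
      rw [← hcard] at e1
      push_cast at e1
      linarith
    have h3 : (badset G).card = 2 * (Fintype.card V - 2) := by
      have h3a : ((badset G).card : ℝ) ≤ ((2 * (Fintype.card V - 2) : ℕ) : ℝ) := by
        rw [hcast]; exact h2
      have h3b := Nat.cast_le (α := ℝ) |>.mp h3a
      omega
    obtain ⟨a, w, hpc⟩ := key.2 h3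
    exact pc_iso hpc (pc_gnk hn) (by rw [hfin, hcard])
  · rintro ⟨φ⟩
    have hpc := pc_transport φ (pc_gnk hn)
    rw [pc_harary hpc hn3, hGNK, hcard]
end

section
/- Let n_1 ≥ n_2 ≥ 2 and n_3 ≥ 1 be integers. Then H(G_{n_1,n_2,n_3}) < H(G_{n_1+1,n_2−1,n_3}). -/
open SimpleGraph

/-- Which of the three parts a vertex of `Fin a ⊕ Fin b ⊕ Fin c` lies in. -/
def triPart {a b c : ℕ} : Fin a ⊕ Fin b ⊕ Fin c → ℕ :=
  Sum.elim (fun _ => 0) (Sum.elim (fun _ => 1) (fun _ => 2))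

/-- The graph `G_{a,b,c} = (K_a ∪ K_b) ∨ K_c`: the join of the disjoint union of the
complete graphs `K_a` and `K_b` with the complete graph `K_c`. -/
def GJoin (a b c : ℕ) : SimpleGraph (Fin a ⊕ Fin b ⊕ Fin c) :=
  SimpleGraph.fromRel (fun x y =>
    triPart x = triPart y ∨ triPart x = 2 ∨ triPart y = 2)


lemma gjoin_adj {a b c : ℕ} {x y : Fin a ⊕ Fin b ⊕ Fin c} :
    (GJoin a b c).Adj x y ↔
      x ≠ y ∧ (triPart x = triPart y ∨ triPart x = 2 ∨ triPart y = 2) := by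
  constructor
  · rintro ⟨h, h2 | h2⟩ <;> exact ⟨h, by tauto⟩
  · rintro ⟨h, h2⟩; exact ⟨h, Or.inl h2⟩

lemma gjoin_dist {a b c : ℕ} (hc : 1 ≤ c) (x y : Fin a ⊕ Fin b ⊕ Fin c) :
    (GJoin a b c).dist x y =
      if x = y then 0 else
      if triPart x = triPart y ∨ triPart x = 2 ∨ triPart y = 2 then 1 else 2 := by
  split_ifs with h1 h2
  · subst h1; simp
  · exact dist_eq_one_iff_adj.mpr (gjoin_adj.mpr ⟨h1, h2⟩)
  · push_neg at h2
    obtain ⟨hne, hx2, hy2⟩ := h2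
    set z : Fin a ⊕ Fin b ⊕ Fin c := Sum.inr (Sum.inr ⟨0, hc⟩) with hz
    have hz2 : triPart z = 2 := rfl
    have hxz : (GJoin a b c).Adj x z :=
      gjoin_adj.mpr ⟨fun h => hx2 (h ▸ hz2), Or.inr (Or.inr hz2)⟩
    have hzy : (GJoin a b c).Adj z y :=
      gjoin_adj.mpr ⟨fun h => hy2 (h ▸ hz2), Or.inr (Or.inl hz2)⟩
    have hle : (GJoin a b c).dist x y ≤ 2 := by
      simpa using dist_le (Walk.cons hxz hzy.toWalk)
    have hpos : 0 < (GJoin a b c).dist x y :=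
      Reachable.pos_dist_of_ne ⟨Walk.cons hxz hzy.toWalk⟩ h1
    have hne1 : (GJoin a b c).dist x y ≠ 1 := fun h => by
      have := gjoin_adj.mp (dist_eq_one_iff_adj.mp h)
      tauto
    omega

lemma sum_offdiag (n : ℕ) :
    ∑ i : Fin n, ∑ j : Fin n, (if i = j then (0:ℝ) else 1) = n * (n - 1) := by
  have h : ∀ i : Fin n, ∑ j : Fin n, (if i = j then (0:ℝ) else 1) = n - 1 := by
    intro i
    have : ∑ j : Fin n, (if i = j then (0:ℝ) else 1)
        = ∑ j : Fin n, ((1:ℝ) - if i = j then 1 else 0) := by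
      apply Finset.sum_congr rfl; intro j _; split_ifs <;> ring
    rw [this, Finset.sum_sub_distrib]
    simp
  simp [h, Finset.sum_const]
  ring

lemma harary_GJoin (a b c : ℕ) (hc : 1 ≤ c) :
    hararyIndex (GJoin a b c) =
      ((a:ℝ)*(a-1) + b*(b-1) + c*(c-1) + 2*a*c + 2*b*c + a*b) / 2 := by
  have key : ∀ u v : Fin a ⊕ Fin b ⊕ Fin c,
      (1:ℝ) / ((GJoin a b c).dist u v) =
        if u = v then 0 else
        if triPart u = triPart v ∨ triPart u = 2 ∨ triPart v = 2 then 1 else 1/2 := by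
    intro u v; rw [gjoin_dist hc]; split_ifs <;> norm_num
  unfold hararyIndex
  simp only [key, Fintype.sum_sum_type]
  simp only [triPart, Sum.elim_inl, Sum.elim_inr, Sum.inl.injEq, Sum.inr.injEq,
    reduceIte, Sum.inl_ne_inr, Sum.inr_ne_inl]
  norm_num
  simp only [Finset.sum_add_distrib, sum_offdiag, Finset.sum_const, Finset.card_univ,
    Fintype.card_fin, nsmul_eq_mul, smul_eq_mul, mul_one]
  ring

/-- For `n₁ ≥ n₂ ≥ 2` and `n₃ ≥ 1`,
`H(G_{n₁,n₂,n₃}) < H(G_{n₁+1,n₂-1,n₃})`. -/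
theorem harary_GJoin_lt (n₁ n₂ n₃ : ℕ) (h2 : 2 ≤ n₂) (h12 : n₂ ≤ n₁) (h3 : 1 ≤ n₃) :
    hararyIndex (GJoin n₁ n₂ n₃) < hararyIndex (GJoin (n₁ + 1) (n₂ - 1) n₃) := by
  obtain ⟨m, rfl⟩ : ∃ m, n₂ = m + 1 := ⟨n₂ - 1, by omega⟩
  rw [harary_GJoin _ _ _ h3, harary_GJoin _ _ _ h3]
  simp only [Nat.add_sub_cancel]
  push_cast
  have h : ((m:ℝ) + 1) ≤ (n₁:ℝ) := by exact_mod_cast h12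
  nlinarith [h]
end
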